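/- arXiv:1304.7377 — 4 statements merged into one kernel-verified Lean document; each statement's English description precedes it below -/
import Mathlib

section
/- Subject to the diagonal-shear boundary condition BC1, if L>1 then J_L=0; in fact there exists an admissible pair (u,β) satisfying BC1 with E_L(u,β)=0. -/
open MeasureTheory Set Filter Topology
open scoped ENNReal NNReal

noncomputable section

abbrev Pt2 := Fin 2 → ℝ
abbrev Mat2 := Matrix (Fin 2) (Fin 2) ℝ

/-- The rectangle Ω_L = (0,1) × (0,L). -/
def Omega (L : ℝ) : Set Pt2 := {x | x 0 ∈ Ioo (0:ℝ) 1 ∧ x 1 ∈ Ioo (0:ℝ) L}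

/-- Partial derivative ∂_j of a scalar function. -/
def pd (j : Fin 2) (f : Pt2 → ℝ) (x : Pt2) : ℝ := fderiv ℝ f x (Pi.single j 1)

/-- C¹ test function compactly supported in Ω_L. -/
def IsTest (L : ℝ) (f : Pt2 → ℝ) : Prop :=
  ContDiff ℝ 1 f ∧ HasCompactSupport f ∧ tsupport f ⊆ Omega L

/-- Du is the weak (distributional) gradient of u on Ω_L. -/
def IsWeakGradient (L : ℝ) (u : Pt2 → Pt2) (Du : Pt2 → Mat2) : Prop :=
  ∀ f : Pt2 → ℝ, IsTest L f → ∀ i j,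
    ∫ x in Omega L, u x i * pd j f x = - ∫ x in Omega L, Du x i j * f x

/-- Symmetric part of a matrix. -/
def symPart (M : Mat2) : Mat2 := (2:ℝ)⁻¹ • (M + M.transpose)

/-- Squared Frobenius norm. -/
def normSq (M : Mat2) : ℝ := ∑ i, ∑ j, (M i j)^2

/-- The two slip matrices (up to scalar multiples). -/
def SlipSet : Set Mat2 :=
  {M | ∃ s : ℝ, M = s • !![(1:ℝ), -1; 1, -1] ∨ M = s • !![(1:ℝ), 1; -1, -1]}

/-- The single-slip side condition. -/
def SingleSlip (L : ℝ) (β : Pt2 → Mat2) : Prop :=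
  ∀ᵐ x ∂(volume.restrict (Omega L)), β x ∈ SlipSet

/-- Total variation of the row-wise distributional curl of β on Ω_L. -/
def TVcurl (L : ℝ) (β : Pt2 → Mat2) : ℝ≥0∞ :=
  sSup {t | ∃ φ : Fin 2 → Pt2 → ℝ,
    (∀ i, IsTest L (φ i)) ∧ (∀ i x, φ i x ∈ Icc (-1:ℝ) 1) ∧
    t = ENNReal.ofReal (∑ i, ∫ x in Omega L,
          (β x i 1 * pd 0 (φ i) x - β x i 0 * pd 1 (φ i) x))}

/-- The energy E_L(u,β) (expressed through the weak gradient Du of u). -/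
def Energy (L σ : ℝ) (Du β : Pt2 → Mat2) : ℝ≥0∞ :=
  (∫⁻ x in Omega L, ENNReal.ofReal (normSq (symPart (Du x - β x)))) +
    ENNReal.ofReal σ * TVcurl L β

/-- Admissible pair (u,β), with Du the weak gradient of u. -/
def IsAdmissible (L : ℝ) (u : Pt2 → Pt2) (Du β : Pt2 → Mat2) : Prop :=
  ContinuousOn u (closure (Omega L)) ∧
  IsWeakGradient L u Du ∧
  (∀ i j, MemLp (fun x => Du x i j) 2 (volume.restrict (Omega L))) ∧
  (∀ i j, LocallyIntegrableOn (fun x => β x i j) (Omega L)) ∧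
  SingleSlip L β

/-- Dirichlet boundary conditions: u = 0 at x₂ = 0 and u = γ v at x₂ = L. -/
def BCv (L γ : ℝ) (v : Fin 2 → ℝ) (u : Pt2 → Pt2) : Prop :=
  (∀ x ∈ closure (Omega L), x 1 = 0 → u x = 0) ∧
  (∀ x ∈ closure (Omega L), x 1 = L → u x = γ • v)

/-- The infimum energy J_L. -/
def J (L σ γ : ℝ) (v : Fin 2 → ℝ) : ℝ≥0∞ :=
  sInf {e | ∃ u Du β, IsAdmissible L u Du β ∧ BCv L γ v u ∧ TVcurl L β ≠ ⊤ ∧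
    e = Energy L σ Du β}

namespace BC1

def ell : Pt2 →L[ℝ] ℝ :=
  (ContinuousLinearMap.proj 0 : Pt2 →L[ℝ] ℝ) - (ContinuousLinearMap.proj 1 : Pt2 →L[ℝ] ℝ)

lemma ell_apply (x : Pt2) : ell x = x 0 - x 1 := by simp [ell]

lemma ell_single0 : ell (Pi.single (0:Fin 2) (1:ℝ)) = 1 := by
  simp [ell_apply]

lemma ell_single1 : ell (Pi.single (1:Fin 2) (1:ℝ)) = -1 := by
  simp [ell_apply]

variable (L γ : ℝ)

def g : ℝ → ℝ := fun t => γ * Real.smoothTransition (t / (1 - L))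

lemma g_contDiff : ContDiff ℝ ((⊤ : ℕ∞) : WithTop ℕ∞) (g L γ) := by
  have h := (Real.smoothTransition.contDiff (n := (⊤ : ℕ∞))).comp
    ((contDiff_id (𝕜 := ℝ) (E := ℝ)).div_const (1 - L))
  change ContDiff ℝ _ (fun t => γ * Real.smoothTransition (t / (1 - L)))
  simpa [Function.comp, g] using contDiff_const.mul h

lemma g_zero (hL : 1 < L) {t : ℝ} (ht : 0 ≤ t) : g L γ t = 0 := by
  have h1 : (1:ℝ) - L ≤ 0 := by linarith
  have : t / (1 - L) ≤ 0 := div_nonpos_iff.2 (Or.inl ⟨ht, h1⟩)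
  simp [g, Real.smoothTransition.zero_of_nonpos this]

lemma g_gamma (hL : 1 < L) {t : ℝ} (ht : t ≤ 1 - L) : g L γ t = γ := by
  have h1 : (1:ℝ) - L < 0 := by linarith
  have : (1:ℝ) ≤ t / (1 - L) := by
    rw [le_div_iff_of_neg h1]; linarith
  simp [g, Real.smoothTransition.one_of_one_le this]

def w : Pt2 → ℝ := fun x => g L γ (ell x)
def dd : Pt2 → ℝ := fun x => deriv (g L γ) (ell x)

lemma hw_fderiv (x : Pt2) : HasFDerivAt (w L γ) (dd L γ x • (ell : Pt2 →L[ℝ] ℝ)) x :=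
  HasDerivAt.comp_hasFDerivAt x
    (((g_contDiff L γ).differentiable (by simp) (ell x)).hasDerivAt) ell.hasFDerivAt

lemma dd_contDiff : ContDiff ℝ ((⊤ : ℕ∞) : WithTop ℕ∞) (deriv (g L γ)) :=
  (contDiff_infty_iff_deriv.1 (g_contDiff L γ)).2

lemma hd_fderiv (x : Pt2) :
    HasFDerivAt (dd L γ) (deriv (deriv (g L γ)) (ell x) • (ell : Pt2 →L[ℝ] ℝ)) x :=
  HasDerivAt.comp_hasFDerivAt x
    (((dd_contDiff L γ).differentiable (by simp) (ell x)).hasDerivAt) ell.hasFDerivAt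

lemma pd_w (j : Fin 2) (x : Pt2) :
    pd j (w L γ) x = dd L γ x * ell (Pi.single j 1) := by
  rw [pd, (hw_fderiv L γ x).fderiv]; rfl

lemma pd_dd (j : Fin 2) (x : Pt2) :
    pd j (dd L γ) x = deriv (deriv (g L γ)) (ell x) * ell (Pi.single j 1) := by
  rw [pd, (hd_fderiv L γ x).fderiv]; rfl


lemma omega_isOpen (L : ℝ) : IsOpen (Omega L) := by
  have : Omega L = (fun x : Pt2 => x 0) ⁻¹' Ioo 0 1 ∩ (fun x : Pt2 => x 1) ⁻¹' Ioo 0 L := rfl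
  rw [this]
  exact (isOpen_Ioo.preimage (continuous_apply 0)).inter (isOpen_Ioo.preimage (continuous_apply 1))

/-- Integration by parts against a test function. -/
lemma ibp {L : ℝ} {p c : Pt2 → ℝ} (hpc : ∀ x, HasFDerivAt p (c x • (ell : Pt2 →L[ℝ] ℝ)) x)
    (hc : Continuous c) {f : Pt2 → ℝ} (hf : IsTest L f) (j : Fin 2) :
    ∫ x in Omega L, p x * pd j f x = - ∫ x in Omega L, (c x * ell (Pi.single j 1)) * f x := by
  obtain ⟨hf1, hf2, hf3⟩ := hf
  set v : Pt2 := Pi.single j 1 with hv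
  have hpdiff : Differentiable ℝ p := fun x => (hpc x).differentiableAt
  have hfd0 : ∀ x, x ∉ Omega L → f x = 0 := fun x hx =>
    image_eq_zero_of_notMem_tsupport (fun h => hx (hf3 h))
  have hfd1 : ∀ x, x ∉ tsupport f → fderiv ℝ f x = 0 := by
    intro x hx
    by_contra h
    exact hx (support_fderiv_subset ℝ (Function.mem_support.2 h))
  have hfc : Continuous f := hf1.continuous
  have hdfc : Continuous fun x => fderiv ℝ f x v :=
    ((hf1.continuous_fderiv (by simp)).clm_apply continuous_const)
  have hI1 : Integrable (fun x => fderiv ℝ p x v * f x) := by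
    apply Continuous.integrable_of_hasCompactSupport
    · have : Continuous fun x => fderiv ℝ p x v := by
        have : (fun x => fderiv ℝ p x v) = fun x => c x * ell v := by
          funext x; rw [(hpc x).fderiv]; rfl
        rw [this]; exact hc.mul continuous_const
      exact this.mul hfc
    · exact HasCompactSupport.intro hf2 (fun x hx => by
        rw [image_eq_zero_of_notMem_tsupport hx, mul_zero])
  have hI2 : Integrable (fun x => p x * fderiv ℝ f x v) := by
    apply Continuous.integrable_of_hasCompactSupport (hpdiff.continuous.mul hdfc)
    exact HasCompactSupport.intro hf2 (fun x hx => by rw [Pi.mul_apply, hfd1 x hx]; simp)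
  have hI3 : Integrable (fun x => p x * f x) := by
    apply Continuous.integrable_of_hasCompactSupport (hpdiff.continuous.mul hfc)
    exact HasCompactSupport.intro hf2 (fun x hx => by
      rw [Pi.mul_apply, image_eq_zero_of_notMem_tsupport hx, mul_zero])
  have key : ∫ x, p x * fderiv ℝ f x v = - ∫ x, fderiv ℝ p x v * f x :=
    integral_mul_fderiv_eq_neg_fderiv_mul_of_integrable hI1 hI2 hI3 (fun x _ => hpdiff x)
      (fun x _ => hf1.differentiable (by simp) x)
  have e1 : ∫ x in Omega L, p x * pd j f x = ∫ x, p x * fderiv ℝ f x v := by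
    apply setIntegral_eq_integral_of_forall_compl_eq_zero
    intro x hx
    rw [pd, hfd1 x (fun h => hx (hf3 h))]; simp
  have e2 : ∫ x in Omega L, (c x * ell v) * f x = ∫ x, fderiv ℝ p x v * f x := by
    rw [show (fun x => fderiv ℝ p x v * f x) = fun x => (c x * ell v) * f x by
      funext x; rw [(hpc x).fderiv]; rfl]
    apply setIntegral_eq_integral_of_forall_compl_eq_zero
    intro x hx
    rw [hfd0 x hx, mul_zero]
  rw [e1, e2, key]

end BC1

namespace BC1

variable (L γ : ℝ)

def A : Mat2 := !![(1:ℝ), -1; 1, -1]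

def uu : Pt2 → Pt2 := fun x _ => w L γ x
def Duu : Pt2 → Mat2 := fun x => dd L γ x • A

lemma Duu_apply (x : Pt2) (i j : Fin 2) : Duu L γ x i j = dd L γ x * A i j := rfl

lemma A00 : A 0 0 = 1 := rfl
lemma A01 : A 0 1 = -1 := by simp [A]
lemma A10 : A 1 0 = 1 := by simp [A]
lemma A11 : A 1 1 = -1 := by simp [A]

lemma dd_cont : Continuous (dd L γ) :=
  ((dd_contDiff L γ).continuous).comp ell.continuous

lemma closure_omega_subset :
    closure (Omega L) ⊆ {x : Pt2 | x 0 ∈ Icc (0:ℝ) 1 ∧ x 1 ∈ Icc (0:ℝ) L} := by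
  apply closure_minimal
  · intro x hx
    exact ⟨⟨hx.1.1.le, hx.1.2.le⟩, ⟨hx.2.1.le, hx.2.2.le⟩⟩
  · exact ((isClosed_Icc.preimage (continuous_apply 0)).inter
      (isClosed_Icc.preimage (continuous_apply 1)))

lemma weakgrad : IsWeakGradient L (uu L γ) (Duu L γ) := by
  intro f hf i j
  have h := ibp (hpc := hw_fderiv L γ) (hc := dd_cont L γ) hf j
  have he : ∀ x : Pt2, dd L γ x * ell (Pi.single j 1) = Duu L γ x i j := by
    intro x
    rw [Duu_apply]
    congr 1
    fin_cases j <;> fin_cases i <;>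
      simp [ell_single0, ell_single1, A00, A01, A10, A11]
  show ∫ x in Omega L, w L γ x * pd j f x = - ∫ x in Omega L, Duu L γ x i j * f x
  simpa only [he] using h

lemma tv_zero : TVcurl L (Duu L γ) = 0 := by
  apply le_antisymm _ zero_le
  apply sSup_le
  rintro t ⟨φ, hφ, -, rfl⟩
  have hterm : ∀ i : Fin 2, (∫ x in Omega L,
      (Duu L γ x i 1 * pd 0 (φ i) x - Duu L γ x i 0 * pd 1 (φ i) x)) = 0 := by
    intro i
    set ψ := φ i with hψdef
    have hψ := hφ i
    have hdd2 : Continuous fun x : Pt2 => deriv (deriv (g L γ)) (ell x) :=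
      ((contDiff_infty_iff_deriv.1 (dd_contDiff L γ)).2.continuous).comp ell.continuous
    have h0 := ibp (hpc := hd_fderiv L γ) (hc := hdd2) hψ 0
    have h1 := ibp (hpc := hd_fderiv L γ) (hc := hdd2) hψ 1
    rw [ell_single0] at h0
    rw [ell_single1] at h1
    have hint : ∀ j : Fin 2, IntegrableOn (fun x => dd L γ x * pd j ψ x) (Omega L) := by
      intro j
      apply Integrable.integrableOn
      apply Continuous.integrable_of_hasCompactSupport
      · exact (dd_cont L γ).mul ((hψ.1.continuous_fderiv (by simp)).clm_apply continuous_const)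
      · apply HasCompactSupport.intro hψ.2.1
        intro x hx
        have h : fderiv ℝ ψ x = 0 := by
          by_contra h
          exact hx (support_fderiv_subset ℝ (Function.mem_support.2 h))
        rw [pd, h]; simp
    have e : (fun x => Duu L γ x i 1 * pd 0 ψ x - Duu L γ x i 0 * pd 1 ψ x)
        = fun x => (-(dd L γ x * pd 0 ψ x)) - dd L γ x * pd 1 ψ x := by
      funext x
      have e1 : Duu L γ x i 1 = -dd L γ x := by
        fin_cases i <;> simp [Duu_apply, A]
      have e2 : Duu L γ x i 0 = dd L γ x := by
        fin_cases i <;> simp [Duu_apply, A]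
      rw [e1, e2]; ring
    have hint0 : IntegrableOn (fun x => -(dd L γ x * pd 0 ψ x)) (Omega L) := (hint 0).neg
    rw [e, integral_sub hint0 (hint 1), integral_neg, h0, h1]
    have e3 : (∫ x in Omega L, (deriv (deriv (g L γ)) (ell x) * -1) * ψ x)
        = - ∫ x in Omega L, (deriv (deriv (g L γ)) (ell x) * 1) * ψ x := by
      rw [← integral_neg]
      congr 1; funext x; ring
    rw [e3]; ring
  rw [Finset.sum_eq_zero (fun i _ => hterm i)]
  simp

lemma energy_zero : Energy L σ' (Duu L γ) (Duu L γ) = 0 := by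
  rw [Energy, tv_zero, mul_zero, add_zero]
  have : ∀ x : Pt2, ENNReal.ofReal (normSq (symPart (Duu L γ x - Duu L γ x))) = 0 := by
    intro x
    simp [sub_self, symPart, normSq]
  simp only [this, lintegral_const, zero_mul]

lemma admissible (hL : 1 < L) : IsAdmissible L (uu L γ) (Duu L γ) (Duu L γ) := by
  have hwc : Continuous (w L γ) := ((g_contDiff L γ).continuous).comp ell.continuous
  have hDc : ∀ i j : Fin 2, Continuous fun x => Duu L γ x i j := by
    intro i j
    simp only [Duu_apply]
    exact (dd_cont L γ).mul continuous_const
  refine ⟨(continuous_pi fun _ => hwc).continuousOn, weakgrad L γ, ?_, ?_, ?_⟩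
  · -- Memℒp
    intro i j
    set ub : Pt2 := fun _ => max 1 L with hub
    have hK : IsCompact (Icc (0 : Pt2) ub) := isCompact_Icc
    have hΩK : Omega L ⊆ Icc (0 : Pt2) ub := by
      intro x hx
      constructor <;> intro k <;> fin_cases k
      · exact hx.1.1.le
      · exact hx.2.1.le
      · exact hx.1.2.le.trans (le_max_left _ _)
      · exact hx.2.2.le.trans (le_max_right _ _)
    haveI : IsFiniteMeasure (volume.restrict (Omega L)) := by
      constructor
      rw [Measure.restrict_apply_univ]
      exact (measure_mono hΩK).trans_lt hK.measure_lt_top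
    obtain ⟨C, hC⟩ := hK.exists_bound_of_continuousOn (hDc i j).continuousOn
    apply MemLp.of_bound ((hDc i j).aestronglyMeasurable) C
    rw [ae_restrict_iff' (omega_isOpen L).measurableSet]
    exact ae_of_all _ fun x hx => hC x (hΩK hx)
  · intro i j
    exact ((hDc i j).locallyIntegrable).locallyIntegrableOn _
  · exact ae_of_all _ fun x => ⟨dd L γ x, Or.inl rfl⟩

lemma bc (hL : 1 < L) (hγ : (0:ℝ) < γ) : BCv L γ ![1, 1] (uu L γ) := by
  constructor
  · intro x hx h1
    have hx0 := (closure_omega_subset L hx).1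
    have : ell x = x 0 := by rw [ell_apply, h1, sub_zero]
    funext i
    show w L γ x = 0
    rw [w, this]
    exact g_zero L γ hL hx0.1
  · intro x hx h1
    have hx0 := (closure_omega_subset L hx).1
    have he : ell x = x 0 - L := by rw [ell_apply, h1]
    have hg : w L γ x = γ := by
      rw [w, he]
      exact g_gamma L γ hL (by linarith [hx0.2])
    funext i
    show w L γ x = (γ • ![(1:ℝ), 1]) i
    rw [hg]
    fin_cases i <;> simp

end BC1


/-- Under BC1 (diagonal shear), L > 1 implies J_L = 0; in fact there is
an admissible pair satisfying BC1 with zero energy. -/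
theorem J_eq_zero_of_one_lt_BC1 (L σ γ : ℝ) (hσ : 0 < σ) (hγ : 0 < γ) (hL : 1 < L) :
    J L σ γ ![1, 1] = 0 ∧
    ∃ u Du β, IsAdmissible L u Du β ∧ BCv L γ ![1, 1] u ∧ TVcurl L β ≠ ⊤ ∧
      Energy L σ Du β = 0 := by
  have hmem : (0 : ℝ≥0∞) ∈ {e | ∃ u Du β, IsAdmissible L u Du β ∧ BCv L γ ![1, 1] u ∧
      TVcurl L β ≠ ⊤ ∧ e = Energy L σ Du β} := by
    refine ⟨BC1.uu L γ, BC1.Duu L γ, BC1.Duu L γ, BC1.admissible L γ hL, BC1.bc L γ hL hγ,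
      ?_, (BC1.energy_zero L γ).symm⟩
    rw [BC1.tv_zero]
    exact ENNReal.zero_ne_top
  refine ⟨le_antisymm (sInf_le hmem) zero_le,
    BC1.uu L γ, BC1.Duu L γ, BC1.Duu L γ, BC1.admissible L γ hL, BC1.bc L γ hL hγ,
    ?_, BC1.energy_zero L γ⟩
  rw [BC1.tv_zero]
  exact ENNReal.zero_ne_top

end
end

section
/- Subject to the diagonal-shear boundary condition BC1, for every L with 0<L<1 there exists a constant c_L>0, depending only on L, such that for all σ>0 and γ>0 one has J_L ≤ min{ 3γ²/(2L), γ²(1−L)/L + c_L σ γ }. -/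
open MeasureTheory Set Filter Topology
open scoped ENNReal NNReal

noncomputable section

namespace UB

lemma omega_eq_preimage (L : ℝ) : Omega L =
    (fun x : Pt2 => x 0) ⁻¹' (Ioo (0:ℝ) 1) ∩ (fun x : Pt2 => x 1) ⁻¹' (Ioo (0:ℝ) L) := rfl

lemma isOpen_omega (L : ℝ) : IsOpen (Omega L) := by
  rw [omega_eq_preimage]
  exact (isOpen_Ioo.preimage (continuous_apply 0)).inter (isOpen_Ioo.preimage (continuous_apply 1))

lemma measurableSet_omega (L : ℝ) : MeasurableSet (Omega L) := (isOpen_omega L).measurableSet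

lemma omega_bounded (L : ℝ) : Bornology.IsBounded (Omega L) := by
  have h : Omega L ⊆ Metric.closedBall 0 (1 + |L|) := by
    intro x hx
    rw [mem_closedBall_zero_iff]
    have h0 : 0 ≤ 1 + |L| := by positivity
    rw [pi_norm_le_iff_of_nonneg h0]
    intro i
    have hL' : L ≤ |L| := le_abs_self L
    have hLn : 0 ≤ |L| := abs_nonneg L
    fin_cases i
    · show ‖x 0‖ ≤ 1 + |L|
      have h1 := hx.1.1; have h2 := hx.1.2
      rw [Real.norm_eq_abs, abs_le]; constructor <;> linarith
    · show ‖x 1‖ ≤ 1 + |L|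
      have h1 := hx.2.1; have h2 := hx.2.2
      rw [Real.norm_eq_abs, abs_le]; constructor <;> linarith
  exact Bornology.IsBounded.subset (Metric.isBounded_closedBall) h

lemma isCompact_closure_omega (L : ℝ) : IsCompact (closure (Omega L)) :=
  (omega_bounded L).isCompact_closure

lemma volume_omega_lt_top (L : ℝ) : volume (Omega L) < ⊤ :=
  lt_of_le_of_lt (measure_mono subset_closure) (isCompact_closure_omega L).measure_lt_top

lemma closure_omega_subset (L : ℝ) :
    closure (Omega L) ⊆ {x : Pt2 | x 0 ∈ Icc (0:ℝ) 1 ∧ x 1 ∈ Icc 0 L} := by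
  apply closure_minimal
  · exact fun x hx => ⟨Ioo_subset_Icc_self hx.1, Ioo_subset_Icc_self hx.2⟩
  · exact ((isClosed_Icc.preimage (continuous_apply 0)).inter
      (isClosed_Icc.preimage (continuous_apply 1)))

end UB
namespace UB

lemma test_zero_of_nmem {L : ℝ} {f : Pt2 → ℝ} (hf : IsTest L f) {x : Pt2}
    (hx : x ∉ Omega L) : f x = 0 := by
  by_contra h
  exact hx (hf.2.2 (subset_closure (Function.mem_support.2 h)))

lemma pd_zero_of_nmem {L : ℝ} {f : Pt2 → ℝ} (hf : IsTest L f) {x : Pt2}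
    (hx : x ∉ Omega L) (v : Pt2) : fderiv ℝ f x v = 0 := by
  have : fderiv ℝ f x = 0 := by
    by_contra h
    exact hx (hf.2.2 (support_fderiv_subset ℝ (Function.mem_support.2 h)))
  simp [this]

lemma pd_eq_fderiv (j : Fin 2) (f : Pt2 → ℝ) (x : Pt2) :
    pd j f x = fderiv ℝ f x (Pi.single j 1) := rfl

lemma cont_fderiv_apply {G : Pt2 → ℝ} (hG : ContDiff ℝ 1 G) (v : Pt2) :
    Continuous fun x => fderiv ℝ G x v :=
  (hG.continuous_fderiv one_ne_zero).clm_apply continuous_const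

lemma hcs_fderiv_apply {f : Pt2 → ℝ} (hf : HasCompactSupport f) (v : Pt2) :
    HasCompactSupport fun x => fderiv ℝ f x v := by
  have := (hf.fderiv ℝ).comp_left (g := fun (l : Pt2 →L[ℝ] ℝ) => l v) (by simp)
  exact this

/-- Integration by parts on all of ℝ². -/
lemma key_ibp {G : Pt2 → ℝ} (hG : ContDiff ℝ 1 G) {f : Pt2 → ℝ}
    (hf1 : ContDiff ℝ 1 f) (hf2 : HasCompactSupport f) (v : Pt2) :
    ∫ x, G x * fderiv ℝ f x v = - ∫ x, fderiv ℝ G x v * f x := by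
  apply integral_mul_fderiv_eq_neg_fderiv_mul_of_integrable
  · exact ((cont_fderiv_apply hG v).mul hf1.continuous).integrable_of_hasCompactSupport
      (hf2.mul_left)
  · exact (hG.continuous.mul (cont_fderiv_apply hf1 v)).integrable_of_hasCompactSupport
      ((hcs_fderiv_apply hf2 v).mul_left)
  · exact (hG.continuous.mul hf1.continuous).integrable_of_hasCompactSupport hf2.mul_left
  · exact fun x _ => hG.differentiable one_ne_zero x
  · exact fun x _ => hf1.differentiable one_ne_zero x

/-- Generic weak gradient lemma: a C¹ function, used for both components of `u`. -/
lemma isWeakGradient_smooth (L : ℝ) (G : Pt2 → ℝ) (hG : ContDiff ℝ 1 G) :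
    IsWeakGradient L (fun x _ => G x)
      (fun x => Matrix.of fun _ j => fderiv ℝ G x (Pi.single j 1)) := by
  intro f hf i j
  have h1 : ∫ x in Omega L, G x * pd j f x = ∫ x, G x * fderiv ℝ f x (Pi.single j 1) := by
    apply setIntegral_eq_integral_of_forall_compl_eq_zero
    intro x hx
    rw [pd_eq_fderiv, pd_zero_of_nmem hf hx, mul_zero]
  have h2 : ∫ x in Omega L, (Matrix.of fun _ j => fderiv ℝ G x (Pi.single j 1)) i j * f x
      = ∫ x, fderiv ℝ G x (Pi.single j 1) * f x := by
    apply setIntegral_eq_integral_of_forall_compl_eq_zero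
    intro x hx
    rw [test_zero_of_nmem hf hx, mul_zero]
  simp only [Matrix.of_apply] at h2 ⊢
  rw [h1, h2]
  exact key_ibp hG hf.1 hf.2.1 _

lemma memLp_two (L : ℝ) {h : Pt2 → ℝ} (hc : Continuous h) :
    MemLp h 2 (volume.restrict (Omega L)) := by
  haveI : IsFiniteMeasure (volume.restrict (Omega L)) := by
    constructor
    rw [Measure.restrict_apply_univ]
    exact volume_omega_lt_top L
  obtain ⟨C, hC⟩ := (isCompact_closure_omega L).exists_bound_of_continuousOn hc.continuousOn
  exact MemLp.of_bound hc.aestronglyMeasurable C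
    ((ae_restrict_iff' (measurableSet_omega L)).2
      (Eventually.of_forall fun x hx => hC x (subset_closure hx)))

lemma locInt (L : ℝ) {h : Pt2 → ℝ} (hc : Continuous h) :
    LocallyIntegrableOn h (Omega L) :=
  hc.locallyIntegrable.locallyIntegrableOn _

end UB
namespace UB

lemma finTwoArrow_apply' (x : Pt2) : (MeasurableEquiv.finTwoArrow x : ℝ × ℝ) = (x 0, x 1) := rfl

lemma volume_omega (L : ℝ) (hL : 0 ≤ L) : volume (Omega L) = ENNReal.ofReal L := by
  have h : Omega L = (MeasurableEquiv.finTwoArrow) ⁻¹' ((Ioo (0:ℝ) 1) ×ˢ (Ioo (0:ℝ) L)) := rfl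
  rw [h, (volume_preserving_finTwoArrow ℝ).measure_preimage
    ((measurableSet_Ioo.prod measurableSet_Ioo).nullMeasurableSet)]
  rw [Measure.volume_eq_prod, Measure.prod_prod, Real.volume_Ioo, Real.volume_Ioo]
  simp [ENNReal.ofReal_one]

/-- volume of a diagonal slab intersected with the horizontal strip. -/
lemma volume_slab (L a b : ℝ) (hab : a ≤ b) :
    volume {x : Pt2 | x 1 ∈ Ioo 0 L ∧ x 0 - x 1 ∈ Icc a b}
      ≤ ENNReal.ofReal L * ENNReal.ofReal (b - a) := by
  set S : Set (ℝ × ℝ) := {p : ℝ × ℝ | p.2 ∈ Ioo 0 L ∧ p.1 - p.2 ∈ Icc a b} with hS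
  have hSm : MeasurableSet S := by
    apply MeasurableSet.inter
    · exact measurable_snd measurableSet_Ioo
    · exact (measurable_fst.sub measurable_snd) measurableSet_Icc
  have h : {x : Pt2 | x 1 ∈ Ioo 0 L ∧ x 0 - x 1 ∈ Icc a b} = (MeasurableEquiv.finTwoArrow) ⁻¹' S := rfl
  rw [h, (volume_preserving_finTwoArrow ℝ).measure_preimage hSm.nullMeasurableSet]
  rw [Measure.volume_eq_prod, Measure.prod_apply_symm hSm]
  have hslice : ∀ y : ℝ, ((fun x => (x, y)) ⁻¹' S) =
      if y ∈ Ioo 0 L then Icc (a + y) (b + y) else ∅ := by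
    intro y
    split_ifs with hy
    · ext z
      simp only [hS, mem_preimage, mem_setOf_eq, mem_Icc, mem_Ioo]
      constructor
      · rintro ⟨-, h1, h2⟩; constructor <;> linarith
      · rintro ⟨h1, h2⟩; exact ⟨hy, by constructor <;> linarith⟩
    · ext z
      simp only [hS, mem_preimage, mem_setOf_eq, mem_empty_iff_false, iff_false]
      rintro ⟨h1, -⟩; exact hy h1
  calc ∫⁻ y, volume ((fun x => (x, y)) ⁻¹' S)
      = ∫⁻ y, (Ioo (0:ℝ) L).indicator (fun _ => ENNReal.ofReal (b - a)) y := by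
        congr 1; ext y
        rw [hslice y]
        by_cases hy : y ∈ Ioo (0:ℝ) L
        · simp [hy, Real.volume_Icc, indicator_of_mem, add_sub_add_right_eq_sub]
        · simp [hy]
    _ = ENNReal.ofReal (b - a) * volume (Ioo (0:ℝ) L) := by
        rw [lintegral_indicator measurableSet_Ioo, setLIntegral_const]
    _ ≤ ENNReal.ofReal L * ENNReal.ofReal (b - a) := by
        rw [Real.volume_Ioo, mul_comm]
        exact mul_le_mul_left (ENNReal.ofReal_le_ofReal (by linarith)) _

end UB
namespace UB

def stf : ℝ → ℝ := Real.smoothTransition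
def stD : ℝ → ℝ := deriv stf

lemma stf_cd : ContDiff ℝ (↑(⊤:ℕ∞)) stf := Real.smoothTransition.contDiff
lemma stf_diff : Differentiable ℝ stf := stf_cd.differentiable  (by simp)
lemma stD_cd : ContDiff ℝ (↑(⊤:ℕ∞)) stD := (contDiff_infty_iff_deriv.mp stf_cd).2
lemma stD_cont : Continuous stD := stD_cd.continuous
lemma stD_diff : Differentiable ℝ stD := stD_cd.differentiable  (by simp)

lemma stD_zero {y : ℝ} (h : y < 0 ∨ 1 < y) : stD y = 0 := by
  rcases h with h | h
  · have : stf =ᶠ[nhds y] (fun _ => 0) := by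
      filter_upwards [Iio_mem_nhds h] with z hz
      exact Real.smoothTransition.zero_of_nonpos (le_of_lt hz)
    rw [stD, this.deriv_eq, deriv_const]
  · have : stf =ᶠ[nhds y] (fun _ => 1) := by
      filter_upwards [Ioi_mem_nhds h] with z hz
      exact Real.smoothTransition.one_of_one_le (le_of_lt hz)
    rw [stD, this.deriv_eq, deriv_const]

lemma stD_bound : ∃ K : ℝ, 0 ≤ K ∧ ∀ y, |stD y| ≤ K := by
  obtain ⟨C, hC⟩ := (isCompact_Icc (a := (0:ℝ)) (b := 1)).exists_bound_of_continuousOn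
    stD_cont.abs.continuousOn
  refine ⟨C, le_trans (abs_nonneg _) (by simpa using hC 0 (by norm_num)), fun y => ?_⟩
  by_cases hy : y ∈ Icc (0:ℝ) 1
  · simpa using hC y hy
  · have : y < 0 ∨ 1 < y := by
      simp only [mem_Icc, not_and_or, not_le] at hy; tauto
    rw [stD_zero this]
    simpa using le_trans (abs_nonneg _) (by simpa using hC 0 (by norm_num))

end UB
namespace UB

def pj (i : Fin 2) : Pt2 →L[ℝ] ℝ := ContinuousLinearMap.proj i
def dtc : Pt2 →L[ℝ] ℝ := pj 0 - pj 1
def vv : Pt2 := Pi.single 0 1 + Pi.single 1 1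

lemma pj_apply (i : Fin 2) (x : Pt2) : pj i x = x i := rfl

lemma pj_contDiff (i : Fin 2) : ContDiff ℝ 1 (fun x : Pt2 => x i) := (pj i).contDiff

def Wf (F G : ℝ → ℝ) : Pt2 → ℝ := fun x => F (x 0 - x 1) + x 1 * G (x 0 - x 1)

lemma tfun_contDiff : ContDiff ℝ 1 (fun x : Pt2 => x 0 - x 1) :=
  (pj_contDiff 0).sub (pj_contDiff 1)

lemma Wf_contDiff {F G : ℝ → ℝ} (hF : ContDiff ℝ 1 F) (hG : ContDiff ℝ 1 G) :
    ContDiff ℝ 1 (Wf F G) :=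
  (hF.comp tfun_contDiff).add ((pj_contDiff 1).mul (hG.comp tfun_contDiff))

lemma tfun_hasFDerivAt (x : Pt2) : HasFDerivAt (fun x : Pt2 => x 0 - x 1) dtc x :=
  ((pj 0).hasFDerivAt).sub ((pj 1).hasFDerivAt)

lemma Wf_hasFDerivAt {F G F' G' : ℝ → ℝ} (hF : ∀ s, HasDerivAt F (F' s) s)
    (hG : ∀ s, HasDerivAt G (G' s) s) (x : Pt2) :
    HasFDerivAt (Wf F G)
      (F' (x 0 - x 1) • dtc + (x 1 • (G' (x 0 - x 1) • dtc) + G (x 0 - x 1) • pj 1)) x := by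
  have h1 : HasFDerivAt (fun x : Pt2 => F (x 0 - x 1)) (F' (x 0 - x 1) • dtc) x :=
    (hF (x 0 - x 1)).comp_hasFDerivAt x (tfun_hasFDerivAt x)
  have h2 : HasFDerivAt (fun x : Pt2 => G (x 0 - x 1)) (G' (x 0 - x 1) • dtc) x :=
    (hG (x 0 - x 1)).comp_hasFDerivAt x (tfun_hasFDerivAt x)
  have h3 : HasFDerivAt (fun x : Pt2 => x 1) (pj 1) x := (pj 1).hasFDerivAt
  exact h1.add (h3.mul h2)

lemma dtc_single0 : dtc (Pi.single 0 1) = 1 := by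
  simp [dtc, pj, ContinuousLinearMap.proj_apply]

lemma dtc_single1 : dtc (Pi.single 1 1) = -1 := by
  simp [dtc, pj, ContinuousLinearMap.proj_apply, Pi.single_apply]

lemma pj1_single0 : pj 1 (Pi.single 0 1) = 0 := by
  simp [pj, ContinuousLinearMap.proj_apply, Pi.single_apply]

lemma pj1_single1 : pj 1 (Pi.single 1 1) = 1 := by
  simp [pj, ContinuousLinearMap.proj_apply]

lemma dtc_vv : dtc vv = 0 := by
  simp [dtc, vv, pj, ContinuousLinearMap.proj_apply, Pi.single_apply]

lemma pj1_vv : pj 1 vv = 1 := by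
  simp [pj, vv, ContinuousLinearMap.proj_apply, Pi.single_apply]

lemma Wf_pd0 {F G F' G' : ℝ → ℝ} (hF : ∀ s, HasDerivAt F (F' s) s)
    (hG : ∀ s, HasDerivAt G (G' s) s) (x : Pt2) :
    pd 0 (Wf F G) x = F' (x 0 - x 1) + x 1 * G' (x 0 - x 1) := by
  rw [pd_eq_fderiv, (Wf_hasFDerivAt hF hG x).fderiv]
  simp [dtc_single0, pj1_single0]

lemma Wf_pd1 {F G F' G' : ℝ → ℝ} (hF : ∀ s, HasDerivAt F (F' s) s)
    (hG : ∀ s, HasDerivAt G (G' s) s) (x : Pt2) :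
    pd 1 (Wf F G) x = G (x 0 - x 1) - (F' (x 0 - x 1) + x 1 * G' (x 0 - x 1)) := by
  rw [pd_eq_fderiv, (Wf_hasFDerivAt hF hG x).fderiv]
  simp [dtc_single1, pj1_single1]
  ring

lemma Wf_fderiv_vv {F G F' G' : ℝ → ℝ} (hF : ∀ s, HasDerivAt F (F' s) s)
    (hG : ∀ s, HasDerivAt G (G' s) s) (x : Pt2) :
    fderiv ℝ (Wf F G) x vv = G (x 0 - x 1) := by
  rw [(Wf_hasFDerivAt hF hG x).fderiv]
  simp [dtc_vv, pj1_vv]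

end UB
namespace UB

variable (L ε : ℝ)

def Pf : ℝ → ℝ := fun s => stf (-s / ε)
def P' : ℝ → ℝ := fun s => stD (-s / ε) * (-1 / ε)
def Rf : ℝ → ℝ := fun s => stf ((1 - L + ε - s) / ε)
def R' : ℝ → ℝ := fun s => stD ((1 - L + ε - s) / ε) * (-1 / ε)
def Qf : ℝ → ℝ := fun s => L⁻¹ * ((1 - Pf ε s) * Rf L ε s)
def Q' : ℝ → ℝ := fun s => L⁻¹ * (-(P' ε s) * Rf L ε s + (1 - Pf ε s) * R' L ε s)

lemma innerP_hasDeriv (s : ℝ) : HasDerivAt (fun s : ℝ => -s / ε) (-1 / ε) s := by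
  simpa using ((hasDerivAt_id s).neg.div_const ε)

lemma innerR_hasDeriv (s : ℝ) : HasDerivAt (fun s : ℝ => (1 - L + ε - s) / ε) (-1 / ε) s := by
  simpa using (((hasDerivAt_id s).const_sub (1 - L + ε)).div_const ε)

lemma Pf_hasDeriv (s : ℝ) : HasDerivAt (Pf ε) (P' ε s) s :=
  ((stf_diff _).hasDerivAt).comp s (innerP_hasDeriv ε s)

lemma Rf_hasDeriv (s : ℝ) : HasDerivAt (Rf L ε) (R' L ε s) s :=
  ((stf_diff _).hasDerivAt).comp s (innerR_hasDeriv L ε s)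

lemma Qf_hasDeriv (s : ℝ) : HasDerivAt (Qf L ε) (Q' L ε s) s :=
  ((((Pf_hasDeriv ε s).const_sub 1).mul (Rf_hasDeriv L ε s)).const_mul L⁻¹)

lemma Pf_cd : ContDiff ℝ 1 (Pf ε) :=
  (stf_cd.of_le (by exact_mod_cast le_top)).comp ((contDiff_id.neg).div_const ε)

lemma Rf_cd : ContDiff ℝ 1 (Rf L ε) :=
  (stf_cd.of_le (by exact_mod_cast le_top)).comp (((contDiff_const).sub contDiff_id).div_const ε)

lemma P'_cd : ContDiff ℝ 1 (P' ε) :=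
  ((stD_cd.of_le (by exact_mod_cast le_top)).comp ((contDiff_id.neg).div_const ε)).mul contDiff_const

lemma R'_cd : ContDiff ℝ 1 (R' L ε) :=
  ((stD_cd.of_le (by exact_mod_cast le_top)).comp
    (((contDiff_const).sub contDiff_id).div_const ε)).mul contDiff_const

lemma Qf_cd : ContDiff ℝ 1 (Qf L ε) :=
  contDiff_const.mul ((contDiff_const.sub (Pf_cd ε)).mul (Rf_cd L ε))

lemma Q'_cd : ContDiff ℝ 1 (Q' L ε) :=
  contDiff_const.mul (((P'_cd ε).neg.mul (Rf_cd L ε)).add ((contDiff_const.sub (Pf_cd ε)).mul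
    (R'_cd L ε)))

lemma P'_diffble : Differentiable ℝ (P' ε) := by
  apply Differentiable.mul _ (differentiable_const _)
  exact stD_diff.comp ((differentiable_id.neg).div_const ε)

lemma R'_diffble : Differentiable ℝ (R' L ε) := by
  apply Differentiable.mul _ (differentiable_const _)
  exact stD_diff.comp (((differentiable_const _).sub differentiable_id).div_const ε)

lemma Q'_diffble : Differentiable ℝ (Q' L ε) := by
  apply Differentiable.const_mul
  exact ((P'_diffble ε).neg.mul ((Rf_cd L ε).differentiable one_ne_zero)).add
    (((differentiable_const _).sub ((Pf_cd ε).differentiable one_ne_zero)).mul (R'_diffble L ε))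

end UB
namespace UB

variable {L ε K : ℝ}

section vals

lemma Pf_one (hε : 0 < ε) (hs : ε ≤ -s) : Pf ε s = 1 :=
  Real.smoothTransition.one_of_one_le (by rw [le_div_iff₀ hε]; linarith)

lemma Pf_zero (hε : 0 < ε) (hs : 0 ≤ s) : Pf ε s = 0 :=
  Real.smoothTransition.zero_of_nonpos (by apply div_nonpos_of_nonpos_of_nonneg <;> linarith)

lemma Pf_nonneg (s : ℝ) : 0 ≤ Pf ε s := Real.smoothTransition.nonneg _
lemma Pf_le_one (s : ℝ) : Pf ε s ≤ 1 := Real.smoothTransition.le_one _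

lemma Rf_one (hε : 0 < ε) (hs : s ≤ 1 - L) : Rf L ε s = 1 :=
  Real.smoothTransition.one_of_one_le (by rw [le_div_iff₀ hε]; linarith)

lemma Rf_zero (hε : 0 < ε) (hs : 1 - L + ε ≤ s) : Rf L ε s = 0 :=
  Real.smoothTransition.zero_of_nonpos (by apply div_nonpos_of_nonpos_of_nonneg <;> linarith)

lemma Rf_nonneg (s : ℝ) : 0 ≤ Rf L ε s := Real.smoothTransition.nonneg _
lemma Rf_le_one (s : ℝ) : Rf L ε s ≤ 1 := Real.smoothTransition.le_one _

lemma Qf_nonneg (s : ℝ) (hL0 : 0 < L) : 0 ≤ Qf L ε s := by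
  have h1 := Pf_le_one (ε := ε) s
  have h2 := Rf_nonneg (L := L) (ε := ε) s
  have : (0:ℝ) ≤ L⁻¹ := by positivity
  apply mul_nonneg this (mul_nonneg (by linarith) h2)

lemma Qf_le (s : ℝ) (hL0 : 0 < L) : Qf L ε s ≤ L⁻¹ := by
  have h1 := Pf_nonneg (ε := ε) s
  have h2 := Rf_le_one (L := L) (ε := ε) s
  have h3 := Rf_nonneg (L := L) (ε := ε) s
  have hinv : (0:ℝ) ≤ L⁻¹ := by positivity
  calc Qf L ε s ≤ L⁻¹ * 1 := by
        apply mul_le_mul_of_nonneg_left _ hinv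
        calc (1 - Pf ε s) * Rf L ε s ≤ 1 * 1 := by
              apply mul_le_mul (by linarith) h2 h3 (by norm_num)
          _ = 1 := by norm_num
    _ = L⁻¹ := by ring

lemma Qf_zero_left (hε : 0 < ε) (hs : ε ≤ -s) : Qf L ε s = 0 := by
  unfold Qf; rw [Pf_one hε hs]; ring

lemma Qf_zero_right (hε : 0 < ε) (hs : 1 - L + ε ≤ s) : Qf L ε s = 0 := by
  unfold Qf; rw [Rf_zero hε hs]; ring

lemma PLQ (hε : 0 < ε) (hL0 : 0 < L) (hs : s ≤ 1 - L) : Pf ε s + L * Qf L ε s = 1 := by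
  unfold Qf; rw [Rf_one hε hs]
  field_simp
  ring

lemma P'_zero (hε : 0 < ε) (hs : s ∉ Icc (-ε) 0) : P' ε s = 0 := by
  simp only [mem_Icc, not_and_or, not_le] at hs
  have : stD (-s / ε) = 0 := by
    apply stD_zero
    rcases hs with h | h
    · right; rw [lt_div_iff₀ hε]; linarith
    · left; apply div_neg_of_neg_of_pos (by linarith) hε
  unfold P'; rw [this]; ring

lemma R'_zero (hε : 0 < ε) (hs : s ∉ Icc (1 - L) (1 - L + ε)) : R' L ε s = 0 := by
  simp only [mem_Icc, not_and_or, not_le] at hs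
  have : stD ((1 - L + ε - s) / ε) = 0 := by
    apply stD_zero
    rcases hs with h | h
    · right; rw [lt_div_iff₀ hε]; linarith
    · left; apply div_neg_of_neg_of_pos (by linarith) hε
  unfold R'; rw [this]; ring

lemma Q'_zero (hε : 0 < ε) (hs1 : s ∉ Icc (-ε) 0) (hs2 : s ∉ Icc (1 - L) (1 - L + ε)) :
    Q' L ε s = 0 := by
  unfold Q'; rw [P'_zero hε hs1, R'_zero hε hs2]; ring

lemma P'_bound (hε : 0 < ε) (hK : ∀ y, |stD y| ≤ K) (s : ℝ) : |P' ε s| ≤ K / ε := by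
  unfold P'
  rw [abs_mul]
  have : |(-1:ℝ)/ε| = 1/ε := by
    rw [abs_div]; simp [abs_of_pos hε]
  rw [this]
  calc |stD (-s / ε)| * (1/ε) ≤ K * (1/ε) :=
        mul_le_mul_of_nonneg_right (hK _) (by positivity)
    _ = K / ε := by ring

lemma R'_bound (hε : 0 < ε) (hK : ∀ y, |stD y| ≤ K) (s : ℝ) : |R' L ε s| ≤ K / ε := by
  unfold R'
  rw [abs_mul]
  have : |(-1:ℝ)/ε| = 1/ε := by
    rw [abs_div]; simp [abs_of_pos hε]
  rw [this]
  calc |stD _| * (1/ε) ≤ K * (1/ε) :=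
        mul_le_mul_of_nonneg_right (hK _) (by positivity)
    _ = K / ε := by ring

lemma Q'_bound (hε : 0 < ε) (hL0 : 0 < L) (hK : ∀ y, |stD y| ≤ K) (s : ℝ) :
    |Q' L ε s| ≤ L⁻¹ * (2 * K / ε) := by
  have hK0 : 0 ≤ K := le_trans (abs_nonneg _) (hK 0)
  have h1 : |(-(P' ε s)) * Rf L ε s| ≤ K / ε := by
    rw [abs_mul, abs_neg]
    calc |P' ε s| * |Rf L ε s| ≤ (K/ε) * 1 := by
          apply mul_le_mul (P'_bound hε hK s) _ (abs_nonneg _) (by positivity)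
          rw [abs_of_nonneg (Rf_nonneg s)]; exact Rf_le_one s
      _ = K / ε := by ring
  have h2 : |(1 - Pf ε s) * R' L ε s| ≤ K / ε := by
    rw [abs_mul]
    calc |1 - Pf ε s| * |R' L ε s| ≤ 1 * (K/ε) := by
          apply mul_le_mul _ (R'_bound hε hK s) (abs_nonneg _) (by norm_num)
          rw [abs_of_nonneg (by linarith [Pf_le_one (ε := ε) s])]
          linarith [Pf_nonneg (ε := ε) s]
      _ = K / ε := by ring
  unfold Q'
  rw [abs_mul, abs_of_nonneg (by positivity : (0:ℝ) ≤ L⁻¹)]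
  apply mul_le_mul_of_nonneg_left _ (by positivity)
  calc |(-(P' ε s)) * Rf L ε s + (1 - Pf ε s) * R' L ε s|
      ≤ |(-(P' ε s)) * Rf L ε s| + |(1 - Pf ε s) * R' L ε s| := abs_add_le _ _
    _ ≤ K/ε + K/ε := add_le_add h1 h2
    _ = 2 * K / ε := by ring

end vals
end UB
namespace UB

lemma TVcurl_zero (L : ℝ) : TVcurl L (fun _ => (0:Mat2)) = 0 := by
  apply le_antisymm _ zero_le
  apply sSup_le
  rintro t ⟨φ, hφ1, hφ2, rfl⟩
  simp [Matrix.zero_apply]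

lemma vecOne_apply (i : Fin 2) : (![1, 1] : Fin 2 → ℝ) i = 1 := by
  fin_cases i <;> simp

lemma constr1 (L σ γ : ℝ) (hL0 : 0 < L) (hγ : 0 < γ) :
    J L σ γ ![1, 1] ≤ ENNReal.ofReal (3 * γ ^ 2 / (2 * L)) := by
  set G1 : Pt2 → ℝ := fun x => (γ/L) * x 1 with hG1
  have hG1cd : ContDiff ℝ 1 G1 := contDiff_const.mul (pj_contDiff 1)
  set u1 : Pt2 → Pt2 := fun x _ => G1 x with hu1
  set Du1 : Pt2 → Mat2 := fun x => Matrix.of fun _ j => fderiv ℝ G1 x (Pi.single j 1) with hDu1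
  set β1 : Pt2 → Mat2 := fun _ => (0:Mat2) with hβ1
  have hfd : ∀ x : Pt2, HasFDerivAt G1 ((γ/L) • (pj 1)) x := fun x =>
    ((pj 1).hasFDerivAt).const_mul (γ/L)
  have hDu1e : ∀ x : Pt2, ∀ i : Fin 2, Du1 x i 0 = 0 ∧ Du1 x i 1 = γ/L := by
    intro x i
    constructor
    · show fderiv ℝ G1 x (Pi.single 0 1) = 0
      rw [(hfd x).fderiv]; simp [pj1_single0]
    · show fderiv ℝ G1 x (Pi.single 1 1) = γ/L
      rw [(hfd x).fderiv]; simp [pj1_single1]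
  -- admissibility
  have hadm : IsAdmissible L u1 Du1 β1 := by
    refine ⟨?_, ?_, ?_, ?_, ?_⟩
    · exact (continuous_pi fun i => hG1cd.continuous).continuousOn
    · exact isWeakGradient_smooth L G1 hG1cd
    · intro i j
      exact memLp_two L (cont_fderiv_apply hG1cd _)
    · intro i j
      exact locInt L continuous_const
    · refine Eventually.of_forall (fun x => ⟨0, Or.inl ?_⟩)
      simp [hβ1]
  have hbc : BCv L γ ![1, 1] u1 := by
    constructor
    · intro x hx h1
      funext i
      simp [hu1, hG1, h1]
    · intro x hx h1
      funext i
      have : G1 x = γ := by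
        rw [hG1]; simp only [h1]; field_simp
      simp [hu1, this, Pi.smul_apply, vecOne_apply, smul_eq_mul]
  have htv : TVcurl L β1 = 0 := TVcurl_zero L
  have henergy : Energy L σ Du1 β1 ≤ ENNReal.ofReal (3 * γ ^ 2 / (2 * L)) := by
    unfold Energy
    rw [htv, mul_zero, add_zero]
    have hptw : ∀ x : Pt2, normSq (symPart (Du1 x - β1 x)) = 3 * γ^2 / (2 * L^2) := by
      intro x
      have h0 := hDu1e x 0
      have h1 := hDu1e x 1
      unfold normSq symPart
      rw [Fin.sum_univ_two, Fin.sum_univ_two, Fin.sum_univ_two]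
      simp only [Matrix.smul_apply, Matrix.add_apply, Matrix.transpose_apply,
        Matrix.sub_apply, hβ1, Matrix.zero_apply, sub_zero, smul_eq_mul]
      rw [h0.1, h0.2, h1.1, h1.2]
      field_simp
      ring
    calc (∫⁻ x in Omega L, ENNReal.ofReal (normSq (symPart (Du1 x - β1 x))))
        = ∫⁻ _x in Omega L, ENNReal.ofReal (3 * γ^2 / (2 * L^2)) := by
          apply lintegral_congr; intro x; rw [hptw x]
      _ = ENNReal.ofReal (3 * γ^2 / (2 * L^2)) * volume (Omega L) := setLIntegral_const _ _
      _ = ENNReal.ofReal (3 * γ^2 / (2 * L^2)) * ENNReal.ofReal L := by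
          rw [volume_omega L hL0.le]
      _ = ENNReal.ofReal (3 * γ^2 / (2 * L^2) * L) := by
          rw [← ENNReal.ofReal_mul (by positivity)]
      _ = ENNReal.ofReal (3 * γ ^ 2 / (2 * L)) := by
          congr 1
          field_simp
      _ ≤ ENNReal.ofReal (3 * γ ^ 2 / (2 * L)) := le_refl _
  refine le_trans (sInf_le ?_) henergy
  exact ⟨u1, Du1, β1, hadm, hbc, by rw [htv]; exact ENNReal.zero_ne_top, rfl⟩

end UB
namespace UB

lemma S1_apply0 (i : Fin 2) : (!![(1:ℝ), -1; 1, -1]) i 0 = 1 := by fin_cases i <;> simp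
lemma S1_apply1 (i : Fin 2) : (!![(1:ℝ), -1; 1, -1]) i 1 = -1 := by fin_cases i <;> simp

lemma constr2 (L σ γ K : ℝ) (hL0 : 0 < L) (hL1 : L < 1) (hσ : 0 < σ) (hγ : 0 < γ)
    (hK0 : 0 ≤ K) (hK : ∀ y, |stD y| ≤ K) :
    J L σ γ ![1, 1] ≤ ENNReal.ofReal (γ^2 * (1 - L) / L + (2 + 8*K) * σ * γ) := by
  set ε : ℝ := L * σ / γ with hεdef
  have hε : 0 < ε := by positivity
  set Gg : Pt2 → ℝ := fun x => γ * Wf (Pf ε) (Qf L ε) x with hGg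
  set u2 : Pt2 → Pt2 := fun x _ => Gg x with hu2
  set Du2 : Pt2 → Mat2 := fun x => Matrix.of fun _ j => fderiv ℝ Gg x (Pi.single j 1) with hDu2
  set bF : ℝ → ℝ := fun s => P' ε s - Qf L ε s / 2 with hbF
  set bf : Pt2 → ℝ := fun x => γ * Wf bF (Q' L ε) x with hbf
  set β2 : Pt2 → Mat2 := fun x => bf x • !![(1:ℝ), -1; 1, -1] with hβ2
  -- smoothness
  have hWcd : ContDiff ℝ 1 (Wf (Pf ε) (Qf L ε)) := Wf_contDiff (Pf_cd ε) (Qf_cd L ε)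
  have hGgcd : ContDiff ℝ 1 Gg := contDiff_const.mul hWcd
  have hbFcd : ContDiff ℝ 1 bF := (P'_cd ε).sub ((Qf_cd L ε).div_const 2)
  have hbWcd : ContDiff ℝ 1 (Wf bF (Q' L ε)) := Wf_contDiff hbFcd (Q'_cd L ε)
  have hbfcd : ContDiff ℝ 1 bf := contDiff_const.mul hbWcd
  -- derivative computations
  have hpdG0 : ∀ x : Pt2, fderiv ℝ Gg x (Pi.single 0 1)
      = γ * (P' ε (x 0 - x 1) + x 1 * Q' L ε (x 0 - x 1)) := by
    intro x
    rw [hGg, fderiv_const_mul ((hWcd.differentiable one_ne_zero) x) γ,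
      ContinuousLinearMap.smul_apply, smul_eq_mul]
    rw [← pd_eq_fderiv, Wf_pd0 (Pf_hasDeriv ε) (Qf_hasDeriv L ε) x]
  have hpdG1 : ∀ x : Pt2, fderiv ℝ Gg x (Pi.single 1 1)
      = γ * (Qf L ε (x 0 - x 1) - (P' ε (x 0 - x 1) + x 1 * Q' L ε (x 0 - x 1))) := by
    intro x
    rw [hGg, fderiv_const_mul ((hWcd.differentiable one_ne_zero) x) γ,
      ContinuousLinearMap.smul_apply, smul_eq_mul]
    rw [← pd_eq_fderiv, Wf_pd1 (Pf_hasDeriv ε) (Qf_hasDeriv L ε) x]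
  have hbf_vv : ∀ x : Pt2, fderiv ℝ bf x vv = γ * Q' L ε (x 0 - x 1) := by
    intro x
    rw [hbf, fderiv_const_mul ((hbWcd.differentiable one_ne_zero) x) γ,
      ContinuousLinearMap.smul_apply, smul_eq_mul]
    rw [Wf_fderiv_vv (F := bF) (F' := fun s => deriv (P' ε) s - Q' L ε s / 2)
      (G' := fun s => deriv (Q' L ε) s)
      (fun s => (((P'_diffble ε s).hasDerivAt).sub ((Qf_hasDeriv L ε s).div_const 2)))
      (fun s => ((Q'_diffble L ε s).hasDerivAt)) x]
  -- entries of Du2 - β2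
  have hentry : ∀ (x : Pt2) (i j : Fin 2),
      (Du2 x - β2 x) i j = γ * Qf L ε (x 0 - x 1) / 2 := by
    intro x i j
    have fin2 : ∀ j : Fin 2, j = 0 ∨ j = 1 := by decide
    have hb : bf x = γ * (P' ε (x 0 - x 1) - Qf L ε (x 0 - x 1) / 2
        + x 1 * Q' L ε (x 0 - x 1)) := rfl
    have hsub : (Du2 x - β2 x) i j
        = fderiv ℝ Gg x (Pi.single j 1) - bf x * (!![(1:ℝ), -1; 1, -1] i j) := by
      simp only [hβ2, Matrix.sub_apply, Matrix.smul_apply, smul_eq_mul]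
      rfl
    rcases fin2 j with rfl | rfl
    · rw [hsub, S1_apply0, hpdG0 x, hb]; ring
    · rw [hsub, S1_apply1, hpdG1 x, hb]; ring
  have hns : ∀ x : Pt2, normSq (symPart (Du2 x - β2 x)) = (γ * Qf L ε (x 0 - x 1))^2 := by
    intro x
    unfold normSq symPart
    rw [Fin.sum_univ_two, Fin.sum_univ_two, Fin.sum_univ_two]
    simp only [Matrix.smul_apply, Matrix.add_apply, Matrix.transpose_apply, smul_eq_mul]
    rw [hentry x 0 0, hentry x 0 1, hentry x 1 0, hentry x 1 1]
    ring
  -- admissibility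
  have hadm : IsAdmissible L u2 Du2 β2 := by
    refine ⟨?_, ?_, ?_, ?_, ?_⟩
    · exact (continuous_pi fun i => hGgcd.continuous).continuousOn
    · exact isWeakGradient_smooth L Gg hGgcd
    · intro i j
      exact memLp_two L (cont_fderiv_apply hGgcd _)
    · intro i j
      have : (fun x => β2 x i j) = fun x => bf x * (!![(1:ℝ), -1; 1, -1]) i j := by
        funext x; simp only [hβ2, Matrix.smul_apply, smul_eq_mul]
      rw [this]
      exact locInt L (hbfcd.continuous.mul continuous_const)
    · exact Eventually.of_forall (fun x => ⟨bf x, Or.inl rfl⟩)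
  -- boundary conditions
  have hbc : BCv L γ ![1, 1] u2 := by
    constructor
    · intro x hx h1
      obtain ⟨hx0, -⟩ := closure_omega_subset L hx
      funext i
      have ht : x 0 - x 1 = x 0 := by rw [h1]; ring
      have hP : Pf ε (x 0 - x 1) = 0 := Pf_zero hε (by rw [ht]; exact hx0.1)
      show Gg x = 0
      rw [hGg]
      show γ * (Pf ε (x 0 - x 1) + x 1 * Qf L ε (x 0 - x 1)) = 0
      rw [hP, h1]; ring
    · intro x hx h1
      obtain ⟨hx0, -⟩ := closure_omega_subset L hx
      funext i
      have hts : x 0 - x 1 ≤ 1 - L := by rw [h1]; linarith [hx0.2]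
      have hPLQ := PLQ hε hL0 hts
      show Gg x = (γ • ![(1:ℝ), 1]) i
      rw [Pi.smul_apply, vecOne_apply, smul_eq_mul, mul_one, hGg]
      show γ * (Pf ε (x 0 - x 1) + x 1 * Qf L ε (x 0 - x 1)) = γ
      rw [h1] at hPLQ
      rw [h1, hPLQ]
      ring
  -- TVcurl bound
  set DD : Set Pt2 := {x | (x 0 - x 1) ∈ Icc (-ε) 0 ∪ Icc (1-L) (1-L+ε)} with hDD
  have hDDm : MeasurableSet DD := by
    have : DD = (fun x : Pt2 => x 0 - x 1) ⁻¹' (Icc (-ε) 0 ∪ Icc (1-L) (1-L+ε)) := rfl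
    rw [this]
    exact (((continuous_apply 0).sub (continuous_apply 1)).measurable)
      ((isClosed_Icc.union isClosed_Icc).measurableSet)
  set Mb : ℝ := γ * (L⁻¹ * (2*K/ε)) with hMb
  have hMb0 : 0 ≤ Mb := by positivity
  have hvol : volume (Omega L ∩ DD) ≤ ENNReal.ofReal (2*(L*ε)) := by
    have hsub : Omega L ∩ DD ⊆ {x : Pt2 | x 1 ∈ Ioo 0 L ∧ x 0 - x 1 ∈ Icc (-ε) 0}
        ∪ {x : Pt2 | x 1 ∈ Ioo 0 L ∧ x 0 - x 1 ∈ Icc (1-L) (1-L+ε)} := by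
      rintro x ⟨hxΩ, hxD⟩
      rcases hxD with h | h
      · exact Or.inl ⟨hxΩ.2, h⟩
      · exact Or.inr ⟨hxΩ.2, h⟩
    calc volume (Omega L ∩ DD)
        ≤ volume ({x : Pt2 | x 1 ∈ Ioo 0 L ∧ x 0 - x 1 ∈ Icc (-ε) 0}
          ∪ {x : Pt2 | x 1 ∈ Ioo 0 L ∧ x 0 - x 1 ∈ Icc (1-L) (1-L+ε)}) := measure_mono hsub
      _ ≤ volume {x : Pt2 | x 1 ∈ Ioo 0 L ∧ x 0 - x 1 ∈ Icc (-ε) 0}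
          + volume {x : Pt2 | x 1 ∈ Ioo 0 L ∧ x 0 - x 1 ∈ Icc (1-L) (1-L+ε)} := measure_union_le _ _
      _ ≤ ENNReal.ofReal L * ENNReal.ofReal (0 - (-ε))
          + ENNReal.ofReal L * ENNReal.ofReal ((1-L+ε) - (1-L)) :=
            add_le_add (volume_slab L (-ε) 0 (by linarith)) (volume_slab L (1-L) (1-L+ε) (by linarith))
      _ = ENNReal.ofReal (L*ε) + ENNReal.ofReal (L*ε) := by
          rw [← ENNReal.ofReal_mul hL0.le, ← ENNReal.ofReal_mul hL0.le]
          norm_num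
      _ = ENNReal.ofReal (2*(L*ε)) := by
          rw [← ENNReal.ofReal_add (by positivity) (by positivity)]
          congr 1; ring
  have hvolr : (volume (Omega L ∩ DD)).toReal ≤ 2*(L*ε) :=
    ENNReal.toReal_le_of_le_ofReal (by positivity) hvol
  have htv : TVcurl L β2 ≤ ENNReal.ofReal (8*K*γ) := by
    apply sSup_le
    rintro e ⟨φ, hφt, hφb, rfl⟩
    apply ENNReal.ofReal_le_ofReal
    rw [Fin.sum_univ_two]
    have key : ∀ i : Fin 2,
        (∫ x in Omega L, (β2 x i 1 * pd 0 (φ i) x - β2 x i 0 * pd 1 (φ i) x)) ≤ 4*K*γ := by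
      intro i
      obtain ⟨hφ1, hφ2, hφ3⟩ := hφt i
      have hstep1 : ∀ x : Pt2, β2 x i 1 * pd 0 (φ i) x - β2 x i 0 * pd 1 (φ i) x
          = -(bf x * fderiv ℝ (φ i) x vv) := by
        intro x
        have h1 : β2 x i 1 = -bf x := by
          simp only [hβ2, Matrix.smul_apply, smul_eq_mul, S1_apply1]; ring
        have h0 : β2 x i 0 = bf x := by
          simp only [hβ2, Matrix.smul_apply, smul_eq_mul, S1_apply0]; ring
        have hv : fderiv ℝ (φ i) x vv = pd 0 (φ i) x + pd 1 (φ i) x := by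
          rw [pd_eq_fderiv, pd_eq_fderiv, ← ContinuousLinearMap.map_add]
          rfl
        rw [h1, h0, hv]; ring
      have hIcont : Continuous fun x : Pt2 => γ * Q' L ε (x 0 - x 1) * φ i x :=
        ((continuous_const.mul ((Q'_cd L ε).continuous.comp tfun_contDiff.continuous)).mul
          hφ1.continuous)
      have hInt : Integrable (fun x : Pt2 => γ * Q' L ε (x 0 - x 1) * φ i x) :=
        hIcont.integrable_of_hasCompactSupport hφ2.mul_left
      have hzero : ∀ x ∈ Omega L \ DD, γ * Q' L ε (x 0 - x 1) * φ i x = 0 := by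
        rintro x ⟨-, hxD⟩
        have hxD' : (x 0 - x 1) ∉ Icc (-ε) 0 ∪ Icc (1-L) (1-L+ε) := hxD
        rw [mem_union, not_or] at hxD'
        rw [Q'_zero hε hxD'.1 hxD'.2]
        ring
      have hbd : ∀ x ∈ Omega L ∩ DD, ‖γ * Q' L ε (x 0 - x 1) * φ i x‖ ≤ Mb := by
        intro x hx
        rw [Real.norm_eq_abs, abs_mul, abs_mul, abs_of_pos hγ]
        have h1 : |Q' L ε (x 0 - x 1)| ≤ L⁻¹ * (2*K/ε) := Q'_bound hε hL0 hK _
        have h2 : |φ i x| ≤ 1 := by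
          have := hφb i x
          rw [abs_le]; exact ⟨this.1, this.2⟩
        calc γ * |Q' L ε (x 0 - x 1)| * |φ i x| ≤ γ * (L⁻¹ * (2*K/ε)) * 1 := by
              apply mul_le_mul _ h2 (abs_nonneg _) (by positivity)
              exact mul_le_mul_of_nonneg_left h1 hγ.le
          _ = Mb := by rw [hMb]; ring
      calc ∫ x in Omega L, (β2 x i 1 * pd 0 (φ i) x - β2 x i 0 * pd 1 (φ i) x)
          = ∫ x in Omega L, -(bf x * fderiv ℝ (φ i) x vv) :=
            integral_congr_ae (Eventually.of_forall fun x => hstep1 x)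
        _ = - ∫ x in Omega L, bf x * fderiv ℝ (φ i) x vv := by rw [integral_neg]
        _ = - ∫ x, bf x * fderiv ℝ (φ i) x vv := by
            rw [setIntegral_eq_integral_of_forall_compl_eq_zero
              (fun x hx => by rw [pd_zero_of_nmem ⟨hφ1, hφ2, hφ3⟩ hx vv, mul_zero])]
        _ = ∫ x, fderiv ℝ bf x vv * φ i x := by
            rw [key_ibp hbfcd hφ1 hφ2 vv, neg_neg]
        _ = ∫ x, γ * Q' L ε (x 0 - x 1) * φ i x :=
            integral_congr_ae (Eventually.of_forall fun x => by
              show fderiv ℝ bf x vv * φ i x = γ * Q' L ε (x 0 - x 1) * φ i x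
              rw [hbf_vv x])
        _ = ∫ x in Omega L, γ * Q' L ε (x 0 - x 1) * φ i x :=
            (setIntegral_eq_integral_of_forall_compl_eq_zero
              (fun x hx => by rw [test_zero_of_nmem ⟨hφ1, hφ2, hφ3⟩ hx, mul_zero])).symm
        _ = (∫ x in Omega L ∩ DD, γ * Q' L ε (x 0 - x 1) * φ i x)
            + ∫ x in Omega L \ DD, γ * Q' L ε (x 0 - x 1) * φ i x :=
            (integral_inter_add_diff hDDm hInt.integrableOn).symm
        _ = ∫ x in Omega L ∩ DD, γ * Q' L ε (x 0 - x 1) * φ i x := by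
            rw [setIntegral_eq_zero_of_forall_eq_zero hzero, add_zero]
        _ ≤ Mb * (volume (Omega L ∩ DD)).toReal := by
            apply le_trans (le_abs_self _)
            rw [← Real.norm_eq_abs]
            exact norm_setIntegral_le_of_norm_le_const
              (lt_of_le_of_lt (measure_mono inter_subset_left) (volume_omega_lt_top L))
              hbd
        _ ≤ Mb * (2*(L*ε)) := mul_le_mul_of_nonneg_left hvolr hMb0
        _ = 4*K*γ := by
            rw [hMb, hεdef]
            field_simp
            ring
    calc (∫ x in Omega L, (β2 x 0 1 * pd 0 (φ 0) x - β2 x 0 0 * pd 1 (φ 0) x))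
        + ∫ x in Omega L, (β2 x 1 1 * pd 0 (φ 1) x - β2 x 1 0 * pd 1 (φ 1) x)
        ≤ 4*K*γ + 4*K*γ := add_le_add (key 0) (key 1)
      _ = 8*K*γ := by ring
  have htvne : TVcurl L β2 ≠ ⊤ := ne_top_of_le_ne_top ENNReal.ofReal_ne_top htv
  -- elastic energy bound
  set EE : Set Pt2 := {x | x 0 - x 1 ∈ Icc (-ε) (1-L+ε)} with hEE
  have hEEm : MeasurableSet EE :=
    (((continuous_apply 0).sub (continuous_apply 1)).measurable) (measurableSet_Icc)
  have helast : (∫⁻ x in Omega L, ENNReal.ofReal (normSq (symPart (Du2 x - β2 x))))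
      ≤ ENNReal.ofReal (γ^2 * (1-L) / L + 2*σ*γ) := by
    have hpt : ∀ x : Pt2, ENNReal.ofReal (normSq (symPart (Du2 x - β2 x)))
        ≤ EE.indicator (fun _ => ENNReal.ofReal (γ^2 * (L⁻¹)^2)) x := by
      intro x
      rw [hns x]
      by_cases hx : x ∈ EE
      · rw [indicator_of_mem hx]
        apply ENNReal.ofReal_le_ofReal
        have h1 : 0 ≤ Qf L ε (x 0 - x 1) := Qf_nonneg _ hL0
        have h2 : Qf L ε (x 0 - x 1) ≤ L⁻¹ := Qf_le _ hL0
        have h3 : (γ * Qf L ε (x 0 - x 1))^2 = γ^2 * (Qf L ε (x 0 - x 1))^2 := by ring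
        rw [h3]
        apply mul_le_mul_of_nonneg_left _ (by positivity)
        exact pow_le_pow_left₀ h1 h2 2
      · rw [indicator_of_notMem hx]
        have hq : Qf L ε (x 0 - x 1) = 0 := by
          simp only [hEE, mem_setOf_eq, mem_Icc, not_and_or, not_le] at hx
          rcases hx with h | h
          · exact Qf_zero_left hε (by linarith)
          · exact Qf_zero_right hε (by linarith)
        rw [hq]
        simp
    have hsub2 : EE ∩ Omega L ⊆ {x : Pt2 | x 1 ∈ Ioo 0 L ∧ x 0 - x 1 ∈ Icc (-ε) (1-L+ε)} := by
      rintro x ⟨hxE, hxΩ⟩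
      exact ⟨hxΩ.2, hxE⟩
    calc (∫⁻ x in Omega L, ENNReal.ofReal (normSq (symPart (Du2 x - β2 x))))
        ≤ ∫⁻ x in Omega L, EE.indicator (fun _ => ENNReal.ofReal (γ^2 * (L⁻¹)^2)) x :=
          lintegral_mono hpt
      _ = ENNReal.ofReal (γ^2 * (L⁻¹)^2) * volume (EE ∩ Omega L) := by
          rw [lintegral_indicator hEEm, setLIntegral_const, Measure.restrict_apply hEEm]
      _ ≤ ENNReal.ofReal (γ^2 * (L⁻¹)^2) * (ENNReal.ofReal L * ENNReal.ofReal ((1-L+ε) - (-ε))) := by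
          apply mul_le_mul_right
          exact le_trans (measure_mono hsub2) (volume_slab L (-ε) (1-L+ε) (by linarith))
      _ = ENNReal.ofReal (γ^2 * (L⁻¹)^2 * (L * ((1-L+ε) - (-ε)))) := by
          rw [← ENNReal.ofReal_mul hL0.le, ← ENNReal.ofReal_mul (by positivity)]
      _ = ENNReal.ofReal (γ^2 * (1-L) / L + 2*σ*γ) := by
          congr 1
          rw [hεdef]
          field_simp
          ring
  -- energy assembly
  have hE : Energy L σ Du2 β2 ≤ ENNReal.ofReal (γ^2 * (1 - L) / L + (2 + 8*K) * σ * γ) := by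
    unfold Energy
    calc (∫⁻ x in Omega L, ENNReal.ofReal (normSq (symPart (Du2 x - β2 x))))
        + ENNReal.ofReal σ * TVcurl L β2
        ≤ ENNReal.ofReal (γ^2 * (1-L) / L + 2*σ*γ)
          + ENNReal.ofReal σ * ENNReal.ofReal (8*K*γ) :=
          add_le_add helast (mul_le_mul_right htv _)
      _ = ENNReal.ofReal (γ^2 * (1-L) / L + 2*σ*γ) + ENNReal.ofReal (σ * (8*K*γ)) := by
          rw [← ENNReal.ofReal_mul hσ.le]
      _ = ENNReal.ofReal (γ^2 * (1-L) / L + 2*σ*γ + σ * (8*K*γ)) := by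
          rw [← ENNReal.ofReal_add _ (by positivity)]
          have h1 : 0 ≤ γ^2 * (1-L) / L := by
            apply div_nonneg _ hL0.le
            apply mul_nonneg (by positivity)
            linarith
          positivity
      _ = ENNReal.ofReal (γ^2 * (1 - L) / L + (2 + 8*K) * σ * γ) := by
          congr 1; ring
  exact le_trans (sInf_le ⟨u2, Du2, β2, hadm, hbc, htvne, rfl⟩) hE

end UB
/-- Under BC1, for every 0 < L < 1 there is a constant c_L > 0, depending
only on L, such that for all σ>0, γ>0:
J_L ≤ min { 3γ²/(2L), γ²(1-L)/L + c_L σ γ }. -/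
theorem upper_bound_BC1 (L : ℝ) (hL0 : 0 < L) (hL1 : L < 1) :
    ∃ c : ℝ, 0 < c ∧ ∀ σ γ : ℝ, 0 < σ → 0 < γ →
      J L σ γ ![1, 1] ≤
        ENNReal.ofReal (min (3 * γ ^ 2 / (2 * L)) (γ ^ 2 * (1 - L) / L + c * σ * γ)) := by
  obtain ⟨K, hK0, hK⟩ := UB.stD_bound
  refine ⟨2 + 8*K, by linarith, fun σ γ hσ hγ => ?_⟩
  rcases le_total (3 * γ ^ 2 / (2 * L)) (γ ^ 2 * (1 - L) / L + (2 + 8*K) * σ * γ) with h | h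
  · rw [min_eq_left h]
    exact UB.constr1 L σ γ hL0 hγ
  · rw [min_eq_right h]
    exact UB.constr2 L σ γ K hL0 hL1 hσ hγ hK0 hK

end
end

section
/- Subject to the diagonal-shear boundary condition BC1, at the critical aspect ratio L=1 one has J_1=0; that is, for every ε>0 there exists an admissible pair (u,β) satisfying BC1 on Ω_1 with E_1(u,β)<ε. -/
open MeasureTheory Set Filter Topology
open scoped ENNReal NNReal

noncomputable section

/-! ### Auxiliary construction -/

namespace JZero

/-! #### The smooth step and its derivative -/

def Sf : ℝ → ℝ := Real.smoothTransition
def dS : ℝ → ℝ := deriv Sf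

lemma hSf {n : ℕ∞} : ContDiff ℝ n Sf := Real.smoothTransition.contDiff
lemma hdS {n : ℕ∞} : ContDiff ℝ n dS := by
  have := (contDiff_infty_iff_deriv.mp (hSf (n := ⊤))).2
  exact this.of_le (by exact_mod_cast le_top)
lemma hS_deriv (r : ℝ) : HasDerivAt Sf (dS r) r :=
  ((hSf (n := 1)).differentiable (by simp)).differentiableAt.hasDerivAt
lemma hdS_cont : Continuous dS := (hdS (n := 0)).continuous
lemma dS_of_neg {r : ℝ} (h : r < 0) : dS r = 0 := by
  have he : Sf =ᶠ[nhds r] (fun _ => 0) := by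
    filter_upwards [Iio_mem_nhds h] with z hz
    exact Real.smoothTransition.zero_of_nonpos (le_of_lt hz)
  rw [dS, he.deriv_eq, deriv_const]
lemma dS_of_gt {r : ℝ} (h : 1 < r) : dS r = 0 := by
  have he : Sf =ᶠ[nhds r] (fun _ => 1) := by
    filter_upwards [Ioi_mem_nhds h] with z hz
    exact Real.smoothTransition.one_of_one_le (le_of_lt hz)
  rw [dS, he.deriv_eq, deriv_const]
lemma dS_bound : ∃ C : ℝ, 1 ≤ C ∧ ∀ r, |dS r| ≤ C := by
  obtain ⟨C, hC⟩ := (isCompact_Icc (a := (0:ℝ)) (b := 1)).exists_bound_of_continuousOn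
    hdS_cont.continuousOn
  refine ⟨max C 1, le_max_right _ _, fun r => ?_⟩
  rcases lt_or_ge r 0 with h | h
  · simp [dS_of_neg h]
  rcases le_or_gt r 1 with h2 | h2
  · exact le_trans (hC r ⟨h, h2⟩) (le_max_left _ _)
  · simp [dS_of_gt h2]

/-! #### Scales and 1D profiles -/

def dl (k : ℕ) : ℝ := (4:ℝ)⁻¹ ^ (k+1)
lemma dl_pos (k : ℕ) : 0 < dl k := pow_pos (by norm_num) _
lemma dl_le (k : ℕ) : dl k ≤ 4⁻¹ := by
  have : ((4:ℝ)⁻¹) ^ (k+1) ≤ (4:ℝ)⁻¹ ^ 1 := by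
    apply pow_le_pow_of_le_one (by norm_num) (by norm_num)
    omega
  simpa [dl] using this
lemma dl_lt {j k : ℕ} (h : j < k) : 4 * dl k ≤ dl j := by
  have h2 : ((4:ℝ)⁻¹) ^ (k+1) ≤ (4:ℝ)⁻¹ ^ (j+2) := by
    apply pow_le_pow_of_le_one (by norm_num) (by norm_num)
    omega
  have h3 : (4:ℝ)⁻¹ ^ (j+2) = 4⁻¹ * dl j := by rw [dl]; ring
  rw [h3] at h2
  rw [dl]
  nlinarith [dl_pos j]

def Hk (k : ℕ) (t : ℝ) : ℝ := Sf ((-2*t + -dl k)/dl k)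
def Hk' (k : ℕ) (t : ℝ) : ℝ := dS ((-2*t + -dl k)/dl k) * (-2/dl k)
def Vk (k : ℕ) (y : ℝ) : ℝ := Sf ((8*y + (-8 + 2*dl k))/dl k)
def Vk' (k : ℕ) (y : ℝ) : ℝ := dS ((8*y + (-8 + 2*dl k))/dl k) * (8/dl k)

lemma affine_deriv (c b d t : ℝ) :
    HasDerivAt (fun t : ℝ => Sf ((c*t + b)/d)) (dS ((c*t+b)/d) * (c/d)) t := by
  have h1 : HasDerivAt (fun t : ℝ => (c*t + b)/d) (c/d) t := by
    simpa using (((hasDerivAt_id t).const_mul c).add_const b).div_const d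
  exact (hS_deriv ((c*t+b)/d)).comp t h1
lemma affine_deriv_dS (c b d t : ℝ) :
    HasDerivAt (fun t : ℝ => dS ((c*t + b)/d)) (deriv dS ((c*t+b)/d) * (c/d)) t := by
  have h1 : HasDerivAt (fun t : ℝ => (c*t + b)/d) (c/d) t := by
    simpa using (((hasDerivAt_id t).const_mul c).add_const b).div_const d
  have h2 : HasDerivAt dS (deriv dS ((c*t+b)/d)) ((c*t+b)/d) :=
    ((hdS (n := 1)).differentiable (by simp)).differentiableAt.hasDerivAt
  exact h2.comp t h1
lemma Hk_deriv (k : ℕ) (t : ℝ) : HasDerivAt (Hk k) (Hk' k t) t :=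
  affine_deriv (-2) (-dl k) (dl k) t
lemma Vk_deriv (k : ℕ) (y : ℝ) : HasDerivAt (Vk k) (Vk' k y) y :=
  affine_deriv 8 (-8 + 2*dl k) (dl k) y
lemma Hk'_deriv (k : ℕ) (t : ℝ) :
    HasDerivAt (Hk' k) (deriv dS ((-2*t + -dl k)/dl k) * (-2/dl k) * (-2/dl k)) t :=
  (affine_deriv_dS (-2) (-dl k) (dl k) t).mul_const _

lemma contDiff_affine (c b d : ℝ) : ContDiff ℝ 1 (fun t : ℝ => (c*t + b)/d) :=
  ((contDiff_const.mul contDiff_id).add contDiff_const).div_const d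
lemma Hk_contDiff (k : ℕ) : ContDiff ℝ 1 (Hk k) :=
  (hSf (n := 1)).comp (contDiff_affine _ _ _)
lemma Vk_contDiff (k : ℕ) : ContDiff ℝ 1 (Vk k) :=
  (hSf (n := 1)).comp (contDiff_affine _ _ _)
lemma Hk'_contDiff (k : ℕ) : ContDiff ℝ 1 (Hk' k) :=
  ((hdS (n := 1)).comp (contDiff_affine _ _ _)).mul contDiff_const
lemma Vk'_contDiff (k : ℕ) : ContDiff ℝ 1 (Vk' k) :=
  ((hdS (n := 1)).comp (contDiff_affine _ _ _)).mul contDiff_const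

lemma Hk_mem (k : ℕ) (t : ℝ) : Hk k t ∈ Icc (0:ℝ) 1 :=
  ⟨Real.smoothTransition.nonneg _, Real.smoothTransition.le_one _⟩
lemma Vk_mem (k : ℕ) (y : ℝ) : Vk k y ∈ Icc (0:ℝ) 1 :=
  ⟨Real.smoothTransition.nonneg _, Real.smoothTransition.le_one _⟩
lemma Hk_one {k : ℕ} {t : ℝ} (h : t ≤ -dl k) : Hk k t = 1 := by
  apply Real.smoothTransition.one_of_one_le
  rw [le_div_iff₀ (dl_pos k)]
  linarith
lemma Hk_zero {k : ℕ} {t : ℝ} (h : -(dl k)/2 ≤ t) : Hk k t = 0 := by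
  apply Real.smoothTransition.zero_of_nonpos
  apply div_nonpos_of_nonpos_of_nonneg _ (dl_pos k).le
  linarith
lemma Hk'_supp {k : ℕ} {t : ℝ} (h : Hk' k t ≠ 0) : -dl k ≤ t ∧ t ≤ -(dl k)/2 := by
  by_contra hc
  push_neg at hc
  apply h
  rw [Hk', mul_eq_zero]
  left
  rcases le_or_gt (-dl k) t with h1 | h1
  · have h2 := hc h1
    apply dS_of_neg
    apply div_neg_of_neg_of_pos _ (dl_pos k)
    linarith
  · apply dS_of_gt
    rw [lt_div_iff₀ (dl_pos k)]
    linarith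
lemma Vk_zero {k : ℕ} {y : ℝ} (h : y ≤ 1 - (dl k)/4) : Vk k y = 0 := by
  apply Real.smoothTransition.zero_of_nonpos
  apply div_nonpos_of_nonpos_of_nonneg _ (dl_pos k).le
  linarith
lemma Vk_one {k : ℕ} {y : ℝ} (h : 1 - (dl k)/8 ≤ y) : Vk k y = 1 := by
  apply Real.smoothTransition.one_of_one_le
  rw [le_div_iff₀ (dl_pos k)]
  linarith
lemma Vk'_supp {k : ℕ} {y : ℝ} (h : Vk' k y ≠ 0) : 1 - (dl k)/4 ≤ y ∧ y ≤ 1 - (dl k)/8 := by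
  by_contra hc
  push_neg at hc
  apply h
  rw [Vk', mul_eq_zero]
  left
  rcases le_or_gt (1 - dl k/4) y with h1 | h1
  · have h2 := hc h1
    apply dS_of_gt
    rw [lt_div_iff₀ (dl_pos k)]
    linarith
  · apply dS_of_neg
    apply div_neg_of_neg_of_pos _ (dl_pos k)
    linarith
lemma Hk'_disj {j k : ℕ} (h : j ≠ k) (t : ℝ) : Hk' j t * Hk' k t = 0 := by
  rcases eq_or_ne (Hk' j t) 0 with h1 | h1
  · rw [h1, zero_mul]
  rcases eq_or_ne (Hk' k t) 0 with h2 | h2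
  · rw [h2, mul_zero]
  exfalso
  obtain ⟨ha1, ha2⟩ := Hk'_supp h1
  obtain ⟨hb1, hb2⟩ := Hk'_supp h2
  rcases Nat.lt_or_ge j k with hlt | hge
  · have := dl_lt hlt
    have := dl_pos k
    linarith
  · have hlt : k < j := by omega
    have := dl_lt hlt
    have := dl_pos j
    linarith
lemma Vk'_disj {j k : ℕ} (h : j ≠ k) (y : ℝ) : Vk' j y * Vk' k y = 0 := by
  rcases eq_or_ne (Vk' j y) 0 with h1 | h1
  · rw [h1, zero_mul]
  rcases eq_or_ne (Vk' k y) 0 with h2 | h2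
  · rw [h2, mul_zero]
  exfalso
  obtain ⟨ha1, ha2⟩ := Vk'_supp h1
  obtain ⟨hb1, hb2⟩ := Vk'_supp h2
  rcases Nat.lt_or_ge j k with hlt | hge
  · have := dl_lt hlt
    have := dl_pos k
    linarith
  · have hlt : k < j := by omega
    have := dl_lt hlt
    have := dl_pos j
    linarith
lemma Hk'_bound {C : ℝ} (hC : ∀ r, |dS r| ≤ C) (k : ℕ) (t : ℝ) : |Hk' k t| ≤ 2*C/dl k := by
  rw [Hk', abs_mul]
  have h2 : |(-2/dl k)| = 2/dl k := by
    rw [abs_div]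
    simp [abs_of_pos (dl_pos k)]
  rw [h2]
  calc |dS ((-2*t + -dl k)/dl k)| * (2/dl k) ≤ C * (2/dl k) :=
        mul_le_mul_of_nonneg_right (hC _) (div_nonneg (by norm_num) (dl_pos k).le)
    _ = 2*C/dl k := by ring
lemma Vk'_bound {C : ℝ} (hC : ∀ r, |dS r| ≤ C) (k : ℕ) (y : ℝ) : |Vk' k y| ≤ 8*C/dl k := by
  rw [Vk', abs_mul]
  have h2 : |(8/dl k)| = 8/dl k := by
    rw [abs_div]
    simp [abs_of_pos (dl_pos k)]
  rw [h2]
  calc |dS _| * (8/dl k) ≤ C * (8/dl k) :=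
        mul_le_mul_of_nonneg_right (hC _) (div_nonneg (by norm_num) (dl_pos k).le)
    _ = 8*C/dl k := by ring

/-! #### 2D calculus helpers -/

lemma cont_pd {f : Pt2 → ℝ} (hf : ContDiff ℝ 1 f) (j : Fin 2) : Continuous (pd j f) := by
  have h1 : Continuous (fderiv ℝ f) := hf.continuous_fderiv one_ne_zero
  exact h1.clm_apply continuous_const
lemma hcs_pd {f : Pt2 → ℝ} (hf : HasCompactSupport f) (j : Fin 2) : HasCompactSupport (pd j f) :=
  hf.fderiv_apply ℝ (Pi.single j 1)

lemma hasDerivAt_section1 {W : Pt2 → ℝ} (hW : ContDiff ℝ 1 W) (x y : ℝ) :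
    HasDerivAt (fun s => W ![x, s]) (pd 1 W ![x, y]) y := by
  have hm : HasDerivAt (fun s : ℝ => ![x, s]) (Pi.single 1 1 : Pt2) y := by
    have : (fun s : ℝ => (![x, s] : Pt2)) = fun s => s • (Pi.single 1 1 : Pt2) + ![x, 0] := by
      funext s
      funext i
      fin_cases i <;> simp [Pi.single_apply]
    rw [this]
    simpa using ((hasDerivAt_id y).smul_const (Pi.single 1 1 : Pt2)).add_const ![x, 0]
  have hW' : HasFDerivAt W (fderiv ℝ W ![x, y]) ![x, y] :=
    (hW.differentiable one_ne_zero).differentiableAt.hasFDerivAt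
  exact hW'.comp_hasDerivAt y hm
lemma hasDerivAt_section0 {W : Pt2 → ℝ} (hW : ContDiff ℝ 1 W) (y x : ℝ) :
    HasDerivAt (fun s => W ![s, y]) (pd 0 W ![x, y]) x := by
  have hm : HasDerivAt (fun s : ℝ => ![s, y]) (Pi.single 0 1 : Pt2) x := by
    have : (fun s : ℝ => (![s, y] : Pt2)) = fun s => s • (Pi.single 0 1 : Pt2) + ![0, y] := by
      funext s
      funext i
      fin_cases i <;> simp [Pi.single_apply]
    rw [this]
    simpa using ((hasDerivAt_id x).smul_const (Pi.single 0 1 : Pt2)).add_const ![0, y]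
  have hW' : HasFDerivAt W (fderiv ℝ W ![x, y]) ![x, y] :=
    (hW.differentiable one_ne_zero).differentiableAt.hasFDerivAt
  exact hW'.comp_hasDerivAt x hm
lemma contDiff_m1 (x : ℝ) : ContDiff ℝ 1 (fun s : ℝ => (![x, s] : Pt2)) := by
  apply contDiff_pi.2
  intro i
  fin_cases i <;> simp <;> [exact contDiff_const; exact contDiff_id]
lemma contDiff_m0 (y : ℝ) : ContDiff ℝ 1 (fun s : ℝ => (![s, y] : Pt2)) := by
  apply contDiff_pi.2
  intro i
  fin_cases i <;> simp <;> [exact contDiff_id; exact contDiff_const]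
lemma hcs_section {W : Pt2 → ℝ} (hsupp : HasCompactSupport W) (m : ℝ → Pt2) (i : Fin 2)
    (hm : ∀ s, m s i = s) : HasCompactSupport (fun s => W (m s)) := by
  obtain ⟨R, hR⟩ := hsupp.isBounded.subset_closedBall (0 : Pt2)
  apply HasCompactSupport.intro (isCompact_Icc (a := -R) (b := R))
  intro s hs
  apply image_eq_zero_of_notMem_tsupport
  intro hmem
  have h1 := hR hmem
  rw [Metric.mem_closedBall, dist_zero_right] at h1
  have h2 : |m s i| ≤ ‖m s‖ := by
    have := norm_le_pi_norm (m s) i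
    simpa using this
  rw [hm s] at h2
  simp only [mem_Icc, not_and_or, not_le] at hs
  rw [abs_le] at h2
  rcases hs with hs | hs <;> linarith [h2.1, h2.2]

lemma integral_pd_zero {W : Pt2 → ℝ} (hW : ContDiff ℝ 1 W) (hsupp : HasCompactSupport W)
    (j : Fin 2) : ∫ x, pd j W x = 0 := by
  have hpdc : Continuous (pd j W) := cont_pd hW j
  have hpdcs : HasCompactSupport (pd j W) := hcs_pd hsupp j
  have hmp : MeasurePreserving
      ((MeasurableEquiv.finTwoArrow : (Fin 2 → ℝ) ≃ᵐ ℝ × ℝ).symm) volume volume :=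
    (MeasureTheory.volume_preserving_finTwoArrow ℝ).symm _
  have htrans : ∫ p : ℝ × ℝ, pd j W ![p.1, p.2] = ∫ x, pd j W x := by
    have := hmp.integral_comp (MeasurableEquiv.finTwoArrow.symm.measurableEmbedding) (pd j W)
    exact this
  rw [← htrans]
  have hg_cont : Continuous (fun p : ℝ × ℝ => pd j W ![p.1, p.2]) := by
    have : (fun p : ℝ × ℝ => pd j W ![p.1, p.2]) =
        (pd j W) ∘ (Homeomorph.finTwoArrow : (Fin 2 → ℝ) ≃ₜ ℝ × ℝ).symm := rfl
    rw [this]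
    exact hpdc.comp (Homeomorph.finTwoArrow.symm).continuous
  have hg_cs : HasCompactSupport (fun p : ℝ × ℝ => pd j W ![p.1, p.2]) := by
    have : (fun p : ℝ × ℝ => pd j W ![p.1, p.2]) =
        (pd j W) ∘ (Homeomorph.finTwoArrow : (Fin 2 → ℝ) ≃ₜ ℝ × ℝ).symm := rfl
    rw [this]
    exact hpdcs.comp_homeomorph _
  have hg_int : Integrable (fun p : ℝ × ℝ => pd j W ![p.1, p.2]) := by
    rw [Measure.volume_eq_prod ℝ ℝ]
    exact hg_cont.integrable_of_hasCompactSupport hg_cs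
  have inner1 : ∀ x : ℝ, ∫ s, pd 1 W ![x, s] = 0 := by
    intro x
    have hφ : ContDiff ℝ 1 (fun s => W ![x, s]) := hW.comp (contDiff_m1 x)
    have hφcs : HasCompactSupport (fun s => W ![x, s]) :=
      hcs_section hsupp (fun s => ![x, s]) 1 (fun s => rfl)
    have hder : deriv (fun s => W ![x, s]) = fun s => pd 1 W ![x, s] := by
      funext s
      exact (hasDerivAt_section1 hW x s).deriv
    have hint : Integrable (deriv (fun s => W ![x, s])) := by
      apply Continuous.integrable_of_hasCompactSupport
      · exact hφ.continuous_deriv le_rfl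
      · exact hφcs.deriv
    have key : (∫ s in Iic 0, deriv (fun s => W ![x, s]) s) +
        (∫ s in Ioi 0, deriv (fun s => W ![x, s]) s) = ∫ s, deriv (fun s => W ![x, s]) s := by
      have := integral_add_compl (measurableSet_Iic (a := (0:ℝ))) hint
      rwa [compl_Iic] at this
    rw [← hder, ← key, hφcs.integral_Iic_deriv_eq hφ 0, hφcs.integral_Ioi_deriv_eq hφ 0]
    ring
  have inner0 : ∀ y : ℝ, ∫ s, pd 0 W ![s, y] = 0 := by
    intro y
    have hφ : ContDiff ℝ 1 (fun s => W ![s, y]) := hW.comp (contDiff_m0 y)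
    have hφcs : HasCompactSupport (fun s => W ![s, y]) :=
      hcs_section hsupp (fun s => ![s, y]) 0 (fun s => rfl)
    have hder : deriv (fun s => W ![s, y]) = fun s => pd 0 W ![s, y] := by
      funext s
      exact (hasDerivAt_section0 hW y s).deriv
    have hint : Integrable (deriv (fun s => W ![s, y])) := by
      apply Continuous.integrable_of_hasCompactSupport
      · exact hφ.continuous_deriv le_rfl
      · exact hφcs.deriv
    have key : (∫ s in Iic 0, deriv (fun s => W ![s, y]) s) +
        (∫ s in Ioi 0, deriv (fun s => W ![s, y]) s) = ∫ s, deriv (fun s => W ![s, y]) s := by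
      have := integral_add_compl (measurableSet_Iic (a := (0:ℝ))) hint
      rwa [compl_Iic] at this
    rw [← hder, ← key, hφcs.integral_Iic_deriv_eq hφ 0, hφcs.integral_Ioi_deriv_eq hφ 0]
    ring
  have hsplit : ∫ p : ℝ × ℝ, pd j W ![p.1, p.2] =
      ∫ x : ℝ, ∫ y : ℝ, pd j W ![x, y] := by
    rw [Measure.volume_eq_prod ℝ ℝ] at hg_int ⊢
    exact MeasureTheory.integral_prod _ hg_int
  have hj2 : j = 0 ∨ j = 1 := by
    rcases j with ⟨v, hv⟩
    interval_cases v
    · exact Or.inl rfl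
    · exact Or.inr rfl
  rcases hj2 with rfl | rfl
  · have hswap : ∫ x : ℝ, ∫ y : ℝ, pd 0 W ![x, y] = ∫ y : ℝ, ∫ x : ℝ, pd 0 W ![x, y] := by
      apply MeasureTheory.integral_integral_swap
      rw [Function.uncurry_def]
      rw [Measure.volume_eq_prod ℝ ℝ] at hg_int
      exact hg_int
    rw [hsplit, hswap]
    simp only [inner0]
    simp
  · rw [hsplit]
    simp only [inner1]
    simp

lemma ibp {F : Pt2 → ℝ} (hF : ContDiff ℝ 1 F) {f : Pt2 → ℝ} (hf1 : ContDiff ℝ 1 f)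
    (hf2 : HasCompactSupport f) (j : Fin 2) :
    ∫ x, F x * pd j f x = - ∫ x, pd j F x * f x := by
  have hW : ContDiff ℝ 1 (fun x => F x * f x) := hF.mul hf1
  have hWcs : HasCompactSupport (fun x => F x * f x) := hf2.mul_left
  have hzero := integral_pd_zero hW hWcs j
  have hpt : ∀ x, pd j (fun x => F x * f x) x = F x * pd j f x + pd j F x * f x := by
    intro x
    have hdF : DifferentiableAt ℝ F x := (hF.differentiable one_ne_zero).differentiableAt
    have hdf : DifferentiableAt ℝ f x := (hf1.differentiable one_ne_zero).differentiableAt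
    have := fderiv_fun_mul (𝕜 := ℝ) hdF hdf
    rw [pd, this]
    simp [pd]
    ring
  rw [funext hpt] at hzero
  have hint1 : Integrable (fun x => F x * pd j f x) := by
    apply Continuous.integrable_of_hasCompactSupport
    · exact (hF.continuous).mul (cont_pd hf1 j)
    · exact (hcs_pd hf2 j).mul_left
  have hint2 : Integrable (fun x => pd j F x * f x) := by
    apply Continuous.integrable_of_hasCompactSupport
    · exact (cont_pd hF j).mul hf1.continuous
    · exact hf2.mul_left
  rw [integral_add hint1 hint2] at hzero
  linarith

lemma paraVol {a b q r : ℝ} :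
    volume {x : Pt2 | x 0 - x 1 ∈ Icc a b ∧ x 1 ∈ Icc q r} =
      ENNReal.ofReal (b-a) * ENNReal.ofReal (r-q) := by
  have hBmeas : MeasurableSet {p : ℝ × ℝ | p.1 - p.2 ∈ Icc a b ∧ p.2 ∈ Icc q r} := by
    apply MeasurableSet.inter
    · exact (measurable_fst.sub measurable_snd) measurableSet_Icc
    · exact measurable_snd measurableSet_Icc
  have h1 : {x : Pt2 | x 0 - x 1 ∈ Icc a b ∧ x 1 ∈ Icc q r} =
      (MeasurableEquiv.finTwoArrow : (Fin 2 → ℝ) ≃ᵐ ℝ × ℝ) ⁻¹'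
        {p : ℝ × ℝ | p.1 - p.2 ∈ Icc a b ∧ p.2 ∈ Icc q r} := rfl
  rw [h1, MeasurePreserving.measure_preimage (MeasureTheory.volume_preserving_finTwoArrow ℝ)
    hBmeas.nullMeasurableSet]
  have h2 : {p : ℝ × ℝ | p.1 - p.2 ∈ Icc a b ∧ p.2 ∈ Icc q r} =
      (fun z : ℝ × ℝ => (z.1 - z.2, z.2)) ⁻¹' (Icc a b ×ˢ Icc q r) := rfl
  rw [h2, Measure.volume_eq_prod ℝ ℝ]
  rw [MeasurePreserving.measure_preimage (measurePreserving_sub_prod volume volume)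
    (((measurableSet_Icc).prod measurableSet_Icc).nullMeasurableSet)]
  rw [Measure.prod_prod, Real.volume_Icc, Real.volume_Icc]

lemma sq_sum_of_pairwise {N : ℕ} (f : ℕ → ℝ)
    (h : ∀ j ∈ Finset.range N, ∀ k ∈ Finset.range N, j ≠ k → f j * f k = 0) :
    (∑ k ∈ Finset.range N, f k)^2 = ∑ k ∈ Finset.range N, (f k)^2 := by
  rw [sq, Finset.sum_mul_sum]
  apply Finset.sum_congr rfl
  intro j hj
  rw [Finset.sum_eq_single j]
  · exact (sq (f j)).symm
  · intro k hk hkj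
    exact h j hj k hk (fun he => hkj he.symm)
  · intro hj'
    exact absurd hj hj'

/-! #### The 2D fields -/

def Lt : Pt2 →L[ℝ] ℝ :=
  (ContinuousLinearMap.proj (R := ℝ) (φ := fun _ : Fin 2 => ℝ) 0) -
    (ContinuousLinearMap.proj (R := ℝ) (φ := fun _ : Fin 2 => ℝ) 1)
def Ly : Pt2 →L[ℝ] ℝ := ContinuousLinearMap.proj (R := ℝ) (φ := fun _ : Fin 2 => ℝ) 1
lemma Lt_apply (x : Pt2) : Lt x = x 0 - x 1 := rfl
lemma Ly_apply (x : Pt2) : Ly x = x 1 := rfl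
lemma Lt_e0 : Lt (Pi.single 0 1) = 1 := by simp [Lt_apply]
lemma Lt_e1 : Lt (Pi.single 1 1) = -1 := by simp [Lt_apply]
lemma Ly_e0 : Ly (Pi.single 0 1) = 0 := by
  rw [Ly_apply]
  simp [Pi.single_apply]
lemma Ly_e1 : Ly (Pi.single 1 1) = 1 := by
  rw [Ly_apply]
  simp

def tt (x : Pt2) : ℝ := x 0 - x 1
def yy (x : Pt2) : ℝ := x 1

lemma comp_t_hasFDeriv {ψ : ℝ → ℝ} {d : ℝ} {x : Pt2} (h : HasDerivAt ψ d (tt x)) :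
    HasFDerivAt (fun x : Pt2 => ψ (tt x)) (d • Lt) x :=
  h.comp_hasFDerivAt x Lt.hasFDerivAt
lemma comp_y_hasFDeriv {ψ : ℝ → ℝ} {d : ℝ} {x : Pt2} (h : HasDerivAt ψ d (yy x)) :
    HasFDerivAt (fun x : Pt2 => ψ (yy x)) (d • Ly) x :=
  h.comp_hasFDerivAt x Ly.hasFDerivAt
lemma contDiff_comp_t {ψ : ℝ → ℝ} (h : ContDiff ℝ 1 ψ) :
    ContDiff ℝ 1 (fun x : Pt2 => ψ (tt x)) := h.comp Lt.contDiff
lemma contDiff_comp_y {ψ : ℝ → ℝ} (h : ContDiff ℝ 1 ψ) :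
    ContDiff ℝ 1 (fun x : Pt2 => ψ (yy x)) := h.comp Ly.contDiff

def gk (k : ℕ) (x : Pt2) : ℝ := Hk k (tt x) + Vk k (yy x) - Hk k (tt x) * Vk k (yy x)
def GG (N : ℕ) (x : Pt2) : ℝ := ∑ k ∈ Finset.range N, gk k x
def AA (N : ℕ) (x : Pt2) : ℝ := ∑ k ∈ Finset.range N, Hk' k (tt x) * Vk k (yy x)
def BB (N : ℕ) (x : Pt2) : ℝ := ∑ k ∈ Finset.range N, Vk' k (yy x) * (1 - Hk k (tt x))
def aa (N : ℕ) (x : Pt2) : ℝ := ∑ k ∈ Finset.range N, Hk' k (tt x)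
def uu (N : ℕ) (c : ℝ) : Pt2 → Pt2 := fun x _ => c * GG N x
def DU (N : ℕ) (c : ℝ) : Pt2 → Mat2 := fun x =>
  Matrix.of fun _ j => if j = 0 then c * (aa N x - AA N x) else c * (AA N x + BB N x - aa N x)
def bb (N : ℕ) (c : ℝ) : Pt2 → Mat2 := fun x => (c * aa N x) • !![(1:ℝ), -1; 1, -1]

lemma gk_hasFDeriv (k : ℕ) (x : Pt2) :
    HasFDerivAt (gk k)
      ((Hk' k (tt x) * (1 - Vk k (yy x))) • Lt + (Vk' k (yy x) * (1 - Hk k (tt x))) • Ly) x := by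
  have h1 : HasFDerivAt (fun x : Pt2 => Hk k (tt x)) (Hk' k (tt x) • Lt) x :=
    comp_t_hasFDeriv (Hk_deriv k (tt x))
  have h2 : HasFDerivAt (fun x : Pt2 => Vk k (yy x)) (Vk' k (yy x) • Ly) x :=
    comp_y_hasFDeriv (Vk_deriv k (yy x))
  have h3 := (h1.add h2).sub (h1.mul h2)
  refine h3.congr_fderiv ?_
  ext v
  simp only [ContinuousLinearMap.add_apply, ContinuousLinearMap.sub_apply,
    ContinuousLinearMap.smul_apply, smul_eq_mul]
  ring
lemma GG_hasFDeriv (N : ℕ) (x : Pt2) :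
    HasFDerivAt (GG N) ((aa N x - AA N x) • Lt + BB N x • Ly) x := by
  have h := HasFDerivAt.fun_sum (fun k (_ : k ∈ Finset.range N) => gk_hasFDeriv k x)
  have he : (GG N) = fun x => ∑ k ∈ Finset.range N, gk k x := rfl
  rw [he]
  refine h.congr_fderiv ?_
  ext v
  simp only [ContinuousLinearMap.add_apply, ContinuousLinearMap.smul_apply,
    ContinuousLinearMap.sum_apply, smul_eq_mul, AA, BB, aa]
  rw [← Finset.sum_sub_distrib, Finset.sum_mul, Finset.sum_mul, ← Finset.sum_add_distrib]
  apply Finset.sum_congr rfl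
  intro k _
  ring
lemma cG_hasFDeriv (N : ℕ) (c : ℝ) (x : Pt2) :
    HasFDerivAt (fun x => c * GG N x) ((c * (aa N x - AA N x)) • Lt + (c * BB N x) • Ly) x := by
  have := (GG_hasFDeriv N x).const_mul c
  refine this.congr_fderiv ?_
  ext v
  simp only [ContinuousLinearMap.add_apply, ContinuousLinearMap.smul_apply, smul_eq_mul,
    ContinuousLinearMap.coe_smul', Pi.smul_apply]
  ring
lemma pd0_cG (N : ℕ) (c : ℝ) (x : Pt2) :
    pd 0 (fun x => c * GG N x) x = c * (aa N x - AA N x) := by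
  rw [pd, (cG_hasFDeriv N c x).fderiv]
  simp [Lt_e0, Ly_e0]
lemma pd1_cG (N : ℕ) (c : ℝ) (x : Pt2) :
    pd 1 (fun x => c * GG N x) x = c * (AA N x + BB N x - aa N x) := by
  rw [pd, (cG_hasFDeriv N c x).fderiv]
  simp only [ContinuousLinearMap.add_apply, ContinuousLinearMap.smul_apply, Lt_e1, Ly_e1,
    smul_eq_mul]
  ring

lemma Hk'_sum_hasDeriv (N : ℕ) (c : ℝ) (t : ℝ) :
    HasDerivAt (fun t => c * ∑ k ∈ Finset.range N, Hk' k t)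
      (c * ∑ k ∈ Finset.range N, deriv dS ((-2*t + -dl k)/dl k) * (-2/dl k) * (-2/dl k)) t := by
  apply HasDerivAt.const_mul
  exact HasDerivAt.fun_sum (fun k _ => Hk'_deriv k t)
lemma caa_hasFDeriv (N : ℕ) (c : ℝ) (x : Pt2) :
    HasFDerivAt (fun x => c * aa N x)
      ((c * ∑ k ∈ Finset.range N, deriv dS ((-2*(tt x) + -dl k)/dl k) * (-2/dl k) * (-2/dl k))
        • Lt) x :=
  comp_t_hasFDeriv (Hk'_sum_hasDeriv N c (tt x))
lemma pd_caa (N : ℕ) (c : ℝ) (x : Pt2) :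
    pd 0 (fun x => c * aa N x) x + pd 1 (fun x => c * aa N x) x = 0 := by
  rw [pd, pd, (caa_hasFDeriv N c x).fderiv]
  simp only [ContinuousLinearMap.smul_apply, Lt_e0, Lt_e1, smul_eq_mul]
  ring
lemma aa_contDiff (N : ℕ) (c : ℝ) : ContDiff ℝ 1 (fun x => c * aa N x) := by
  apply contDiff_const.mul
  apply ContDiff.sum
  intro k _
  exact contDiff_comp_t (Hk'_contDiff k)
lemma GG_contDiff (N : ℕ) (c : ℝ) : ContDiff ℝ 1 (fun x => c * GG N x) := by
  apply contDiff_const.mul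
  apply ContDiff.sum
  intro k _
  apply ContDiff.sub
  · exact (contDiff_comp_t (Hk_contDiff k)).add (contDiff_comp_y (Vk_contDiff k))
  · exact (contDiff_comp_t (Hk_contDiff k)).mul (contDiff_comp_y (Vk_contDiff k))

end JZero


namespace JZero

/-! #### Omega facts -/

lemma omega_meas : MeasurableSet (Omega 1) := by
  have : Omega 1 = (fun x : Pt2 => x 0) ⁻¹' (Ioo 0 1) ∩ (fun x : Pt2 => x 1) ⁻¹' (Ioo 0 1) := rfl
  rw [this]
  exact ((measurable_pi_apply 0) measurableSet_Ioo).inter ((measurable_pi_apply 1) measurableSet_Ioo)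

lemma omega_closure : closure (Omega 1) ⊆ {x : Pt2 | x 0 ∈ Icc 0 1 ∧ x 1 ∈ Icc 0 1} := by
  apply closure_minimal
  · rintro x ⟨h1, h2⟩
    exact ⟨⟨h1.1.le, h1.2.le⟩, ⟨h2.1.le, h2.2.le⟩⟩
  · apply IsClosed.inter
    · exact IsClosed.preimage (continuous_apply 0) isClosed_Icc
    · exact IsClosed.preimage (continuous_apply 1) isClosed_Icc

lemma omega_subset_para : Omega 1 ⊆ {x : Pt2 | x 0 - x 1 ∈ Icc (-1) 1 ∧ x 1 ∈ Icc 0 1} := by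
  rintro x ⟨h1, h2⟩
  constructor
  · constructor <;> [linarith [h1.1, h2.2]; linarith [h1.2, h2.1]]
  · exact ⟨h2.1.le, h2.2.le⟩

lemma omega_vol_fin : volume (Omega 1) < ⊤ := by
  apply lt_of_le_of_lt (measure_mono omega_subset_para)
  rw [paraVol]
  exact ENNReal.mul_lt_top ENNReal.ofReal_lt_top ENNReal.ofReal_lt_top

instance : IsFiniteMeasure (volume.restrict (Omega 1)) := by
  constructor
  rw [Measure.restrict_apply_univ]
  exact omega_vol_fin

/-! #### support conversions -/

lemma pd_zero_outside {L : ℝ} {f : Pt2 → ℝ} (hts : tsupport f ⊆ Omega L) {x : Pt2}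
    (hx : x ∉ Omega L) (j : Fin 2) : pd j f x = 0 := by
  have h0 : fderiv ℝ f x = 0 := by
    by_contra h
    exact hx (hts (support_fderiv_subset ℝ (by simpa [Function.mem_support] using h)))
  rw [pd, h0]
  simp

lemma f_zero_outside {L : ℝ} {f : Pt2 → ℝ} (hts : tsupport f ⊆ Omega L) {x : Pt2}
    (hx : x ∉ Omega L) : f x = 0 := by
  apply image_eq_zero_of_notMem_tsupport
  intro h
  exact hx (hts h)

/-! #### matrix entry computations -/

lemma bb_apply (N : ℕ) (c : ℝ) (x : Pt2) (i : Fin 2) :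
    bb N c x i 0 = c * aa N x ∧ bb N c x i 1 = -(c * aa N x) := by
  fin_cases i <;>
    constructor <;>
    simp [bb, Matrix.smul_apply, smul_eq_mul] <;> ring

lemma DU_apply (N : ℕ) (c : ℝ) (x : Pt2) (i : Fin 2) :
    DU N c x i 0 = c * (aa N x - AA N x) ∧ DU N c x i 1 = c * (AA N x + BB N x - aa N x) := by
  constructor <;> simp [DU]

lemma normSq_eq (N : ℕ) (c : ℝ) (x : Pt2) :
    normSq (symPart (DU N c x - bb N c x)) =
      (c * AA N x)^2 + (c*(AA N x + BB N x))^2 + (c * BB N x)^2/2 := by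
  have e00 : (DU N c x - bb N c x) 0 0 = -(c * AA N x) := by
    rw [Matrix.sub_apply, (DU_apply N c x 0).1, (bb_apply N c x 0).1]
    ring
  have e10 : (DU N c x - bb N c x) 1 0 = -(c * AA N x) := by
    rw [Matrix.sub_apply, (DU_apply N c x 1).1, (bb_apply N c x 1).1]
    ring
  have e01 : (DU N c x - bb N c x) 0 1 = c * (AA N x + BB N x) := by
    rw [Matrix.sub_apply, (DU_apply N c x 0).2, (bb_apply N c x 0).2]
    ring
  have e11 : (DU N c x - bb N c x) 1 1 = c * (AA N x + BB N x) := by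
    rw [Matrix.sub_apply, (DU_apply N c x 1).2, (bb_apply N c x 1).2]
    ring
  rw [normSq]
  rw [Fin.sum_univ_two]
  rw [Fin.sum_univ_two, Fin.sum_univ_two]
  simp only [symPart, Matrix.smul_apply, Matrix.add_apply, Matrix.transpose_apply,
    smul_eq_mul, e00, e01, e10, e11]
  ring

lemma AA_sq (N : ℕ) (x : Pt2) :
    (AA N x)^2 = ∑ k ∈ Finset.range N, (Hk' k (tt x) * Vk k (yy x))^2 := by
  apply sq_sum_of_pairwise
  intro j hj k hk hjk
  have h := Hk'_disj hjk (tt x)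
  calc Hk' j (tt x) * Vk j (yy x) * (Hk' k (tt x) * Vk k (yy x))
      = (Hk' j (tt x) * Hk' k (tt x)) * (Vk j (yy x) * Vk k (yy x)) := by ring
    _ = 0 := by rw [h, zero_mul]

lemma BB_sq (N : ℕ) (x : Pt2) :
    (BB N x)^2 = ∑ k ∈ Finset.range N, (Vk' k (yy x) * (1 - Hk k (tt x)))^2 := by
  apply sq_sum_of_pairwise
  intro j hj k hk hjk
  have h := Vk'_disj hjk (yy x)
  calc Vk' j (yy x) * (1 - Hk j (tt x)) * (Vk' k (yy x) * (1 - Hk k (tt x)))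
      = (Vk' j (yy x) * Vk' k (yy x)) * ((1 - Hk j (tt x)) * (1 - Hk k (tt x))) := by ring
    _ = 0 := by rw [h, zero_mul]

/-! #### continuity of building blocks -/

lemma cont_Hk'_t (k : ℕ) : Continuous (fun x : Pt2 => Hk' k (tt x)) :=
  (Hk'_contDiff k).continuous.comp Lt.continuous
lemma cont_Hk_t (k : ℕ) : Continuous (fun x : Pt2 => Hk k (tt x)) :=
  (Hk_contDiff k).continuous.comp Lt.continuous
lemma cont_Vk_y (k : ℕ) : Continuous (fun x : Pt2 => Vk k (yy x)) :=
  (Vk_contDiff k).continuous.comp Ly.continuous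
lemma cont_Vk'_y (k : ℕ) : Continuous (fun x : Pt2 => Vk' k (yy x)) :=
  (Vk'_contDiff k).continuous.comp Ly.continuous
lemma cont_aa (N : ℕ) : Continuous (aa N) :=
  continuous_finset_sum _ (fun k _ => cont_Hk'_t k)
lemma cont_AA (N : ℕ) : Continuous (AA N) :=
  continuous_finset_sum _ (fun k _ => (cont_Hk'_t k).mul (cont_Vk_y k))
lemma cont_BB (N : ℕ) : Continuous (BB N) :=
  continuous_finset_sum _ (fun k _ => (cont_Vk'_y k).mul (continuous_const.sub (cont_Hk_t k)))

/-! #### TVcurl of the slip field vanishes -/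

lemma TVcurl_bb (N : ℕ) (c : ℝ) : TVcurl 1 (bb N c) = 0 := by
  apply le_antisymm _ zero_le
  apply sSup_le
  rintro t ⟨φ, hφ, _, rfl⟩
  have key : ∀ i : Fin 2,
      ∫ x in Omega 1, (bb N c x i 1 * pd 0 (φ i) x - bb N c x i 0 * pd 1 (φ i) x) = 0 := by
    intro i
    obtain ⟨hf1, hf2, hf3⟩ := hφ i
    have hWc : ContDiff ℝ 1 (fun x => (c * aa N x) * φ i x) := (aa_contDiff N c).mul hf1
    have hWcs : HasCompactSupport (fun x => (c * aa N x) * φ i x) := hf2.mul_left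
    have hpt : ∀ x, bb N c x i 1 * pd 0 (φ i) x - bb N c x i 0 * pd 1 (φ i) x =
        -(pd 0 (fun x => (c * aa N x) * φ i x) x + pd 1 (fun x => (c * aa N x) * φ i x) x) := by
      intro x
      have hda : DifferentiableAt ℝ (fun x => c * aa N x) x :=
        ((aa_contDiff N c).differentiable one_ne_zero).differentiableAt
      have hdf : DifferentiableAt ℝ (φ i) x := (hf1.differentiable one_ne_zero).differentiableAt
      have hm : ∀ j : Fin 2, pd j (fun x => (c * aa N x) * φ i x) x =
          (c * aa N x) * pd j (φ i) x + pd j (fun x => c * aa N x) x * φ i x := by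
        intro j
        have := fderiv_fun_mul (𝕜 := ℝ) hda hdf
        rw [pd, this]
        simp [pd]
        ring
      rw [hm 0, hm 1, (bb_apply N c x i).1, (bb_apply N c x i).2]
      have hz := pd_caa N c x
      linear_combination (φ i x) * hz
    have hconv : ∫ x in Omega 1, (bb N c x i 1 * pd 0 (φ i) x - bb N c x i 0 * pd 1 (φ i) x) =
        ∫ x, (bb N c x i 1 * pd 0 (φ i) x - bb N c x i 0 * pd 1 (φ i) x) := by
      apply setIntegral_eq_integral_of_forall_compl_eq_zero
      intro x hx
      rw [pd_zero_outside hf3 hx 0, pd_zero_outside hf3 hx 1]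
      ring
    rw [hconv, funext hpt]
    have hint0 : Integrable (pd 0 (fun x => (c * aa N x) * φ i x)) :=
      (cont_pd hWc 0).integrable_of_hasCompactSupport (hcs_pd hWcs 0)
    have hint1 : Integrable (pd 1 (fun x => (c * aa N x) * φ i x)) :=
      (cont_pd hWc 1).integrable_of_hasCompactSupport (hcs_pd hWcs 1)
    rw [integral_neg, integral_add hint0 hint1]
    rw [integral_pd_zero hWc hWcs 0, integral_pd_zero hWc hWcs 1]
    ring
  have : ∑ i : Fin 2, ∫ x in Omega 1,
      (bb N c x i 1 * pd 0 (φ i) x - bb N c x i 0 * pd 1 (φ i) x) = 0 := by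
    rw [Fin.sum_univ_two, key 0, key 1, add_zero]
  rw [this]
  simp

end JZero


namespace JZero

/-! #### elastic energy estimate -/

lemma termA_bound (N : ℕ) (c : ℝ) {C : ℝ} (hC1 : 1 ≤ C) (hC : ∀ r, |dS r| ≤ C) (k : ℕ) :
    (∫⁻ x in Omega 1, ENNReal.ofReal (3*c^2*(Hk' k (tt x) * Vk k (yy x))^2)) ≤
      ENNReal.ofReal (3/2 * C^2 * c^2) := by
  have hC0 : (0:ℝ) ≤ C := le_trans zero_le_one hC1
  set d := dl k with hd
  have hdpos : 0 < d := dl_pos k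
  set K : ℝ := 3*c^2*(2*C/d)^2 with hK
  set Sset : Set Pt2 := {x : Pt2 | x 0 - x 1 ∈ Icc (-d) (-d/2) ∧ x 1 ∈ Icc (1 - d/4) 1} with hSset
  have hmeasS : MeasurableSet Sset := by
    apply MeasurableSet.inter
    · exact (((measurable_pi_apply 0).sub (measurable_pi_apply 1))) measurableSet_Icc
    · exact (measurable_pi_apply 1) measurableSet_Icc
  have hpt : ∀ x ∈ Omega 1, ENNReal.ofReal (3*c^2*(Hk' k (tt x) * Vk k (yy x))^2) ≤
      Sset.indicator (fun _ => ENNReal.ofReal K) x := by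
    intro x hx
    by_cases hxS : x ∈ Sset
    · rw [Set.indicator_of_mem hxS]
      apply ENNReal.ofReal_le_ofReal
      have h1 : |Hk' k (tt x) * Vk k (yy x)| ≤ 2*C/d := by
        rw [abs_mul]
        have hv := Vk_mem k (yy x)
        have hv1 : |Vk k (yy x)| ≤ 1 := by
          rw [abs_of_nonneg hv.1]
          exact hv.2
        calc |Hk' k (tt x)| * |Vk k (yy x)| ≤ (2*C/d) * 1 := by
              apply mul_le_mul (Hk'_bound hC k (tt x)) hv1 (abs_nonneg _)
              apply div_nonneg (by linarith) hdpos.le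
          _ = 2*C/d := by ring
      have h2 : (Hk' k (tt x) * Vk k (yy x))^2 ≤ (2*C/d)^2 := by
        rw [← sq_abs]
        apply pow_le_pow_left₀ (abs_nonneg _) h1
      rw [hK]
      nlinarith [sq_nonneg c]
    · rw [Set.indicator_of_notMem hxS]
      have hzero : Hk' k (tt x) * Vk k (yy x) = 0 := by
        rw [hSset] at hxS
        simp only [mem_setOf_eq, not_and_or] at hxS
        rcases hxS with hxS | hxS
        · have : Hk' k (tt x) = 0 := by
            by_contra hne
            obtain ⟨ha, hb⟩ := Hk'_supp hne
            exact hxS ⟨by simpa [tt] using ha, by simpa [tt, neg_div] using hb⟩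
          rw [this, zero_mul]
        · have : Vk k (yy x) = 0 := by
            rcases lt_or_ge (x 1) (1 - d/4) with h | h
            · exact Vk_zero (by rw [yy]; linarith)
            · exact absurd (⟨h, hx.2.2.le⟩ : x 1 ∈ Icc (1 - d/4) 1) hxS
          rw [this, mul_zero]
      rw [hzero]
      simp
  calc (∫⁻ x in Omega 1, ENNReal.ofReal (3*c^2*(Hk' k (tt x) * Vk k (yy x))^2))
      ≤ ∫⁻ x in Omega 1, Sset.indicator (fun _ => ENNReal.ofReal K) x := by
        apply setLIntegral_mono (by exact (measurable_const.indicator hmeasS)) hpt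
    _ ≤ ∫⁻ x, Sset.indicator (fun _ => ENNReal.ofReal K) x := by
        apply lintegral_mono' Measure.restrict_le_self le_rfl
    _ = ENNReal.ofReal K * volume Sset := by
        rw [lintegral_indicator hmeasS, setLIntegral_const]
    _ ≤ ENNReal.ofReal (3/2 * C^2 * c^2) := by
        rw [hSset, paraVol]
        rw [← ENNReal.ofReal_mul (by nlinarith [hdpos] : (0:ℝ) ≤ -d/2 - -d)]
        rw [← ENNReal.ofReal_mul (by rw [hK]; positivity)]
        apply ENNReal.ofReal_le_ofReal
        have hdne : d ≠ 0 := hdpos.ne'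
        have he : K * ((-d/2 - -d) * (1 - (1 - d/4))) = 3/2 * C^2 * c^2 := by
          rw [hK]
          field_simp
          ring
        rw [he]

lemma termB_bound (N : ℕ) (c : ℝ) {C : ℝ} (hC1 : 1 ≤ C) (hC : ∀ r, |dS r| ≤ C) (k : ℕ) :
    (∫⁻ x in Omega 1, ENNReal.ofReal (3*c^2*(Vk' k (yy x) * (1 - Hk k (tt x)))^2)) ≤
      ENNReal.ofReal (30 * C^2 * c^2) := by
  have hC0 : (0:ℝ) ≤ C := le_trans zero_le_one hC1
  set d := dl k with hd
  have hdpos : 0 < d := dl_pos k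
  set K : ℝ := 3*c^2*(8*C/d)^2 with hK
  set Qset : Set Pt2 := {x : Pt2 | x 0 - x 1 ∈ Icc (-d) (d/4) ∧ x 1 ∈ Icc (1 - d/4) (1 - d/8)}
    with hQset
  have hmeasQ : MeasurableSet Qset := by
    apply MeasurableSet.inter
    · exact (((measurable_pi_apply 0).sub (measurable_pi_apply 1))) measurableSet_Icc
    · exact (measurable_pi_apply 1) measurableSet_Icc
  have hpt : ∀ x ∈ Omega 1, ENNReal.ofReal (3*c^2*(Vk' k (yy x) * (1 - Hk k (tt x)))^2) ≤
      Qset.indicator (fun _ => ENNReal.ofReal K) x := by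
    intro x hx
    by_cases hV : Vk' k (yy x) = 0
    · rw [hV, zero_mul]
      simp
    by_cases hH : Hk k (tt x) = 1
    · rw [hH]
      simp
    have hxQ : x ∈ Qset := by
      obtain ⟨hy1, hy2⟩ := Vk'_supp hV
      have ht1 : -d < tt x := by
        by_contra hcon
        push_neg at hcon
        exact hH (Hk_one hcon)
      have ht2 : tt x ≤ d/4 := by
        have hx0 : x 0 < 1 := hx.1.2
        have h5 : tt x < 1 - yy x := by rw [tt, yy]; linarith
        have hyx : yy x = x 1 := rfl
        linarith [h5, hy1, hd, hyx]
      exact ⟨⟨ht1.le, ht2⟩, ⟨hy1, hy2⟩⟩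
    rw [Set.indicator_of_mem hxQ]
    apply ENNReal.ofReal_le_ofReal
    have h1 : |Vk' k (yy x) * (1 - Hk k (tt x))| ≤ 8*C/d := by
      rw [abs_mul]
      have hh := Hk_mem k (tt x)
      have hv1 : |1 - Hk k (tt x)| ≤ 1 := by
        rw [abs_of_nonneg (by linarith [hh.2])]
        linarith [hh.1]
      calc |Vk' k (yy x)| * |1 - Hk k (tt x)| ≤ (8*C/d) * 1 := by
            apply mul_le_mul (Vk'_bound hC k (yy x)) hv1 (abs_nonneg _)
            apply div_nonneg (by linarith) hdpos.le
        _ = 8*C/d := by ring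
    have h2 : (Vk' k (yy x) * (1 - Hk k (tt x)))^2 ≤ (8*C/d)^2 := by
      rw [← sq_abs]
      apply pow_le_pow_left₀ (abs_nonneg _) h1
    rw [hK]
    nlinarith [sq_nonneg c]
  calc (∫⁻ x in Omega 1, ENNReal.ofReal (3*c^2*(Vk' k (yy x) * (1 - Hk k (tt x)))^2))
      ≤ ∫⁻ x in Omega 1, Qset.indicator (fun _ => ENNReal.ofReal K) x := by
        apply setLIntegral_mono (by exact (measurable_const.indicator hmeasQ)) hpt
    _ ≤ ∫⁻ x, Qset.indicator (fun _ => ENNReal.ofReal K) x := by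
        apply lintegral_mono' Measure.restrict_le_self le_rfl
    _ = ENNReal.ofReal K * volume Qset := by
        rw [lintegral_indicator hmeasQ, setLIntegral_const]
    _ ≤ ENNReal.ofReal (30 * C^2 * c^2) := by
        rw [hQset, paraVol]
        rw [← ENNReal.ofReal_mul (by nlinarith [hdpos] : (0:ℝ) ≤ d/4 - -d)]
        rw [← ENNReal.ofReal_mul (by rw [hK]; positivity)]
        apply ENNReal.ofReal_le_ofReal
        have hdne : d ≠ 0 := hdpos.ne'
        have he : K * ((d/4 - -d) * (1 - d/8 - (1 - d/4))) = 30 * C^2 * c^2 := by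
          rw [hK]
          field_simp
          ring
        rw [he]

lemma elastic_bound (N : ℕ) (c : ℝ) {C : ℝ} (hC1 : 1 ≤ C) (hC : ∀ r, |dS r| ≤ C) :
    (∫⁻ x in Omega 1, ENNReal.ofReal (normSq (symPart (DU N c x - bb N c x)))) ≤
      ENNReal.ofReal ((32 * C^2 * c^2) * N) := by
  have hC0 : (0:ℝ) ≤ C := le_trans zero_le_one hC1
  set FA : ℕ → Pt2 → ℝ≥0∞ :=
    fun k x => ENNReal.ofReal (3*c^2*(Hk' k (tt x) * Vk k (yy x))^2) with hFA
  set FB : ℕ → Pt2 → ℝ≥0∞ :=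
    fun k x => ENNReal.ofReal (3*c^2*(Vk' k (yy x) * (1 - Hk k (tt x)))^2) with hFB
  have hptwise : ∀ x : Pt2, ENNReal.ofReal (normSq (symPart (DU N c x - bb N c x))) ≤
      ∑ k ∈ Finset.range N, (FA k x + FB k x) := by
    intro x
    have hreal : normSq (symPart (DU N c x - bb N c x)) ≤
        ∑ k ∈ Finset.range N,
          (3*c^2*(Hk' k (tt x) * Vk k (yy x))^2 + 3*c^2*(Vk' k (yy x) * (1 - Hk k (tt x)))^2) := by
      rw [normSq_eq]
      have h1 : (c * AA N x)^2 + (c*(AA N x + BB N x))^2 + (c * BB N x)^2/2 ≤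
          3*c^2*((AA N x)^2) + 3*c^2*((BB N x)^2) := by
        nlinarith [sq_nonneg (AA N x - BB N x), sq_nonneg (AA N x + BB N x), sq_nonneg c,
          sq_nonneg (c * (AA N x - BB N x)), sq_nonneg (c*AA N x), sq_nonneg (c*BB N x)]
      apply le_trans h1
      rw [AA_sq, BB_sq, Finset.mul_sum, Finset.mul_sum, ← Finset.sum_add_distrib]
    calc ENNReal.ofReal (normSq (symPart (DU N c x - bb N c x)))
        ≤ ENNReal.ofReal (∑ k ∈ Finset.range N,
            (3*c^2*(Hk' k (tt x) * Vk k (yy x))^2 +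
              3*c^2*(Vk' k (yy x) * (1 - Hk k (tt x)))^2)) := ENNReal.ofReal_le_ofReal hreal
      _ = ∑ k ∈ Finset.range N, ENNReal.ofReal
            (3*c^2*(Hk' k (tt x) * Vk k (yy x))^2 +
              3*c^2*(Vk' k (yy x) * (1 - Hk k (tt x)))^2) := by
          apply ENNReal.ofReal_sum_of_nonneg
          intro k _
          positivity
      _ = ∑ k ∈ Finset.range N, (FA k x + FB k x) := by
          apply Finset.sum_congr rfl
          intro k _
          rw [ENNReal.ofReal_add (by positivity) (by positivity)]
  have hmeasFA : ∀ k, Measurable (fun x => FA k x) := by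
    intro k
    apply Measurable.ennreal_ofReal
    exact (continuous_const.mul (((cont_Hk'_t k).mul (cont_Vk_y k)).pow 2)).measurable
  have hmeasFB : ∀ k, Measurable (fun x => FB k x) := by
    intro k
    apply Measurable.ennreal_ofReal
    exact (continuous_const.mul
      (((cont_Vk'_y k).mul (continuous_const.sub (cont_Hk_t k))).pow 2)).measurable
  calc (∫⁻ x in Omega 1, ENNReal.ofReal (normSq (symPart (DU N c x - bb N c x))))
      ≤ ∫⁻ x in Omega 1, ∑ k ∈ Finset.range N, (FA k x + FB k x) :=
        lintegral_mono hptwise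
    _ = ∑ k ∈ Finset.range N, ∫⁻ x in Omega 1, (FA k x + FB k x) := by
        apply lintegral_finset_sum'
        intro k _
        exact ((hmeasFA k).add (hmeasFB k)).aemeasurable
    _ = ∑ k ∈ Finset.range N,
          ((∫⁻ x in Omega 1, FA k x) + (∫⁻ x in Omega 1, FB k x)) := by
        apply Finset.sum_congr rfl
        intro k _
        exact lintegral_add_left (hmeasFA k) _
    _ ≤ ∑ k ∈ Finset.range N,
          (ENNReal.ofReal (3/2 * C^2 * c^2) + ENNReal.ofReal (30 * C^2 * c^2)) := by
        apply Finset.sum_le_sum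
        intro k _
        exact add_le_add (termA_bound N c hC1 hC k) (termB_bound N c hC1 hC k)
    _ ≤ ENNReal.ofReal ((32 * C^2 * c^2) * N) := by
        rw [Finset.sum_const, Finset.card_range, nsmul_eq_mul]
        rw [← ENNReal.ofReal_add (by positivity) (by positivity)]
        rw [← ENNReal.ofReal_natCast N, ← ENNReal.ofReal_mul (by positivity)]
        apply ENNReal.ofReal_le_ofReal
        have hN0 : (0:ℝ) ≤ (N:ℝ) := Nat.cast_nonneg N
        nlinarith [sq_nonneg C, sq_nonneg c, mul_nonneg (mul_nonneg hN0 (sq_nonneg C)) (sq_nonneg c)]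

end JZero


namespace JZero

/-! #### admissibility pieces -/

lemma uu_continuous (N : ℕ) (c : ℝ) : Continuous (uu N c) :=
  continuous_pi fun _ => (GG_contDiff N c).continuous

lemma weakgrad (N : ℕ) (c : ℝ) : IsWeakGradient 1 (uu N c) (DU N c) := by
  rintro f ⟨hf1, hf2, hf3⟩ i j
  have hjcase : j = 0 ∨ j = 1 := by
    rcases j with ⟨v, hv⟩
    interval_cases v
    exacts [Or.inl rfl, Or.inr rfl]
  have huu : ∀ x : Pt2, uu N c x i = c * GG N x := fun _ => rfl
  have hL : ∫ x in Omega 1, uu N c x i * pd j f x = ∫ x, uu N c x i * pd j f x := by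
    apply setIntegral_eq_integral_of_forall_compl_eq_zero
    intro x hx
    rw [pd_zero_outside hf3 hx j, mul_zero]
  have hR : ∫ x in Omega 1, DU N c x i j * f x = ∫ x, DU N c x i j * f x := by
    apply setIntegral_eq_integral_of_forall_compl_eq_zero
    intro x hx
    rw [f_zero_outside hf3 hx, mul_zero]
  rw [hL, hR]
  simp only [huu]
  rw [ibp (GG_contDiff N c) hf1 hf2 j]
  have hcong : (fun x => pd j (fun x => c * GG N x) x * f x) =
      fun x => DU N c x i j * f x := by
    funext x
    rcases hjcase with rfl | rfl
    · rw [pd0_cG, (DU_apply N c x i).1]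
    · rw [pd1_cG, (DU_apply N c x i).2]
  rw [hcong]

lemma DU_memLp (N : ℕ) (c : ℝ) (i j : Fin 2) :
    MemLp (fun x => DU N c x i j) 2 (volume.restrict (Omega 1)) := by
  obtain ⟨C, hC1, hC⟩ := dS_bound
  have hC0 : (0:ℝ) ≤ C := le_trans zero_le_one hC1
  set MA : ℝ := ∑ k ∈ Finset.range N, 2*C/dl k with hMA
  set MB : ℝ := ∑ k ∈ Finset.range N, 8*C/dl k with hMB
  have hMA0 : 0 ≤ MA := Finset.sum_nonneg fun k _ => div_nonneg (by linarith) (dl_pos k).le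
  have hMB0 : 0 ≤ MB := Finset.sum_nonneg fun k _ => div_nonneg (by linarith) (dl_pos k).le
  have haa : ∀ x : Pt2, |aa N x| ≤ MA := by
    intro x
    refine le_trans (Finset.abs_sum_le_sum_abs _ _) (Finset.sum_le_sum fun k _ => ?_)
    exact Hk'_bound hC k (tt x)
  have hAA : ∀ x : Pt2, |AA N x| ≤ MA := by
    intro x
    refine le_trans (Finset.abs_sum_le_sum_abs _ _) (Finset.sum_le_sum fun k _ => ?_)
    rw [abs_mul]
    have hv := Vk_mem k (yy x)
    have hv1 : |Vk k (yy x)| ≤ 1 := by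
      rw [abs_of_nonneg hv.1]
      exact hv.2
    calc |Hk' k (tt x)| * |Vk k (yy x)| ≤ (2*C/dl k) * 1 :=
          mul_le_mul (Hk'_bound hC k (tt x)) hv1 (abs_nonneg _)
            (div_nonneg (by linarith) (dl_pos k).le)
      _ = 2*C/dl k := by ring
  have hBB : ∀ x : Pt2, |BB N x| ≤ MB := by
    intro x
    refine le_trans (Finset.abs_sum_le_sum_abs _ _) (Finset.sum_le_sum fun k _ => ?_)
    rw [abs_mul]
    have hh := Hk_mem k (tt x)
    have hh1 : |1 - Hk k (tt x)| ≤ 1 := by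
      rw [abs_of_nonneg (by linarith [hh.2])]
      linarith [hh.1]
    calc |Vk' k (yy x)| * |1 - Hk k (tt x)| ≤ (8*C/dl k) * 1 :=
          mul_le_mul (Vk'_bound hC k (yy x)) hh1 (abs_nonneg _)
            (div_nonneg (by linarith) (dl_pos k).le)
      _ = 8*C/dl k := by ring
  have hjcase : j = 0 ∨ j = 1 := by
    rcases j with ⟨v, hv⟩
    interval_cases v
    exacts [Or.inl rfl, Or.inr rfl]
  have hbound : ∀ x : Pt2, |DU N c x i j| ≤ |c| * (2*MA + MB) := by
    intro x
    rcases hjcase with rfl | rfl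
    · rw [(DU_apply N c x i).1, abs_mul]
      apply mul_le_mul_of_nonneg_left _ (abs_nonneg c)
      calc |aa N x - AA N x| ≤ |aa N x| + |AA N x| := abs_sub _ _
        _ ≤ 2*MA + MB := by linarith [haa x, hAA x]
    · rw [(DU_apply N c x i).2, abs_mul]
      apply mul_le_mul_of_nonneg_left _ (abs_nonneg c)
      calc |AA N x + BB N x - aa N x| ≤ |AA N x| + |BB N x| + |aa N x| := by
            have h1 := abs_add_le (AA N x + BB N x) (-(aa N x))
            have h2 := abs_add_le (AA N x) (BB N x)
            rw [abs_neg] at h1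
            calc |AA N x + BB N x - aa N x| = |(AA N x + BB N x) + -(aa N x)| := by ring_nf
              _ ≤ |AA N x + BB N x| + |aa N x| := h1
              _ ≤ |AA N x| + |BB N x| + |aa N x| := by linarith
        _ ≤ 2*MA + MB := by linarith [haa x, hAA x, hBB x]
  have hcont : Continuous (fun x => DU N c x i j) := by
    have he : (fun x => DU N c x i j) =
        (fun x => if j = 0 then c * (aa N x - AA N x)
          else c * (AA N x + BB N x - aa N x)) := rfl
    rw [he]
    rcases hjcase with rfl | rfl
    · have h2 : (fun x : Pt2 => if (0 : Fin 2) = 0 then c * (aa N x - AA N x)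
          else c * (AA N x + BB N x - aa N x)) = fun x => c * (aa N x - AA N x) := by
        funext x
        rw [if_pos rfl]
      rw [h2]
      exact continuous_const.mul ((cont_aa N).sub (cont_AA N))
    · have h2 : (fun x : Pt2 => if (1 : Fin 2) = 0 then c * (aa N x - AA N x)
          else c * (AA N x + BB N x - aa N x)) =
          fun x => c * (AA N x + BB N x - aa N x) := by
        funext x
        rw [if_neg (by decide)]
      rw [h2]
      exact continuous_const.mul (((cont_AA N).add (cont_BB N)).sub (cont_aa N))
  apply MemLp.of_bound hcont.aestronglyMeasurable (|c| * (2*MA + MB))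
  apply ae_of_all
  intro x
  rw [Real.norm_eq_abs]
  exact hbound x

lemma bb_locInt (N : ℕ) (c : ℝ) (i j : Fin 2) :
    LocallyIntegrableOn (fun x => bb N c x i j) (Omega 1) := by
  have hcont : Continuous (fun x => bb N c x i j) := by
    have he : (fun x => bb N c x i j) =
        (fun x => (c * aa N x) * (!![(1:ℝ), -1; 1, -1] i j)) := by
      funext x
      rw [bb, Matrix.smul_apply, smul_eq_mul]
    rw [he]
    exact (continuous_const.mul (cont_aa N)).mul continuous_const
  exact hcont.locallyIntegrable.locallyIntegrableOn _

lemma bb_singleSlip (N : ℕ) (c : ℝ) : SingleSlip 1 (bb N c) :=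
  ae_of_all _ fun x => ⟨c * aa N x, Or.inl rfl⟩

lemma bc_holds (N : ℕ) (hN : 0 < N) (γ : ℝ) :
    BCv 1 γ ![1, 1] (uu N (γ / N)) := by
  constructor
  · intro x hx hx1
    obtain ⟨hx0, _⟩ := omega_closure hx
    have hg : ∀ k ∈ Finset.range N, gk k x = 0 := by
      intro k _
      have hH : Hk k (tt x) = 0 := by
        apply Hk_zero
        have : tt x = x 0 := by rw [tt, hx1, sub_zero]
        rw [this]
        linarith [hx0.1, dl_pos k]
      have hV : Vk k (yy x) = 0 := by
        apply Vk_zero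
        have : yy x = 0 := hx1
        rw [this]
        linarith [dl_le k, dl_pos k]
      rw [gk, hH, hV]
      ring
    have hGG : GG N x = 0 := by
      rw [GG, Finset.sum_congr rfl hg, Finset.sum_const, smul_zero]
    funext i
    show (γ / N) * GG N x = 0
    rw [hGG, mul_zero]
  · intro x hx hx1
    have hg : ∀ k ∈ Finset.range N, gk k x = 1 := by
      intro k _
      have hV : Vk k (yy x) = 1 := by
        apply Vk_one
        have : yy x = 1 := hx1
        rw [this]
        linarith [dl_pos k]
      rw [gk, hV]
      ring
    have hGG : GG N x = N := by
      rw [GG, Finset.sum_congr rfl hg, Finset.sum_const, Finset.card_range, nsmul_eq_mul, mul_one]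
    have hNne : (N:ℝ) ≠ 0 := by
      exact_mod_cast hN.ne'
    have hval : (γ / N) * GG N x = γ := by
      rw [hGG]
      field_simp
    funext i
    show (γ / N) * GG N x = (γ • ![1, 1]) i
    rw [hval]
    fin_cases i <;> simp

lemma energy_of_bb (N : ℕ) (c σ : ℝ) :
    Energy 1 σ (DU N c) (bb N c) =
      ∫⁻ x in Omega 1, ENNReal.ofReal (normSq (symPart (DU N c x - bb N c x))) := by
  rw [Energy, TVcurl_bb, mul_zero, add_zero]

lemma admissible (N : ℕ) (c : ℝ) : IsAdmissible 1 (uu N c) (DU N c) (bb N c) :=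
  ⟨(uu_continuous N c).continuousOn, weakgrad N c, DU_memLp N c, bb_locInt N c,
    bb_singleSlip N c⟩

lemma construction (σ γ ε : ℝ) (hγ : 0 < γ) (hε : 0 < ε) :
    ∃ u Du β, IsAdmissible 1 u Du β ∧ BCv 1 γ ![1, 1] u ∧ TVcurl 1 β ≠ ⊤ ∧
      Energy 1 σ Du β < ENNReal.ofReal ε := by
  obtain ⟨C, hC1, hC⟩ := dS_bound
  set N : ℕ := ⌈32*C^2*γ^2/ε⌉₊ + 1 with hN
  have hNpos : 0 < N := Nat.succ_pos _
  have hNR : (0:ℝ) < (N:ℝ) := by exact_mod_cast hNpos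
  set c : ℝ := γ / N with hc
  have hlt : 32*C^2*γ^2/ε < (N:ℝ) := by
    have h1 : (32*C^2*γ^2/ε) ≤ ((⌈32*C^2*γ^2/ε⌉₊ : ℕ) : ℝ) := Nat.le_ceil _
    have h2 : ((⌈32*C^2*γ^2/ε⌉₊ : ℕ) : ℝ) < ((N:ℕ) : ℝ) := by
      exact_mod_cast Nat.lt_succ_self _
    linarith
  have hfinal : (32*C^2*c^2)*(N:ℝ) < ε := by
    have hc2 : (32*C^2*c^2)*(N:ℝ) = 32*C^2*γ^2/(N:ℝ) := by
      rw [hc]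
      field_simp
    rw [hc2, div_lt_iff₀ hNR]
    rw [div_lt_iff₀ hε] at hlt
    nlinarith [hlt]
  refine ⟨uu N c, DU N c, bb N c, admissible N c, bc_holds N hNpos γ, ?_, ?_⟩
  · rw [TVcurl_bb]
    exact ENNReal.zero_ne_top
  · rw [energy_of_bb]
    apply lt_of_le_of_lt (elastic_bound N c hC1 hC)
    exact (ENNReal.ofReal_lt_ofReal_iff hε).mpr hfinal

end JZero

/-- Under BC1, at the critical aspect ratio L = 1, J_1 = 0: for every
ε > 0 there is an admissible pair satisfying BC1 on Ω_1 with energy < ε. -/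
theorem J_one_eq_zero_BC1 (σ γ : ℝ) (hσ : 0 < σ) (hγ : 0 < γ) :
    J 1 σ γ ![1, 1] = 0 ∧
    ∀ ε : ℝ, 0 < ε → ∃ u Du β, IsAdmissible 1 u Du β ∧ BCv 1 γ ![1, 1] u ∧
      Energy 1 σ Du β < ENNReal.ofReal ε := by
  have key : ∀ ε : ℝ, 0 < ε → ∃ u Du β, IsAdmissible 1 u Du β ∧ BCv 1 γ ![1, 1] u ∧
      TVcurl 1 β ≠ ⊤ ∧ Energy 1 σ Du β < ENNReal.ofReal ε :=
    fun ε hε => JZero.construction σ γ ε hγ hε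
  have hJle : ∀ ε : ℝ, 0 < ε → J 1 σ γ ![1, 1] ≤ ENNReal.ofReal ε := by
    intro ε hε
    obtain ⟨u, Du, β, hadm, hbc, htv, hen⟩ := key ε hε
    rw [J]
    refine le_trans (sInf_le ?_) hen.le
    exact ⟨u, Du, β, hadm, hbc, htv, rfl⟩
  constructor
  · by_contra hne
    have hpos : 0 < J 1 σ γ ![1, 1] := pos_iff_ne_zero.mpr hne
    have hfin : J 1 σ γ ![1, 1] < ⊤ :=
      lt_of_le_of_lt (hJle 1 one_pos) ENNReal.ofReal_lt_top
    have htb : 0 < (J 1 σ γ ![1, 1]).toReal := ENNReal.toReal_pos hne hfin.ne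
    have hcontr := hJle ((J 1 σ γ ![1, 1]).toReal / 2) (by linarith)
    have hlt2 : ENNReal.ofReal ((J 1 σ γ ![1, 1]).toReal / 2) < J 1 σ γ ![1, 1] := by
      calc ENNReal.ofReal ((J 1 σ γ ![1, 1]).toReal / 2)
          < ENNReal.ofReal ((J 1 σ γ ![1, 1]).toReal) := by
            apply (ENNReal.ofReal_lt_ofReal_iff htb).mpr
            linarith
        _ = J 1 σ γ ![1, 1] := ENNReal.ofReal_toReal hfin.ne
    exact absurd hcontr (not_le.mpr hlt2)
  · intro ε hε
    obtain ⟨u, Du, β, hadm, hbc, _, hen⟩ := key ε hε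
    exact ⟨u, Du, β, hadm, hbc, hen⟩

end
end

section
/- For α∈(0,1], the function f_α(x)=1−x^α lies in H^{1/2}(0,1); moreover the Gagliardo seminorm Q(α)=∫₀¹∫₀¹ (x^α−y^α)²/(x−y)² dx dy is finite, is nondecreasing in α on (0,1], and tends to 0 as α→0⁺, and likewise ‖f_α‖_{L²(0,1)}→0 as α→0⁺; hence ‖f_α‖_{H^{1/2}(0,1)}→0 as α→0⁺. -/
open MeasureTheory Set Filter Topology
open scoped ENNReal NNReal
open Real intervalIntegral

noncomputable section

lemma expsub (A B : ℝ) : Real.exp A - Real.exp B = 2 * Real.exp ((A+B)/2) * Real.sinh ((A-B)/2) := by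
  have h1 : (A+B)/2 + (A-B)/2 = A := by ring
  have h2 : (A+B)/2 + (-((A-B)/2)) = B := by ring
  rw [Real.sinh_eq,
    show 2 * Real.exp ((A+B)/2) * ((Real.exp ((A-B)/2) - Real.exp (-((A-B)/2)))/2)
      = Real.exp ((A+B)/2) * Real.exp ((A-B)/2)
        - Real.exp ((A+B)/2) * Real.exp (-((A-B)/2)) by ring,
    ← Real.exp_add, ← Real.exp_add, h1, h2]

lemma sinh_key {γ c : ℝ} (hγ : 1 ≤ γ) (hc : 0 ≤ c) : γ * Real.sinh c ≤ Real.sinh (γ * c) := by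
  set f : ℝ → ℝ := fun y => Real.sinh (γ * y) - γ * Real.sinh y with hf
  have hd : ∀ x : ℝ, HasDerivAt f (γ * Real.cosh (γ * x) - γ * Real.cosh x) x := by
    intro x
    have h1 : HasDerivAt (fun y : ℝ => γ * y) γ x := by
      simpa using (hasDerivAt_id x).const_mul γ
    have h2 : HasDerivAt (fun y : ℝ => Real.sinh (γ * y)) (Real.cosh (γ * x) * γ) x :=
      (Real.hasDerivAt_sinh (γ * x)).comp x h1
    have h3 : HasDerivAt (fun y : ℝ => γ * Real.sinh y) (γ * Real.cosh x) x :=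
      (Real.hasDerivAt_sinh x).const_mul γ
    have h4 := h2.sub h3
    simp [mul_comm] at h4
    exact h4
  have hmono : MonotoneOn f (Set.Ici (0:ℝ)) := by
    apply monotoneOn_of_deriv_nonneg (convex_Ici 0)
    · exact (Continuous.continuousOn (by fun_prop))
    · intro x hx
      exact (hd x).differentiableAt.differentiableWithinAt
    · intro x hx
      rw [(hd x).deriv]
      have hx0 : 0 ≤ x := le_of_lt (by simpa using hx)
      have : Real.cosh x ≤ Real.cosh (γ * x) := by
        rw [Real.cosh_le_cosh]
        rw [abs_of_nonneg hx0, abs_of_nonneg (by positivity)]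
        nlinarith
      nlinarith [this]
  have h0 : f 0 ≤ f c := hmono (Set.mem_Ici.2 le_rfl) (Set.mem_Ici.2 hc) hc
  simp only [hf, mul_zero, Real.sinh_zero, sub_zero, mul_zero, sub_self] at h0 ⊢
  linarith [h0]

lemma exp_neg_quad {u : ℝ} (hu : 0 ≤ u) : Real.exp (-u) ≤ 1 - u + u^2/2 := by
  set f : ℝ → ℝ := fun v => 1 - v + v^2/2 - Real.exp (-v) with hf
  have hd : ∀ x : ℝ, HasDerivAt f (-1 + x + Real.exp (-x)) x := by
    intro x
    have h1 : HasDerivAt (fun v : ℝ => Real.exp (-v)) (-Real.exp (-x)) x := by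
      have h := (Real.hasDerivAt_exp (-x)).comp x (hasDerivAt_neg x)
      simp at h
      exact h
    have h2 : HasDerivAt (fun v : ℝ => 1 - v + v^2/2) (-1 + x) x := by
      have : HasDerivAt (fun v : ℝ => 1 - v + v^2/2) (0 - 1 + (2*x^1)/2) x := by
        exact (((hasDerivAt_const x (1:ℝ)).sub (hasDerivAt_id x)).add
          (((hasDerivAt_pow 2 x)).div_const 2))
      simpa using this
    have h := h2.sub h1
    simp at h
    exact h
  have hmono : MonotoneOn f (Set.Ici (0:ℝ)) := by
    apply monotoneOn_of_deriv_nonneg (convex_Ici 0)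
    · exact (Continuous.continuousOn (by fun_prop))
    · intro x hx; exact (hd x).differentiableAt.differentiableWithinAt
    · intro x hx
      rw [(hd x).deriv]
      have hx0 : 0 ≤ x := le_of_lt (by simpa using hx)
      nlinarith [Real.add_one_le_exp (-x)]
  have h0 : f 0 ≤ f u := hmono (Set.mem_Ici.2 le_rfl) (Set.mem_Ici.2 hu) hu
  simp only [hf] at h0
  norm_num at h0
  linarith

lemma mvt_bound {α x y : ℝ} (hα : 0 < α) (hα1 : α ≤ 1) (hy : 0 < y) (hxy : y ≤ x) :
    x ^ α - y ^ α ≤ α * y ^ (α - 1) * (x - y) := by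
  have hx : 0 < x := lt_of_lt_of_le hy hxy
  have hb := Real.geom_mean_le_arith_mean2_weighted (le_of_lt hα) (by linarith : (0:ℝ) ≤ 1 - α)
    (le_of_lt (div_pos hx hy)) zero_le_one (by ring)
  rw [Real.one_rpow, mul_one, Real.div_rpow hx.le hy.le] at hb
  -- hb : x^α / y^α ≤ α * (x/y) + (1-α)
  have hyα : (0:ℝ) < y ^ α := Real.rpow_pos_of_pos hy α
  have h2 : x ^ α ≤ (α * (x/y) + (1-α) * 1) * y ^ α := by
    rw [← div_le_iff₀ hyα]; exact hb
  have h3 : y ^ (α - 1) * y = y ^ α := by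
    rw [Real.rpow_sub_one hy.ne']; field_simp
  have h5 : x / y * y ^ α = x * y ^ (α-1) := by
    rw [← h3]; field_simp
  have h2' : x ^ α ≤ α * (x * y ^ (α-1)) + (1-α) * y ^ α := by
    calc x ^ α ≤ (α * (x/y) + (1-α) * 1) * y ^ α := h2
      _ = α * (x/y * y ^ α) + (1-α) * y ^ α := by ring
      _ = α * (x * y ^ (α-1)) + (1-α) * y ^ α := by rw [h5]
  have h6 : α * (y ^ (α-1) * y) = α * y ^ α := by rw [h3]
  nlinarith [h2', h6]

lemma key_ineq {γ s t : ℝ} (hγ : 1 ≤ γ) (ht : 0 < t) (hts : t < s) :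
    γ * (s*t) ^ ((γ-1)/2) * (s - t) ≤ s ^ γ - t ^ γ := by
  have hs : 0 < s := lt_trans ht hts
  set p := Real.log s with hp
  set q := Real.log t with hq
  have hqp : q < p := Real.log_lt_log ht hts
  set c := (p - q)/2 with hc
  have hc0 : 0 < c := by rw [hc]; linarith
  have es : s = Real.exp p := (Real.exp_log hs).symm
  have et : t = Real.exp q := (Real.exp_log ht).symm
  have e1 : s ^ γ - t ^ γ = 2 * Real.exp (γ*(p+q)/2) * Real.sinh (γ*c) := by
    rw [Real.rpow_def_of_pos hs, Real.rpow_def_of_pos ht, ← hp, ← hq, expsub]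
    rw [show (p*γ + q*γ)/2 = γ*(p+q)/2 by ring, show (p*γ - q*γ)/2 = γ*c by rw [hc]; ring]
  have e2 : s - t = 2 * Real.exp ((p+q)/2) * Real.sinh c := by
    rw [es, et, expsub]
  have e3 : (s*t) ^ ((γ-1)/2) = Real.exp ((γ-1)*(p+q)/2) := by
    rw [Real.rpow_def_of_pos (mul_pos hs ht), Real.log_mul hs.ne' ht.ne', ← hp, ← hq]
    ring_nf
  have e4 : Real.exp ((γ-1)*(p+q)/2) * Real.exp ((p+q)/2) = Real.exp (γ*(p+q)/2) := by
    rw [← Real.exp_add]; ring_nf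
  have hk := sinh_key hγ hc0.le
  calc γ * (s*t) ^ ((γ-1)/2) * (s - t)
      = 2 * (Real.exp ((γ-1)*(p+q)/2) * Real.exp ((p+q)/2)) * (γ * Real.sinh c) := by
        rw [e3, e2]; ring
    _ = 2 * Real.exp (γ*(p+q)/2) * (γ * Real.sinh c) := by rw [e4]
    _ ≤ 2 * Real.exp (γ*(p+q)/2) * Real.sinh (γ*c) := by
        apply mul_le_mul_of_nonneg_left hk (by positivity)
    _ = s ^ γ - t ^ γ := e1.symm


lemma lintegral_image1d {s : Set ℝ} {f f' : ℝ → ℝ} (hs : MeasurableSet s)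
    (hf' : ∀ x ∈ s, HasDerivWithinAt f (f' x) s x) (hf : InjOn f s) (g : ℝ → ℝ≥0∞) :
    ∫⁻ x in f '' s, g x = ∫⁻ x in s, ENNReal.ofReal |f' x| * g (f x) := by
  simpa only [ContinuousLinearMap.det_toSpanSingleton] using
    lintegral_image_eq_lintegral_abs_det_fderiv_mul volume hs
      (fun x hx => (hf' x hx).hasFDerivWithinAt) hf g

/-- integrability and value of ∫ y in Ioo 0 c, y^β -/

lemma int_rpow_Ioo {c β : ℝ} (hc : 0 < c) (hβ : -1 < β) :
    IntegrableOn (fun y : ℝ => y ^ β) (Ioo 0 c) ∧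
      ∫ y in Ioo (0:ℝ) c, y ^ β = c ^ (β+1) / (β+1) := by
  have hii : IntervalIntegrable (fun y : ℝ => y ^ β) volume 0 c :=
    intervalIntegral.intervalIntegrable_rpow' hβ
  constructor
  · have := (intervalIntegrable_iff_integrableOn_Ioc_of_le hc.le).mp hii
    exact this.mono_set Ioo_subset_Ioc_self
  · have h1 : ∫ y in (0:ℝ)..c, y ^ β = (c ^ (β+1) - 0 ^ (β+1)) / (β+1) :=
      integral_rpow (Or.inl hβ)
    rw [Real.zero_rpow (by linarith)] at h1
    rw [← MeasureTheory.integral_Ioc_eq_integral_Ioo, ← intervalIntegral.integral_of_le hc.le, h1]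
    ring

lemma key_g {α : ℝ} (hα : 0 < α) (hα1 : α ≤ 1) :
    1/2 - (2:ℝ) ^ (-α) / (1+α) + (2:ℝ) ^ (-α) * (2:ℝ) ^ (-α) / (2*(1+2*α)) ≤ 3 * α^2 := by
  set L := Real.log 2 with hL
  have hLpos : 0.6931471803 ≤ L := le_of_lt Real.log_two_gt_d9
  have hLlt : L ≤ 0.6931471808 := le_of_lt Real.log_two_lt_d9
  set E := (2:ℝ) ^ (-α) with hE
  have hEexp : E = Real.exp (-(α*L)) := by
    rw [hE, Real.rpow_def_of_pos (by norm_num : (0:ℝ) < 2)]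
    ring_nf
    rw [hL, mul_comm]
  have hE1 : 1 - α*L ≤ E := by
    rw [hEexp]
    linarith [Real.add_one_le_exp (-(α*L))]
  have hE2 : E * E ≤ 1 - 2*(α*L) + (2*(α*L))^2/2 := by
    have : E * E = Real.exp (-(2*(α*L))) := by
      rw [hEexp, ← Real.exp_add]; ring_nf
    rw [this]
    exact exp_neg_quad (by nlinarith)
  have hEpos : 0 < E := Real.rpow_pos_of_pos (by norm_num) _
  have hE3 : E ≤ 1 := by
    rw [hE]
    apply Real.rpow_le_one_of_one_le_of_nonpos (by norm_num) (by linarith)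
  have hd1 : (0:ℝ) < 1 + α := by linarith
  have hd2 : (0:ℝ) < 2*(1+2*α) := by linarith
  have heq : 1/2 - E / (1+α) + E * E / (2*(1+2*α))
      = ((1+α)*(1+2*α) - 2*(1+2*α)*E + (1+α)*(E*E)) / (2*(1+α)*(1+2*α)) := by
    field_simp
  rw [heq, div_le_iff₀ (by positivity)]
  have k1 : 2*(1+2*α)*(1 - α*L) ≤ 2*(1+2*α)*E := mul_le_mul_of_nonneg_left hE1 hd2.le
  have k2 : (1+α)*(E*E) ≤ (1+α)*(1 - 2*(α*L) + (2*(α*L))^2/2) :=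
    mul_le_mul_of_nonneg_left hE2 hd1.le
  have hLsq : L*L ≤ 0.49 := by nlinarith
  nlinarith [k1, k2, sq_nonneg α, hLlt, hLpos, hα1, hα.le,
    mul_nonneg (mul_nonneg hα.le hα.le) hα.le, mul_le_mul_of_nonneg_left hLsq
      (mul_nonneg (mul_nonneg hα.le hα.le) hα.le)]




lemma rpow_sq {y : ℝ} (hy : 0 ≤ y) (α : ℝ) : (y ^ α)^2 = y ^ (2*α) := by
  rw [← Real.rpow_natCast (y^α) 2, ← Real.rpow_mul hy]
  norm_num [mul_comm]

/-- exact value of the "far" model integral -/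

lemma I_far_le {α x : ℝ} (hα : 0 < α) (hα1 : α ≤ 1) (hx : 0 < x) :
    ∫ y in Ioo (0:ℝ) (x/2), (1 - y ^ α / x ^ α)^2 ≤ 3 * α^2 * x := by
  have hc : (0:ℝ) < x/2 := by linarith
  have hxα : (0:ℝ) < x ^ α := Real.rpow_pos_of_pos hx α
  have hx2α : (0:ℝ) < x ^ (2*α) := Real.rpow_pos_of_pos hx _
  have hint1 := int_rpow_Ioo hc (by linarith : (-1:ℝ) < α)
  have hint2 := int_rpow_Ioo hc (by linarith : (-1:ℝ) < 2*α)
  have hcongr : ∀ y ∈ Ioo (0:ℝ) (x/2),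
      (1 - y ^ α / x ^ α)^2 = 1 - (2/x^α) * y^α + (1/x^(2*α)) * y^(2*α) := by
    intro y hy
    have e : (1 - y^α/x^α)^2 = 1 - 2/x^α*y^α + (y^α)^2/((x^α)^2) := by ring
    rw [e, rpow_sq hy.1.le, rpow_sq hx.le]
    ring
  rw [setIntegral_congr_fun measurableSet_Ioo hcongr]
  have hi1 : IntegrableOn (fun _ : ℝ => (1:ℝ)) (Ioo 0 (x/2)) volume := by
    exact integrableOn_const (by rw [Real.volume_Ioo]; exact ENNReal.ofReal_ne_top)
  have hi2 : IntegrableOn (fun y : ℝ => (2/x^α) * y^α) (Ioo 0 (x/2)) volume :=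
    hint1.1.const_mul _
  have hi3 : IntegrableOn (fun y : ℝ => (1/x^(2*α)) * y^(2*α)) (Ioo 0 (x/2)) volume :=
    hint2.1.const_mul _
  have hi12 : IntegrableOn (fun y : ℝ => 1 - (2/x^α) * y^α) (Ioo 0 (x/2)) volume := by
    exact hi1.sub hi2
  have hsplit : ∫ y in Ioo (0:ℝ) (x/2), (1 - 2/x^α*y^α + 1/x^(2*α)*y^(2*α))
      = ((∫ _y in Ioo (0:ℝ) (x/2), (1:ℝ)) - ∫ y in Ioo (0:ℝ) (x/2), (2/x^α)*y^α)
        + ∫ y in Ioo (0:ℝ) (x/2), (1/x^(2*α))*y^(2*α) := by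
    rw [← integral_sub hi1 hi2]
    exact integral_add hi12 hi3
  rw [hsplit, MeasureTheory.integral_const_mul, MeasureTheory.integral_const_mul, hint1.2, hint2.2]
  simp only [MeasureTheory.integral_const, measureReal_def, MeasurableSet.univ, Measure.restrict_apply, univ_inter,
    Real.volume_Ioo, smul_eq_mul, mul_one]
  rw [show x/2 - 0 = x/2 by ring, ENNReal.toReal_ofReal hc.le]
  -- now pure rpow algebra: express as x * (g-expression)
  have e5 : (x/2) ^ (α+1) = x^(α+1) / 2^(α+1) := Real.div_rpow hx.le (by norm_num) _
  have e6 : x^(α+1) = x^α * x := by rw [Real.rpow_add hx, Real.rpow_one]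
  have e7 : (2:ℝ)^(α+1) = 2 * 2^α := by rw [Real.rpow_add (by norm_num : (0:ℝ)<2), Real.rpow_one]; ring
  have e5' : (x/2) ^ (2*α+1) = x^(2*α+1) / 2^(2*α+1) := Real.div_rpow hx.le (by norm_num) _
  have e6' : x^(2*α+1) = x^(2*α) * x := by rw [Real.rpow_add hx, Real.rpow_one]
  have e7' : (2:ℝ)^(2*α+1) = 2 * (2^α * 2^α) := by
    rw [show 2*α+1 = α + α + 1 by ring, Real.rpow_add (by norm_num : (0:ℝ)<2),
      Real.rpow_add (by norm_num : (0:ℝ)<2), Real.rpow_one]; ring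
  have e8 : (2:ℝ)^(-α) = 1/2^α := by
    rw [Real.rpow_neg (by norm_num : (0:ℝ)≤2)]; rw [one_div]
  have h2α : (0:ℝ) < 2^α := Real.rpow_pos_of_pos (by norm_num) α
  have heq : x/2 - 2/x^α * ((x/2)^(α+1)/(α+1)) + 1/x^(2*α) * ((x/2)^(2*α+1)/(2*α+1))
      = x * (1/2 - (2:ℝ)^(-α)/(1+α) + (2:ℝ)^(-α) * (2:ℝ)^(-α)/(2*(1+2*α))) := by
    rw [e5, e6, e7, e5', e6', e7', e8]
    field_simp
    ring
  rw [heq]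
  have := key_g hα hα1
  calc x * (1/2 - (2:ℝ)^(-α)/(1+α) + (2:ℝ)^(-α) * (2:ℝ)^(-α)/(2*(1+2*α)))
      ≤ x * (3*α^2) := mul_le_mul_of_nonneg_left this hx.le
    _ = 3 * α^2 * x := by ring


lemma far_pt {α x y : ℝ} (hα : 0 < α) (hα1 : α ≤ 1) (hx : 0 < x) (hy : y ∈ Ioo 0 (x/2)) :
    (x^α - y^α)^2/(x-y)^2 ≤ 4*x^(2*α-2)*(1 - y^α/x^α)^2 := by
  obtain ⟨hy1, hy2⟩ := hy
  have hxα : (0:ℝ) < x ^ α := Real.rpow_pos_of_pos hx α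
  have hnum0 : x^α*(1 - y^α/x^α) = x^α - y^α := by field_simp
  have hnum : (x^α - y^α)^2 = x^(2*α)*(1 - y^α/x^α)^2 := by
    rw [← hnum0, ← rpow_sq hx.le]; ring
  have e : x^(2*α) = x^(2*α-2) * x^2 := by
    rw [← Real.rpow_natCast x 2, ← Real.rpow_add hx]; norm_num
  calc (x^α - y^α)^2/(x-y)^2 ≤ (x^α - y^α)^2/((x/2)^2) := by
        apply div_le_div_of_nonneg_left (by positivity) (by positivity) (by nlinarith)
    _ = 4*x^(2*α-2)*(1 - y^α/x^α)^2 := by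
        rw [hnum, e]; field_simp; ring

lemma near_pt {α x y : ℝ} (hα : 0 < α) (hα1 : α ≤ 1) (hx : 0 < x) (hy : y ∈ Ico (x/2) x) :
    (x^α - y^α)^2/(x-y)^2 ≤ α^2*(x/2)^(2*α-2) := by
  obtain ⟨hy1, hy2⟩ := hy
  have hy0 : 0 < y := lt_of_lt_of_le (by linarith) hy1
  have hden : (0:ℝ) < (x - y)^2 := pow_pos (by linarith) 2
  have hmvt := mvt_bound hα hα1 hy0 hy2.le
  have hnn : 0 ≤ x^α - y^α := by
    have := Real.rpow_le_rpow hy0.le hy2.le hα.le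
    linarith
  have hyb : y ^ (α-1) ≤ (x/2) ^ (α-1) :=
    Real.rpow_le_rpow_of_nonpos (by linarith) hy1 (by linarith)
  have hsq : (x^α - y^α)^2 ≤ (α * y^(α-1) * (x-y))^2 := by
    apply sq_le_sq' (by nlinarith [Real.rpow_nonneg hy0.le (α-1)]) hmvt
  calc (x^α - y^α)^2/(x-y)^2 ≤ (α * y^(α-1) * (x-y))^2/(x-y)^2 := by
        exact div_le_div_of_nonneg_right hsq hden.le
    _ = α^2 * (y^(α-1))^2 := by field_simp
    _ ≤ α^2 * ((x/2)^(α-1))^2 := by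
        have h1 : (0:ℝ) ≤ y^(α-1) := Real.rpow_nonneg hy0.le _
        nlinarith [mul_le_mul hyb hyb h1 (Real.rpow_nonneg (by linarith : (0:ℝ) ≤ x/2) (α-1)),
          sq_nonneg α]
    _ = α^2 * (x/2)^(2*α-2) := by
        rw [rpow_sq (by linarith : (0:ℝ) ≤ x/2)]; ring_nf

lemma up_pt {α x y : ℝ} (hα : 0 < α) (hα1 : α ≤ 1) (hx : 0 < x) (hy : y ∈ Ico x 1) :
    (x^α - y^α)^2/(x-y)^2 ≤ α^2*x^(2*α-2) := by
  obtain ⟨hy1, _⟩ := hy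
  rcases eq_or_lt_of_le hy1 with h | h
  · subst h; simp [sub_self]; positivity
  · have hne : y - x ≠ 0 := by linarith
    have hden : (0:ℝ) < (x - y)^2 := by nlinarith
    have hmvt := mvt_bound hα hα1 hx hy1
    have hnn : 0 ≤ y^α - x^α := by
      have := Real.rpow_le_rpow hx.le hy1 hα.le
      linarith
    have hsq : (x^α - y^α)^2 ≤ (α * x^(α-1) * (y-x))^2 := by
      have : (x^α - y^α)^2 = (y^α - x^α)^2 := by ring
      rw [this]
      apply sq_le_sq' (by nlinarith [Real.rpow_nonneg hx.le (α-1)]) hmvt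
    calc (x^α - y^α)^2/(x-y)^2 ≤ (α * x^(α-1) * (y-x))^2/(x-y)^2 := by
          exact div_le_div_of_nonneg_right hsq hden.le
      _ = α^2 * (x^(α-1))^2 := by
          rw [show (x-y)^2 = (y-x)^2 by ring]
          field_simp
      _ = α^2 * x^(2*α-2) := by rw [rpow_sq hx.le]; ring_nf



lemma inner_low {α x : ℝ} (hα : 0 < α) (hα1 : α ≤ 1) (hx : 0 < x) :
    ∫⁻ y in Ioo (0:ℝ) x, ENNReal.ofReal ((x^α - y^α)^2/(x-y)^2)
      ≤ ENNReal.ofReal (14*α^2*x^(2*α-1)) := by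
  have hxx : x^(2*α-2) * x = x^(2*α-1) := by
    rw [show (2*α-1 : ℝ) = (2*α-2)+1 by ring, Real.rpow_add_one hx.ne']
  have hsplit : Ioo (0:ℝ) x = Ioo 0 (x/2) ∪ Ico (x/2) x :=
    (Ioo_union_Ico_eq_Ioo (by linarith) (by linarith)).symm
  rw [hsplit]
  refine le_trans (lintegral_union_le _ _ _) ?_
  have t1 : ∫⁻ y in Ioo (0:ℝ) (x/2), ENNReal.ofReal ((x^α - y^α)^2/(x-y)^2)
      ≤ ENNReal.ofReal (12*α^2*x^(2*α-1)) := by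
    have hmeas : Measurable (fun y : ℝ => ENNReal.ofReal (4*x^(2*α-2)*(1 - y^α/x^α)^2)) := by
      fun_prop
    refine le_trans (setLIntegral_mono hmeas
      (fun y hy => ENNReal.ofReal_le_ofReal (far_pt hα hα1 hx hy))) ?_
    haveI : IsFiniteMeasure (volume.restrict (Ioo (0:ℝ) (x/2))) :=
      ⟨by rw [Measure.restrict_apply_univ, Real.volume_Ioo]; exact ENNReal.ofReal_lt_top⟩
    have hInt : Integrable (fun y : ℝ => 4*x^(2*α-2)*(1 - y^α/x^α)^2)
        (volume.restrict (Ioo (0:ℝ) (x/2))) := by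
      refine ⟨(by fun_prop : Measurable (fun y : ℝ => 4*x^(2*α-2)*(1 - y^α/x^α)^2)).aestronglyMeasurable, ?_⟩
      apply HasFiniteIntegral.of_bounded (C := 4*x^(2*α-2))
      filter_upwards [ae_restrict_mem measurableSet_Ioo] with y hy
      have h1 : 0 < x^α := Real.rpow_pos_of_pos hx α
      have h2 : 0 ≤ y^α/x^α := div_nonneg (Real.rpow_nonneg hy.1.le α) h1.le
      have h3 : y^α ≤ x^α := Real.rpow_le_rpow hy.1.le (by linarith [hy.2]) hα.le
      have h4 : y^α/x^α ≤ 1 := by rw [div_le_one h1]; exact h3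
      rw [Real.norm_eq_abs, abs_of_nonneg (by positivity)]
      have h5 : (1 - y^α/x^α)^2 ≤ 1 := by nlinarith
      nlinarith [Real.rpow_nonneg hx.le (2*α-2)]
    rw [← ofReal_integral_eq_lintegral_ofReal hInt (Eventually.of_forall (fun y => by positivity))]
    apply ENNReal.ofReal_le_ofReal
    rw [MeasureTheory.integral_const_mul]
    calc 4*x^(2*α-2) * ∫ y in Ioo (0:ℝ) (x/2), (1 - y^α/x^α)^2
        ≤ 4*x^(2*α-2) * (3*α^2*x) :=
          mul_le_mul_of_nonneg_left (I_far_le hα hα1 hx) (by positivity)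
      _ = 12*α^2*x^(2*α-1) := by rw [← hxx]; ring
  have t2 : ∫⁻ y in Ico (x/2) x, ENNReal.ofReal ((x^α - y^α)^2/(x-y)^2)
      ≤ ENNReal.ofReal (2*α^2*x^(2*α-1)) := by
    refine le_trans (setLIntegral_mono measurable_const
      (fun y hy => ENNReal.ofReal_le_ofReal (near_pt hα hα1 hx hy))) ?_
    rw [setLIntegral_const, Real.volume_Ico, ← ENNReal.ofReal_mul (by positivity)]
    apply ENNReal.ofReal_le_ofReal
    have e1 : (x/2)^(2*α-2) * (x/2) = (x/2)^(2*α-1) := by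
      rw [show (2*α-1 : ℝ) = (2*α-2)+1 by ring,
        Real.rpow_add_one (by positivity : (x/2) ≠ 0)]
    have e2 : (x/2)^(2*α-1) = x^(2*α-1) / 2^(2*α-1) := Real.div_rpow hx.le (by norm_num) _
    have e3 : x^(2*α-1) / 2^(2*α-1) ≤ 2 * x^(2*α-1) := by
      rw [div_le_iff₀ (Real.rpow_pos_of_pos two_pos _)]
      have h1 : (1:ℝ) ≤ 2^(2*α) := by
        calc (1:ℝ) = 2^(0:ℝ) := (Real.rpow_zero 2).symm
          _ ≤ 2^(2*α) := Real.rpow_le_rpow_of_exponent_le one_le_two (by linarith)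
      have h2 : (2:ℝ)^(2*α) = 2^(2*α-1)*2 := by
        rw [← Real.rpow_add_one (two_ne_zero)]; ring_nf
      nlinarith [Real.rpow_nonneg hx.le (2*α-1), Real.rpow_pos_of_pos two_pos (2*α-1)]
    calc α^2*(x/2)^(2*α-2) * (x - x/2) = α^2 * ((x/2)^(2*α-2) * (x/2)) := by ring
      _ = α^2 * (x^(2*α-1) / 2^(2*α-1)) := by rw [e1, e2]
      _ ≤ α^2 * (2 * x^(2*α-1)) := mul_le_mul_of_nonneg_left e3 (sq_nonneg α)
      _ = 2*α^2*x^(2*α-1) := by ring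
  calc (∫⁻ y in Ioo (0:ℝ) (x/2), ENNReal.ofReal ((x^α - y^α)^2/(x-y)^2))
        + ∫⁻ y in Ico (x/2) x, ENNReal.ofReal ((x^α - y^α)^2/(x-y)^2)
      ≤ ENNReal.ofReal (12*α^2*x^(2*α-1)) + ENNReal.ofReal (2*α^2*x^(2*α-1)) := add_le_add t1 t2
    _ = ENNReal.ofReal (12*α^2*x^(2*α-1) + 2*α^2*x^(2*α-1)) :=
        (ENNReal.ofReal_add (by positivity) (by positivity)).symm
    _ = ENNReal.ofReal (14*α^2*x^(2*α-1)) := by ring_nf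

lemma inner_up {α x : ℝ} (hα : 0 < α) (hα1 : α ≤ 1) (hx : 0 < x) (hx1 : x < 1) :
    ∫⁻ y in Ico x 1, ENNReal.ofReal ((x^α - y^α)^2/(x-y)^2)
      ≤ ENNReal.ofReal (α^2*x^(2*α-2)) := by
  refine le_trans (setLIntegral_mono measurable_const
    (fun y hy => ENNReal.ofReal_le_ofReal (up_pt hα hα1 hx hy))) ?_
  rw [setLIntegral_const, Real.volume_Ico]
  calc ENNReal.ofReal (α^2*x^(2*α-2)) * ENNReal.ofReal (1 - x)
      ≤ ENNReal.ofReal (α^2*x^(2*α-2)) * 1 :=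
        mul_le_mul_right (ENNReal.ofReal_le_one.2 (by linarith)) _
    _ = ENNReal.ofReal (α^2*x^(2*α-2)) := mul_one _


def Jq (α : ℝ) : ℝ≥0∞ :=
  ∫⁻ x in Ioo (0:ℝ) 1, ∫⁻ y in Ioo (0:ℝ) 1, ENNReal.ofReal ((x^α - y^α)^2/(x-y)^2)

lemma measurable_fE (α : ℝ) :
    Measurable (fun p : ℝ×ℝ => ENNReal.ofReal ((p.1^α - p.2^α)^2/(p.1-p.2)^2)) := by
  fun_prop

lemma Jq_eq_prod (α : ℝ) :
    ∫⁻ p, ENNReal.ofReal ((p.1^α - p.2^α)^2/(p.1-p.2)^2)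
        ∂((volume.restrict (Ioo (0:ℝ) 1)).prod (volume.restrict (Ioo (0:ℝ) 1))) = Jq α :=
  lintegral_prod _ (measurable_fE α).aemeasurable

/-- measurability of the inner lintegral as a function of x -/

lemma measurable_inner (α : ℝ) :
    Measurable (fun x : ℝ => ∫⁻ y in Ioo (0:ℝ) 1,
      ENNReal.ofReal ((x^α - y^α)^2/(x-y)^2)) :=
  Measurable.lintegral_prod_right (f := fun x y => ENNReal.ofReal ((x^α - y^α)^2/(x-y)^2))
    (measurable_fE α)

lemma inner_fin {α x : ℝ} (hα : 0 < α) (hα1 : α ≤ 1) (hx : x ∈ Ioo (0:ℝ) 1) :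
    ∫⁻ y in Ioo (0:ℝ) 1, ENNReal.ofReal ((x^α - y^α)^2/(x-y)^2)
      ≤ ENNReal.ofReal (14*α^2*x^(2*α-1)) + ENNReal.ofReal (α^2*x^(2*α-2)) := by
  obtain ⟨hx0, hx1⟩ := hx
  have hsub : Ioo (0:ℝ) 1 ⊆ Ioo 0 x ∪ Ico x 1 := by
    intro y hy
    rcases lt_or_ge y x with h | h
    · exact Or.inl ⟨hy.1, h⟩
    · exact Or.inr ⟨h, hy.2⟩
  calc ∫⁻ y in Ioo (0:ℝ) 1, ENNReal.ofReal ((x^α - y^α)^2/(x-y)^2)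
      ≤ ∫⁻ y in Ioo (0:ℝ) x ∪ Ico x 1, ENNReal.ofReal ((x^α - y^α)^2/(x-y)^2) :=
        lintegral_mono_set hsub
    _ ≤ (∫⁻ y in Ioo (0:ℝ) x, ENNReal.ofReal ((x^α - y^α)^2/(x-y)^2))
        + ∫⁻ y in Ico x 1, ENNReal.ofReal ((x^α - y^α)^2/(x-y)^2) := lintegral_union_le _ _ _
    _ ≤ _ := add_le_add (inner_low hα hα1 hx0) (inner_up hα hα1 hx0 hx1)

lemma Jq_le {α : ℝ} (hα : 0 < α) (hα1 : α ≤ 1) : Jq α ≤ ENNReal.ofReal (14*α) := by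
  set μ := volume.restrict (Ioo (0:ℝ) 1) with hμ
  set ν := μ.prod μ with hν
  set f : ℝ×ℝ → ℝ≥0∞ := fun p => ENNReal.ofReal ((p.1^α - p.2^α)^2/(p.1-p.2)^2) with hf
  have hfm : Measurable f := measurable_fE α
  have hL : MeasurableSet {p : ℝ×ℝ | p.2 < p.1} := measurableSet_lt measurable_snd measurable_fst
  have hU : MeasurableSet {p : ℝ×ℝ | p.1 < p.2} := measurableSet_lt measurable_fst measurable_snd
  -- diagonal is null
  have hdiag : ν {p : ℝ×ℝ | p.1 = p.2} = 0 := by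
    have hm : MeasurableSet {p : ℝ×ℝ | p.1 = p.2} :=
      measurableSet_eq_fun measurable_fst measurable_snd
    rw [hν, Measure.prod_apply hm]
    have h0 : ∀ x : ℝ, μ (Prod.mk x ⁻¹' {p : ℝ×ℝ | p.1 = p.2}) = 0 := by
      intro x
      have : Prod.mk x ⁻¹' {p : ℝ×ℝ | p.1 = p.2} = {x} := by
        ext y; simp [eq_comm]
      rw [this, hμ, Measure.restrict_apply (measurableSet_singleton x)]
      exact measure_mono_null inter_subset_left Real.volume_singleton
    simp [h0]
  -- decompose
  have hcompl : ({p : ℝ×ℝ | p.2 < p.1} ∪ {p : ℝ×ℝ | p.1 < p.2})ᶜ = {p : ℝ×ℝ | p.1 = p.2} := by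
    ext p
    simp only [Set.mem_compl_iff, Set.mem_union, Set.mem_setOf_eq, not_or, not_lt]
    constructor
    · rintro ⟨h1, h2⟩; exact le_antisymm h1 h2
    · intro h; exact ⟨h.le, h.ge⟩
  have hdecomp : ∫⁻ p, f p ∂ν = (∫⁻ p in {p : ℝ×ℝ | p.2 < p.1}, f p ∂ν)
      + ∫⁻ p in {p : ℝ×ℝ | p.1 < p.2}, f p ∂ν := by
    rw [← lintegral_add_compl f (hL.union hU), hcompl]
    rw [setLIntegral_measure_zero _ _ hdiag, add_zero,
      lintegral_union hU (by
        rw [Set.disjoint_left]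
        intro p h1 h2
        exact absurd h2 (by simp only [Set.mem_setOf_eq] at h1 ⊢; exact not_lt.2 h1.le))]
  -- symmetry: upper = lower
  have hsym : ∫⁻ p in {p : ℝ×ℝ | p.1 < p.2}, f p ∂ν
      = ∫⁻ p in {p : ℝ×ℝ | p.2 < p.1}, f p ∂ν := by
    have hswap : Measure.map Prod.swap ν = ν := by rw [hν, Measure.prod_swap]
    have hpre : Prod.swap ⁻¹' {p : ℝ×ℝ | p.1 < p.2} = {p : ℝ×ℝ | p.2 < p.1} := by
      ext p; simp
    conv_lhs => rw [← hswap]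
    rw [Measure.restrict_map measurable_swap hU, lintegral_map hfm measurable_swap, hpre]
    apply lintegral_congr
    intro p
    simp only [hf, Prod.snd_swap, Prod.fst_swap, Prod.fst, Prod.snd]
    rw [show (p.2^α - p.1^α)^2 = (p.1^α - p.2^α)^2 by ring,
      show (p.2 - p.1)^2 = (p.1 - p.2)^2 by ring]
  -- lower triangle as iterated integral
  have hLT : ∫⁻ p in {p : ℝ×ℝ | p.2 < p.1}, f p ∂ν
      = ∫⁻ x in Ioo (0:ℝ) 1, (∫⁻ y in Iio x, ENNReal.ofReal ((x^α - y^α)^2/(x-y)^2) ∂μ) := by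
    rw [← lintegral_indicator hL, hν, lintegral_prod _ ((hfm.indicator hL).aemeasurable)]
    apply lintegral_congr
    intro x
    have : (fun y => ({p : ℝ×ℝ | p.2 < p.1}).indicator f (x, y))
        = fun y => (Iio x).indicator (fun y => ENNReal.ofReal ((x^α - y^α)^2/(x-y)^2)) y := by
      funext y
      simp [Set.indicator_apply, hf]
    rw [this, lintegral_indicator measurableSet_Iio]
  -- bound the lower triangle
  have hLTle : ∫⁻ p in {p : ℝ×ℝ | p.2 < p.1}, f p ∂ν ≤ ENNReal.ofReal (7*α) := by
    rw [hLT]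
    have hstep : ∀ x ∈ Ioo (0:ℝ) 1,
        (∫⁻ y in Iio x, ENNReal.ofReal ((x^α - y^α)^2/(x-y)^2) ∂μ)
          ≤ ENNReal.ofReal (14*α^2*x^(2*α-1)) := by
      intro x hx
      have hres : μ.restrict (Iio x) = volume.restrict (Ioo 0 x) := by
        rw [hμ, Measure.restrict_restrict measurableSet_Iio]
        congr 1
        ext y
        simp only [Set.mem_inter_iff, Set.mem_Iio, Set.mem_Ioo]
        constructor
        · rintro ⟨h1, h2, h3⟩; exact ⟨h2, h1⟩
        · rintro ⟨h1, h2⟩; exact ⟨h2, h1, lt_of_lt_of_le h2 (le_of_lt hx.2)⟩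
      rw [show ∫⁻ y in Iio x, ENNReal.ofReal ((x^α - y^α)^2/(x-y)^2) ∂μ
          = ∫⁻ y, ENNReal.ofReal ((x^α - y^α)^2/(x-y)^2) ∂(μ.restrict (Iio x)) from rfl, hres]
      exact inner_low hα hα1 hx.1
    calc ∫⁻ x in Ioo (0:ℝ) 1, (∫⁻ y in Iio x, ENNReal.ofReal ((x^α - y^α)^2/(x-y)^2) ∂μ)
        ≤ ∫⁻ x in Ioo (0:ℝ) 1, ENNReal.ofReal (14*α^2*x^(2*α-1)) :=
          setLIntegral_mono (by fun_prop) hstep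
      _ = ENNReal.ofReal (∫ x in Ioo (0:ℝ) 1, 14*α^2*x^(2*α-1)) := by
          rw [← ofReal_integral_eq_lintegral_ofReal
            (((int_rpow_Ioo one_pos (by linarith : (-1:ℝ) < 2*α-1)).1).const_mul _)
            (by
              filter_upwards [ae_restrict_mem measurableSet_Ioo] with y hy
              exact mul_nonneg (by positivity) (Real.rpow_nonneg hy.1.le _))]
      _ = ENNReal.ofReal (7*α) := by
          rw [MeasureTheory.integral_const_mul, (int_rpow_Ioo one_pos (by linarith : (-1:ℝ) < 2*α-1)).2]
          congr 1
          rw [show (2*α-1+1) = 2*α by ring, Real.one_rpow]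
          field_simp
          ring
  calc Jq α = ∫⁻ p, f p ∂ν := (Jq_eq_prod α).symm
    _ = (∫⁻ p in {p : ℝ×ℝ | p.2 < p.1}, f p ∂ν)
        + ∫⁻ p in {p : ℝ×ℝ | p.1 < p.2}, f p ∂ν := hdecomp
    _ = (∫⁻ p in {p : ℝ×ℝ | p.2 < p.1}, f p ∂ν)
        + ∫⁻ p in {p : ℝ×ℝ | p.2 < p.1}, f p ∂ν := by rw [hsym]
    _ ≤ ENNReal.ofReal (7*α) + ENNReal.ofReal (7*α) := add_le_add hLTle hLTle
    _ = ENNReal.ofReal (14*α) := by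
        rw [← ENNReal.ofReal_add (by positivity) (by positivity)]
        ring_nf


lemma key_sq {γ s t : ℝ} (hγ : 1 ≤ γ) (hs : 0 < s) (ht : 0 < t) :
    γ^2 * (s^(γ-1) * t^(γ-1)) * (s-t)^2 ≤ (s^γ - t^γ)^2 := by
  have main : ∀ u v : ℝ, 0 < v → v < u →
      γ^2 * (u^(γ-1) * v^(γ-1)) * (u-v)^2 ≤ (u^γ - v^γ)^2 := by
    intro u v hv huv
    have hu : 0 < u := lt_trans hv huv
    have hkey := key_ineq hγ hv huv
    have hbase : 0 ≤ γ * (u*v) ^ ((γ-1)/2) * (u - v) :=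
      mul_nonneg (mul_nonneg (by linarith)
        (Real.rpow_nonneg (mul_nonneg hu.le hv.le) _)) (by linarith)
    have hexp : ((u*v) ^ ((γ-1)/2))^2 = u^(γ-1) * v^(γ-1) := by
      rw [rpow_sq (mul_nonneg hu.le hv.le), show 2*((γ-1)/2) = γ-1 by ring,
        Real.mul_rpow hu.le hv.le]
    have hrw : γ^2 * (u^(γ-1) * v^(γ-1)) * (u-v)^2
        = (γ * (u*v) ^ ((γ-1)/2) * (u - v))^2 := by rw [← hexp]; ring
    rw [hrw]
    exact pow_le_pow_left₀ hbase hkey 2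
  rcases lt_trichotomy s t with h | h | h
  · have h2 := main t s hs h
    have e1 : (s-t)^2 = (t-s)^2 := by ring
    have e2 : (s^γ - t^γ)^2 = (t^γ - s^γ)^2 := by ring
    rw [e1, e2, mul_comm (s^(γ-1))]
    exact h2
  · subst h; simp
  · exact main s t ht h

lemma main_pt {a γ s t : ℝ} (ha : 0 < a) (hγ : 1 ≤ γ) (hs : 0 < s) (ht : 0 < t) :
    (γ*s^(γ-1)) * ((γ*t^(γ-1)) * (((s^γ)^a - (t^γ)^a)^2/(s^γ - t^γ)^2))
      ≤ (s^(γ*a) - t^(γ*a))^2/(s-t)^2 := by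
  have hγ0 : 0 < γ := lt_of_lt_of_le one_pos hγ
  rcases eq_or_ne s t with h | h
  · subst h; simp [sub_self]
  · have hsγt : s^γ ≠ t^γ := by
      rcases lt_or_gt_of_ne h with hlt | hgt
      · exact ne_of_lt (Real.rpow_lt_rpow hs.le hlt hγ0)
      · exact (ne_of_lt (Real.rpow_lt_rpow ht.le hgt hγ0)).symm
    have d1 : (0:ℝ) < (s-t)^2 := by
      have : s - t ≠ 0 := sub_ne_zero.2 h
      positivity
    have d2 : (0:ℝ) < (s^γ - t^γ)^2 := by
      have : s^γ - t^γ ≠ 0 := sub_ne_zero.2 hsγt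
      positivity
    have hrw : (s^γ)^a = s^(γ*a) := (Real.rpow_mul hs.le γ a).symm
    have hrw' : (t^γ)^a = t^(γ*a) := (Real.rpow_mul ht.le γ a).symm
    rw [hrw, hrw']
    set N := (s^(γ*a) - t^(γ*a))^2 with hN
    have hN0 : 0 ≤ N := sq_nonneg _
    have hrearr : (γ*s^(γ-1)) * ((γ*t^(γ-1)) * (N/(s^γ - t^γ)^2))
        = (γ^2 * (s^(γ-1) * t^(γ-1)) * N)/(s^γ - t^γ)^2 := by ring
    rw [hrearr, div_le_div_iff₀ d2 d1]
    have hks := key_sq hγ hs ht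
    nlinarith [mul_le_mul_of_nonneg_left hks hN0]

lemma Jq_mono {a b : ℝ} (ha : 0 < a) (hab : a ≤ b) (hb1 : b ≤ 1) : Jq a ≤ Jq b := by
  set γ := b/a with hγdef
  have hb : 0 < b := lt_of_lt_of_le ha hab
  have hγ1 : 1 ≤ γ := (one_le_div ha).2 hab
  have hγ0 : 0 < γ := lt_of_lt_of_le one_pos hγ1
  have hγa : γ * a = b := div_mul_cancel₀ b ha.ne'
  set φ : ℝ → ℝ := fun s => s^γ with hφ
  have himg : φ '' Ioo 0 1 = Ioo 0 1 := by
    apply Subset.antisymm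
    · rintro _ ⟨s, hs, rfl⟩
      exact ⟨Real.rpow_pos_of_pos hs.1 γ, Real.rpow_lt_one hs.1.le hs.2 hγ0⟩
    · intro x hx
      refine ⟨x^(1/γ), ⟨Real.rpow_pos_of_pos hx.1 _, Real.rpow_lt_one hx.1.le hx.2 (by positivity)⟩, ?_⟩
      show (x^(1/γ))^γ = x
      rw [← Real.rpow_mul hx.1.le, one_div_mul_cancel hγ0.ne', Real.rpow_one]
  have hderiv : ∀ s ∈ Ioo (0:ℝ) 1, HasDerivWithinAt φ (γ*s^(γ-1)) (Ioo 0 1) s := fun s hs =>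
    (Real.hasDerivAt_rpow_const (Or.inl hs.1.ne')).hasDerivWithinAt
  have hinj : InjOn φ (Ioo 0 1) := by
    intro s hs t ht heq
    by_contra hne
    rcases lt_or_gt_of_ne hne with hlt | hgt
    · exact absurd heq (ne_of_lt (Real.rpow_lt_rpow hs.1.le hlt hγ0))
    · exact absurd heq.symm (ne_of_lt (Real.rpow_lt_rpow ht.1.le hgt hγ0))
  have habs : ∀ s : ℝ, 0 < s → |γ*s^(γ-1)| = γ*s^(γ-1) := fun s hs =>
    abs_of_nonneg (mul_nonneg hγ0.le (Real.rpow_nonneg hs.le _))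
  have inner_sub : ∀ s : ℝ, (∫⁻ y in Ioo (0:ℝ) 1, ENNReal.ofReal (((s^γ)^a - y^a)^2/(s^γ-y)^2))
      = ∫⁻ t in Ioo (0:ℝ) 1,
          ENNReal.ofReal |γ*t^(γ-1)| * ENNReal.ofReal (((s^γ)^a - (t^γ)^a)^2/(s^γ-t^γ)^2) := by
    intro s
    have h2 := lintegral_image1d measurableSet_Ioo hderiv hinj
      (fun y => ENNReal.ofReal (((s^γ)^a - y^a)^2/(s^γ-y)^2))
    rw [himg] at h2
    exact h2
  have step : ∀ s ∈ Ioo (0:ℝ) 1,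
      ENNReal.ofReal |γ*s^(γ-1)| * (∫⁻ y in Ioo (0:ℝ) 1,
          ENNReal.ofReal (((s^γ)^a - y^a)^2/(s^γ-y)^2))
        ≤ ∫⁻ y in Ioo (0:ℝ) 1, ENNReal.ofReal ((s^b - y^b)^2/(s-y)^2) := by
    intro s hs
    rw [inner_sub s, ← lintegral_const_mul _ (by fun_prop)]
    apply setLIntegral_mono (by fun_prop)
    intro t ht
    rw [habs s hs.1, habs t ht.1,
      ← ENNReal.ofReal_mul (mul_nonneg hγ0.le (Real.rpow_nonneg ht.1.le _)),
      ← ENNReal.ofReal_mul (mul_nonneg hγ0.le (Real.rpow_nonneg hs.1.le _))]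
    apply ENNReal.ofReal_le_ofReal
    have h := main_pt ha hγ1 hs.1 ht.1
    rw [hγa] at h
    exact h
  have e1 : Jq a = ∫⁻ s in Ioo (0:ℝ) 1, ENNReal.ofReal |γ*s^(γ-1)|
      * (∫⁻ y in Ioo (0:ℝ) 1, ENNReal.ofReal (((s^γ)^a - y^a)^2/(s^γ-y)^2)) := by
    have h2 := lintegral_image1d measurableSet_Ioo hderiv hinj
      (fun x => ∫⁻ y in Ioo (0:ℝ) 1, ENNReal.ofReal ((x^a - y^a)^2/(x-y)^2))
    rw [himg] at h2
    exact h2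
  rw [e1]
  exact setLIntegral_mono (measurable_inner b) step


/-- Gagliardo H^{1/2}(0,1) seminorm squared of f_α(x) = 1 - x^α. -/
def Q (α : ℝ) : ℝ :=
  ∫ x in Ioo (0:ℝ) 1, ∫ y in Ioo (0:ℝ) 1, (x ^ α - y ^ α) ^ 2 / (x - y) ^ 2

/-- Squared L²(0,1) norm of f_α(x) = 1 - x^α. -/
def L2sq (α : ℝ) : ℝ := ∫ x in Ioo (0:ℝ) 1, (1 - x ^ α) ^ 2

/-- H^{1/2}(0,1) norm of f_α. -/
def Hhalf (α : ℝ) : ℝ := Real.sqrt (L2sq α + Q α)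

lemma Q_eq {α : ℝ} (hα : 0 < α) (hα1 : α ≤ 1) : Q α = (Jq α).toReal := by
  have h1 : ∀ x : ℝ, (∫ y in Ioo (0:ℝ) 1, (x^α - y^α)^2/(x-y)^2)
      = (∫⁻ y in Ioo (0:ℝ) 1, ENNReal.ofReal ((x^α - y^α)^2/(x-y)^2)).toReal := by
    intro x
    rw [integral_eq_lintegral_of_nonneg_ae (Eventually.of_forall (fun y => by positivity))
      ((by fun_prop : Measurable (fun y : ℝ => (x^α - y^α)^2/(x-y)^2)).aestronglyMeasurable)]
  unfold Q
  simp_rw [h1]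
  rw [integral_eq_lintegral_of_nonneg_ae (Eventually.of_forall (fun x => ENNReal.toReal_nonneg))
    ((measurable_inner α).ennreal_toReal.aestronglyMeasurable)]
  congr 1
  apply setLIntegral_congr_fun measurableSet_Ioo
  intro x hx
  apply ENNReal.ofReal_toReal
  exact ne_top_of_le_ne_top (by finiteness) (inner_fin hα hα1 hx)

lemma memLp_part {α : ℝ} (hα : 0 < α) (hα1 : α ≤ 1) :
    MemLp (fun x : ℝ => 1 - x ^ α) 2 (volume.restrict (Ioo (0:ℝ) 1)) := by
  haveI : IsFiniteMeasure (volume.restrict (Ioo (0:ℝ) 1)) :=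
    ⟨by rw [Measure.restrict_apply_univ, Real.volume_Ioo]; exact ENNReal.ofReal_lt_top⟩
  apply MemLp.of_bound
    ((by fun_prop : Measurable (fun x : ℝ => 1 - x ^ α)).aestronglyMeasurable) 1
  filter_upwards [ae_restrict_mem measurableSet_Ioo] with x hx
  have h1 : 0 ≤ x^α := Real.rpow_nonneg hx.1.le α
  have h2 : x^α ≤ 1 := Real.rpow_le_one hx.1.le hx.2.le hα.le
  rw [Real.norm_eq_abs, abs_le]
  constructor <;> linarith

lemma intOn_part {α : ℝ} (hα : 0 < α) (hα1 : α ≤ 1) :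
    IntegrableOn (fun p : ℝ × ℝ => (p.1 ^ α - p.2 ^ α) ^ 2 / (p.1 - p.2) ^ 2)
      (Ioo (0:ℝ) 1 ×ˢ Ioo (0:ℝ) 1) volume := by
  constructor
  · exact ((by fun_prop : Measurable
      (fun p : ℝ × ℝ => (p.1 ^ α - p.2 ^ α) ^ 2 / (p.1 - p.2) ^ 2))).aestronglyMeasurable
  · rw [show (volume : Measure (ℝ×ℝ)).restrict (Ioo (0:ℝ) 1 ×ˢ Ioo (0:ℝ) 1)
        = (volume.restrict (Ioo (0:ℝ) 1)).prod (volume.restrict (Ioo (0:ℝ) 1)) by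
      rw [Measure.volume_eq_prod, Measure.prod_restrict]]
    rw [hasFiniteIntegral_iff_ofReal (Eventually.of_forall (fun p => by positivity))]
    rw [Jq_eq_prod α]
    exact lt_of_le_of_lt (Jq_le hα hα1) ENNReal.ofReal_lt_top


lemma L2sq_eq {α : ℝ} (hα : 0 < α) : L2sq α = 1 - 2/(α+1) + 1/(2*α+1) := by
  unfold L2sq
  have hcongr : ∀ x ∈ Ioo (0:ℝ) 1, (1 - x^α)^2 = 1 - 2*x^α + x^(2*α) := by
    intro x hx
    rw [show (1 - x^α)^2 = 1 - 2*x^α + (x^α)^2 by ring, rpow_sq hx.1.le]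
  rw [setIntegral_congr_fun measurableSet_Ioo hcongr]
  have hi1 : IntegrableOn (fun _ : ℝ => (1:ℝ)) (Ioo 0 1) volume :=
    integrableOn_const (by rw [Real.volume_Ioo]; exact ENNReal.ofReal_ne_top)
  have hi2 : IntegrableOn (fun x : ℝ => 2*x^α) (Ioo 0 1) volume :=
    ((int_rpow_Ioo one_pos (by linarith)).1).const_mul 2
  have hi3 : IntegrableOn (fun x : ℝ => x^(2*α)) (Ioo 0 1) volume :=
    (int_rpow_Ioo one_pos (by linarith)).1
  have hi12 : IntegrableOn (fun x : ℝ => 1 - 2*x^α) (Ioo 0 1) volume := by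
    exact hi1.sub hi2
  have hsplit : ∫ x in Ioo (0:ℝ) 1, (1 - 2*x^α + x^(2*α))
      = ((∫ _x in Ioo (0:ℝ) 1, (1:ℝ)) - ∫ x in Ioo (0:ℝ) 1, 2*x^α)
        + ∫ x in Ioo (0:ℝ) 1, x^(2*α) := by
    rw [← integral_sub hi1 hi2]
    exact integral_add hi12 hi3
  rw [hsplit, MeasureTheory.integral_const_mul, (int_rpow_Ioo one_pos (by linarith : (-1:ℝ) < α)).2,
    (int_rpow_Ioo one_pos (by linarith : (-1:ℝ) < 2*α)).2]
  simp only [MeasureTheory.integral_const, measureReal_def, MeasurableSet.univ, Measure.restrict_apply, univ_inter,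
    Real.volume_Ioo, smul_eq_mul, mul_one]
  rw [ENNReal.toReal_ofReal (by norm_num : (0:ℝ) ≤ 1 - 0), Real.one_rpow, Real.one_rpow]
  norm_num
  ring

lemma L2sq_tendsto : Tendsto L2sq (nhdsWithin 0 (Ioi 0)) (nhds 0) := by
  have hc : ContinuousAt (fun α : ℝ => 1 - 2/(α+1) + 1/(2*α+1)) 0 := by
    apply ContinuousAt.add
    · apply ContinuousAt.sub continuousAt_const
      exact ContinuousAt.div continuousAt_const (by fun_prop) (by norm_num)
    · exact ContinuousAt.div continuousAt_const (by fun_prop) (by norm_num)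
  have h1 := hc.tendsto
  norm_num at h1
  refine (h1.mono_left nhdsWithin_le_nhds).congr' ?_
  filter_upwards [self_mem_nhdsWithin] with α hα
  rw [L2sq_eq hα]
  ring

lemma Q_tendsto : Tendsto Q (nhdsWithin 0 (Ioi 0)) (nhds 0) := by
  have hmem : Ioo (0:ℝ) 1 ∈ nhdsWithin (0:ℝ) (Ioi 0) :=
    Ioo_mem_nhdsGT_of_mem ⟨le_refl 0, zero_lt_one⟩
  apply squeeze_zero'
  · filter_upwards [hmem] with α hα
    rw [Q_eq hα.1 hα.2.le]
    exact ENNReal.toReal_nonneg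
  · show ∀ᶠ α in nhdsWithin 0 (Ioi 0), Q α ≤ 14*α
    filter_upwards [hmem] with α hα
    rw [Q_eq hα.1 hα.2.le]
    calc (Jq α).toReal ≤ (ENNReal.ofReal (14*α)).toReal :=
          ENNReal.toReal_mono ENNReal.ofReal_ne_top (Jq_le hα.1 hα.2.le)
      _ = 14*α := ENNReal.toReal_ofReal (mul_nonneg (by norm_num) hα.1.le)
  · have h14 : Tendsto (fun α : ℝ => 14*α) (nhds (0:ℝ)) (nhds 0) := by
      simpa using (Continuous.tendsto (by fun_prop : Continuous (fun α : ℝ => 14*α)) (0:ℝ))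
    exact h14.mono_left nhdsWithin_le_nhds

lemma Q_mono : MonotoneOn Q (Ioc (0:ℝ) 1) := by
  intro a ha b hb hab
  rw [Q_eq ha.1 ha.2, Q_eq hb.1 hb.2]
  exact ENNReal.toReal_mono
    (ne_top_of_le_ne_top ENNReal.ofReal_ne_top (Jq_le hb.1 hb.2))
    (Jq_mono ha.1 hab hb.2)

lemma Hhalf_tendsto : Tendsto Hhalf (nhdsWithin 0 (Ioi 0)) (nhds 0) := by
  have hsum : Tendsto (fun α => L2sq α + Q α) (nhdsWithin 0 (Ioi 0)) (nhds 0) := by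
    have := L2sq_tendsto.add Q_tendsto
    simpa using this
  have hs := (Real.continuous_sqrt.tendsto' 0 0 Real.sqrt_zero).comp hsum
  exact hs


/-- For α ∈ (0,1], f_α(x) = 1 - x^α lies in H^{1/2}(0,1) (i.e. it is in
L²(0,1) and the Gagliardo seminorm integrand is integrable on (0,1)²); Q is
nondecreasing on (0,1] and tends to 0 as α → 0⁺; ‖f_α‖_{L²} → 0 as α → 0⁺; hence
‖f_α‖_{H^{1/2}(0,1)} → 0 as α → 0⁺. -/
theorem halfnorm_tendsto_zero :
    (∀ α ∈ Ioc (0:ℝ) 1,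
      MemLp (fun x : ℝ => 1 - x ^ α) 2 (volume.restrict (Ioo (0:ℝ) 1)) ∧
      IntegrableOn (fun p : ℝ × ℝ => (p.1 ^ α - p.2 ^ α) ^ 2 / (p.1 - p.2) ^ 2)
        (Ioo (0:ℝ) 1 ×ˢ Ioo (0:ℝ) 1) volume) ∧
    MonotoneOn Q (Ioc (0:ℝ) 1) ∧
    Tendsto Q (nhdsWithin 0 (Ioi 0)) (nhds 0) ∧
    Tendsto L2sq (nhdsWithin 0 (Ioi 0)) (nhds 0) ∧
    Tendsto Hhalf (nhdsWithin 0 (Ioi 0)) (nhds 0) := by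
  exact ⟨fun α hα => ⟨memLp_part hα.1 hα.2, intOn_part hα.1 hα.2⟩,
    Q_mono, Q_tendsto, L2sq_tendsto, Hhalf_tendsto⟩

end
end
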